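/- arXiv:1603.07361 — 16 statements merged into one kernel-verified Lean document; each statement's English description precedes it below -/
import Mathlib

section
/- Let B > 0 and let I ⊆ ℝ be an interval. Let (U, φ) and (V, ω) be two solutions of the capillary ODE system with parameter B on I. If there is a point p ∈ I with φ(p) = ω(p) and U(p) > V(p), then U(q) > V(q) for every q ∈ I; in particular the two solution curves cannot intersect on I. (Lemma 1 of the paper.) -/
open Real Set

/-- A solution of the (normalized) capillary ODE system with parameter `B` on a set `I ⊆ ℝ`:
a pair of functions `U ψ : ℝ → ℝ` such that `ψ ξ ∈ (−π/2, π/2)` for all `ξ ∈ I`, and for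
every `ξ ∈ I` the function `sin ∘ ψ` has derivative `B * U ξ` at `ξ` and `U` has derivative
`tan (ψ ξ)` at `ξ`. -/
def IsCapillarySol (B : ℝ) (I : Set ℝ) (U ψ : ℝ → ℝ) : Prop :=
  ∀ ξ ∈ I, ψ ξ ∈ Set.Ioo (-(π / 2)) (π / 2) ∧
    HasDerivAt (fun t => Real.sin (ψ t)) (B * U ξ) ξ ∧
    HasDerivAt U (Real.tan (ψ ξ)) ξ

lemma capillary_key
    (B : ℝ) (hB : 0 < B) (I : Set ℝ) (hI : I.OrdConnected)
    (U φ V ω : ℝ → ℝ)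
    (hUφ : IsCapillarySol B I U φ) (hVω : IsCapillarySol B I V ω)
    (p : ℝ) (hp : p ∈ I) (hincl : φ p = ω p) (hUp : U p > V p) :
    ∀ q ∈ I, p ≤ q → U q > V q := by
  set W : ℝ → ℝ := fun t => U t - V t with hW
  set s : ℝ → ℝ := fun t => Real.sin (φ t) - Real.sin (ω t) with hs
  have hWd : ∀ ξ ∈ I, HasDerivAt W (Real.tan (φ ξ) - Real.tan (ω ξ)) ξ := fun ξ hξ =>
    ((hUφ ξ hξ).2.2).sub ((hVω ξ hξ).2.2)
  have hsd : ∀ ξ ∈ I, HasDerivAt s (B * W ξ) ξ := by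
    intro ξ hξ
    have := ((hUφ ξ hξ).2.1).sub ((hVω ξ hξ).2.1)
    exact this.congr_deriv (by simp [hW, mul_sub])
  intro q hq hpq
  by_contra h
  push_neg at h
  have hWq : W q ≤ 0 := by simp [hW]; linarith
  have hWp : 0 < W p := by simp [hW]; linarith
  have hsub : Icc p q ⊆ I := hI.out hp hq
  have hWc : ContinuousOn W (Icc p q) := fun x hx =>
    (hWd x (hsub hx)).continuousAt.continuousWithinAt
  -- the set of zeros of W in [p,q]
  set S : Set ℝ := Icc p q ∩ W ⁻¹' {0} with hS
  have hSne : S.Nonempty := by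
    have : (0:ℝ) ∈ Icc (W q) (W p) := ⟨hWq, hWp.le⟩
    obtain ⟨u, hu, hu0⟩ := intermediate_value_Icc' hpq hWc this
    exact ⟨u, hu, hu0⟩
  have hSclosed : IsClosed S := hWc.preimage_isClosed_of_isClosed isClosed_Icc isClosed_singleton
  have hSbdd : BddBelow S := ⟨p, fun x hx => hx.1.1⟩
  set r : ℝ := sInf S with hr
  have hrS : r ∈ S := hSclosed.csInf_mem hSne hSbdd
  have hrIcc : r ∈ Icc p q := hrS.1
  have hWr : W r = 0 := hrS.2
  have hpr : p < r := by
    rcases lt_or_eq_of_le hrIcc.1 with h' | h'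
    · exact h'
    · exfalso; rw [← h'] at hWr; linarith
  -- W > 0 on [p, r)
  have hWpos : ∀ t ∈ Ico p r, 0 < W t := by
    intro t ht
    by_contra hWt
    push_neg at hWt
    have htq : t ∈ Icc p q := ⟨ht.1, ht.2.le.trans hrIcc.2⟩
    have : (0:ℝ) ∈ Icc (W t) (W p) := ⟨hWt, hWp.le⟩
    obtain ⟨u, hu, hu0⟩ := intermediate_value_Icc' ht.1
      (hWc.mono (Icc_subset_Icc le_rfl htq.2)) this
    have huS : u ∈ S := ⟨⟨hu.1, hu.2.trans htq.2⟩, hu0⟩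
    have := csInf_le hSbdd huS
    have : r ≤ t := le_trans this hu.2
    exact absurd ht.2 (not_lt.mpr this)
  have hsubr : Icc p r ⊆ I := fun x hx => hsub ⟨hx.1, hx.2.trans hrIcc.2⟩
  -- s is strictly monotone on [p, r]
  have hsc : ContinuousOn s (Icc p r) := fun x hx =>
    (hsd x (hsubr hx)).continuousAt.continuousWithinAt
  have hsmono : StrictMonoOn s (Icc p r) := by
    apply strictMonoOn_of_deriv_pos (convex_Icc p r) hsc
    intro x hx
    rw [interior_Icc] at hx
    have hxI : x ∈ I := hsubr ⟨hx.1.le, hx.2.le⟩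
    rw [(hsd x hxI).deriv]
    exact mul_pos hB (hWpos x ⟨hx.1.le, hx.2⟩)
  have hsp : s p = 0 := by simp [hs, hincl]
  -- s > 0 on (p, r], hence φ > ω there, hence W' > 0 on (p, r)
  have hWmono : StrictMonoOn W (Icc p r) := by
    apply strictMonoOn_of_deriv_pos (convex_Icc p r) (hWc.mono (Icc_subset_Icc le_rfl hrIcc.2))
    intro x hx
    rw [interior_Icc] at hx
    have hxI : x ∈ I := hsubr ⟨hx.1.le, hx.2.le⟩
    have hsx : 0 < s x := by
      have := hsmono (left_mem_Icc.mpr hpr.le) ⟨hx.1.le, hx.2.le⟩ hx.1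
      rwa [hsp] at this
    have hφ := (hUφ x hxI).1
    have hω := (hVω x hxI).1
    have hsin : Real.sin (ω x) < Real.sin (φ x) := by simp [hs] at hsx; linarith
    have hlt : ω x < φ x := by
      by_contra hle
      push_neg at hle
      have := Real.strictMonoOn_sin.monotoneOn ⟨hφ.1.le, hφ.2.le⟩ ⟨hω.1.le, hω.2.le⟩ hle
      linarith
    have htan : Real.tan (ω x) < Real.tan (φ x) :=
      Real.tan_lt_tan_of_lt_of_lt_pi_div_two hω.1 hφ.2 hlt
    rw [(hWd x hxI).deriv]
    linarith
  have := hWmono (left_mem_Icc.mpr hpr.le) (right_mem_Icc.mpr hpr.le) hpr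
  rw [hWr] at this
  linarith

/-- Lemma 1: two distinct solution curves of the capillary system with the same inclination
at a common point, one strictly above the other there, cannot intersect on their common
interval of definition. -/
theorem capillary_no_intersection
    (B : ℝ) (hB : 0 < B) (I : Set ℝ) (hI : I.OrdConnected)
    (U φ V ω : ℝ → ℝ)
    (hUφ : IsCapillarySol B I U φ) (hVω : IsCapillarySol B I V ω)
    (p : ℝ) (hp : p ∈ I) (hincl : φ p = ω p) (hUp : U p > V p) :
    ∀ q ∈ I, U q > V q := by
  intro q hq
  rcases le_or_gt p q with hpq | hqp
  · exact capillary_key B hB I hI U φ V ω hUφ hVω p hp hincl hUp q hq hpq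
  · -- reflect through p
    set J : Set ℝ := (fun t => 2 * p - t) ⁻¹' I with hJ
    have hJord : J.OrdConnected := by
      constructor
      intro x hx y hy z hz
      have : 2 * p - z ∈ Icc (2 * p - y) (2 * p - x) := ⟨by linarith [hz.2], by linarith [hz.1]⟩
      exact hI.out hy hx this
    have refl_sol : ∀ (X ψ : ℝ → ℝ), IsCapillarySol B I X ψ →
        IsCapillarySol B J (fun ξ => X (2 * p - ξ)) (fun ξ => -ψ (2 * p - ξ)) := by
      intro X ψ hXψ ξ hξ
      have hη : 2 * p - ξ ∈ I := hξ
      obtain ⟨hmem, hd1, hd2⟩ := hXψ _ hη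
      have hlin : HasDerivAt (fun t : ℝ => 2 * p - t) (-1) ξ := by
        exact ((hasDerivAt_const ξ (2*p)).sub (hasDerivAt_id ξ)).congr_deriv (by norm_num)
      refine ⟨⟨by simpa using neg_lt_neg hmem.2, by simpa using neg_lt_neg hmem.1⟩, ?_, ?_⟩
      · have h1 : HasDerivAt (fun t => Real.sin (ψ (2 * p - t))) ((B * X (2 * p - ξ)) * (-1)) ξ :=
          HasDerivAt.comp ξ hd1 hlin
        have h2 : HasDerivAt (fun t => -Real.sin (ψ (2 * p - t))) (-((B * X (2 * p - ξ)) * (-1))) ξ := h1.neg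
        have : (fun t => -Real.sin (ψ (2 * p - t))) =
            (fun t => Real.sin (-ψ (2 * p - t))) := by
          funext t; rw [Real.sin_neg]
        rw [this] at h2
        convert h2 using 1
        ring
      · have h1 : HasDerivAt (fun t => X (2 * p - t)) (Real.tan (ψ (2 * p - ξ)) * (-1)) ξ :=
          HasDerivAt.comp ξ hd2 hlin
        convert h1 using 1
        rw [Real.tan_neg]; ring
    have hpJ : p ∈ J := by simp only [hJ, mem_preimage]; convert hp using 1; ring
    have hqJ : 2 * p - q ∈ J := by simp only [hJ, mem_preimage]; convert hq using 1; ring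
    have := capillary_key B hB J hJord _ _ _ _ (refl_sol U φ hUφ) (refl_sol V ω hVω) p hpJ
      (by rw [show 2 * p - p = p by ring, hincl])
      (by rw [show 2 * p - p = p by ring]; exact hUp)
      (2 * p - q) hqJ (by linarith)
    simpa using this
end

section
/- Let B > 0, let I ⊆ ℝ be an interval, and let (U, ψ) be a solution of the capillary ODE system with parameter B on I. Then the function ξ ↦ (B/2)·U(ξ)² + cos(ψ(ξ)) is constant on I. (The first integral, equation (11) of the paper.) -/
open Real Set

/-- Equation (11): the first integral `(B/2)·U² + cos ψ` is constant on any solution curve. -/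
theorem capillary_first_integral
    (B : ℝ) (hB : 0 < B) (I : Set ℝ) (hI : I.OrdConnected)
    (U ψ : ℝ → ℝ) (h : IsCapillarySol B I U ψ) :
    ∀ ξ₁ ∈ I, ∀ ξ₂ ∈ I,
      B / 2 * U ξ₁ ^ 2 + Real.cos (ψ ξ₁) = B / 2 * U ξ₂ ^ 2 + Real.cos (ψ ξ₂) := by
  set G : ℝ → ℝ := fun t => B / 2 * U t ^ 2 + Real.sqrt (1 - Real.sin (ψ t) ^ 2) with hG
  have hcos : ∀ x ∈ I, 0 < Real.cos (ψ x) := by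
    intro x hx
    exact Real.cos_pos_of_mem_Ioo ⟨by linarith [(h x hx).1.1], (h x hx).1.2⟩
  have hsq : ∀ x ∈ I, 1 - Real.sin (ψ x) ^ 2 = Real.cos (ψ x) ^ 2 := by
    intro x hx
    have := Real.sin_sq_add_cos_sq (ψ x); linarith
  have hGF : ∀ x ∈ I, G x = B / 2 * U x ^ 2 + Real.cos (ψ x) := by
    intro x hx
    simp only [hG, hsq x hx, Real.sqrt_sq (hcos x hx).le]
  have hderiv : ∀ x ∈ I, HasDerivAt G 0 x := by
    intro x hx
    obtain ⟨hmem, hs, hU⟩ := h x hx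
    have hc := hcos x hx
    have hne : (1 - Real.sin (ψ x) ^ 2) ≠ 0 := by
      rw [hsq x hx]; positivity
    have h1 : HasDerivAt (fun t => 1 - Real.sin (ψ t) ^ 2)
        (0 - 2 * Real.sin (ψ x) * (B * U x)) x := by
      have := ((hs.pow 2).const_sub 1)
      simpa [mul_comm, mul_assoc, mul_left_comm] using this
    have h2 : HasDerivAt (fun t => Real.sqrt (1 - Real.sin (ψ t) ^ 2))
        ((0 - 2 * Real.sin (ψ x) * (B * U x)) / (2 * Real.sqrt (1 - Real.sin (ψ x) ^ 2))) x :=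
      h1.sqrt hne
    have h3 : HasDerivAt (fun t => B / 2 * U t ^ 2) (B / 2 * (2 * U x * Real.tan (ψ x))) x := by
      simpa using (hU.pow 2).const_mul (B / 2)
    have hsum := h3.add h2
    have hval : B / 2 * (2 * U x * Real.tan (ψ x)) +
        (0 - 2 * Real.sin (ψ x) * (B * U x)) / (2 * Real.sqrt (1 - Real.sin (ψ x) ^ 2)) = 0 := by
      rw [hsq x hx, Real.sqrt_sq hc.le, Real.tan_eq_sin_div_cos]
      field_simp
      ring
    rw [hval] at hsum
    exact hsum
  have key : ∀ a ∈ I, ∀ b ∈ I, a ≤ b → G a = G b := by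
    intro a ha b hb hab
    have hsub : Icc a b ⊆ I := hI.out ha hb
    have hcont : ContinuousOn G (Icc a b) := fun x hx =>
      ((hderiv x (hsub hx)).continuousAt).continuousWithinAt
    have := constant_of_has_deriv_right_zero hcont
      (fun x hx => ((hderiv x (hsub (Ico_subset_Icc_self hx))).hasDerivWithinAt))
      b ⟨hab, le_refl b⟩
    exact this.symm
  intro ξ₁ h₁ ξ₂ h₂
  rw [← hGF ξ₁ h₁, ← hGF ξ₂ h₂]
  rcases le_total ξ₁ ξ₂ with hle | hle
  · exact key ξ₁ h₁ ξ₂ h₂ hle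
  · exact (key ξ₂ h₂ ξ₁ h₁ hle).symm
end

section
/- Let B > 0, let I ⊆ ℝ be an interval, and let (U, ψ) be a solution of the capillary ODE system with parameter B on I. Suppose ξ₀ ∈ I is a point where the curve crosses the axis, U(ξ₀) = 0, with crossing inclination ψ₀ = ψ(ξ₀), and let ξ₁ ∈ I be a point of height η = U(ξ₁) with inclination ψ_η = ψ(ξ₁). Then 2·(1 − cos ψ₀) ≤ 2·(1 − cos ψ_η), with equality if and only if η = 0. In terms of the normalized force 𝓕 = −2(1 − cos ψ₀) exerted between two repelling plates, this says |𝓕| ≤ 2(1 − cos ψ_η), with equality exactly when the reference point lies on the axis. (Lemma 2 of the paper.) -/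
open Real Set

/-- Lemma 2: if a repelling solution curve crosses the axis at `ξ₀` with inclination
`ψ₀ = ψ ξ₀`, and `ξ₁` is a point of height `η = U ξ₁` with inclination `ψ_η = ψ ξ₁`, then
`2(1 − cos ψ₀) ≤ 2(1 − cos ψ_η)`, i.e. `|𝓕| ≤ 2(1 − cos ψ_η)` for the normalized force
`𝓕 = −2(1 − cos ψ₀)`, with equality exactly when `η = 0`. -/
theorem capillary_force_bound
    (B : ℝ) (hB : 0 < B) (I : Set ℝ) (hI : I.OrdConnected)
    (U ψ : ℝ → ℝ) (h : IsCapillarySol B I U ψ)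
    (ξ₀ ξ₁ : ℝ) (hξ₀ : ξ₀ ∈ I) (hξ₁ : ξ₁ ∈ I)
    (hU₀ : U ξ₀ = 0) :
    2 * (1 - Real.cos (ψ ξ₀)) ≤ 2 * (1 - Real.cos (ψ ξ₁)) ∧
      (2 * (1 - Real.cos (ψ ξ₀)) = 2 * (1 - Real.cos (ψ ξ₁)) ↔ U ξ₁ = 0) := by
  set F : ℝ → ℝ := fun t => Real.sqrt (1 - Real.sin (ψ t) ^ 2) + B / 2 * (U t) ^ 2 with hF
  have sqrt_eq : ∀ ξ ∈ I, Real.sqrt (1 - Real.sin (ψ ξ) ^ 2) = Real.cos (ψ ξ) := by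
    intro ξ hξ
    have hc : 0 < Real.cos (ψ ξ) := Real.cos_pos_of_mem_Ioo (h ξ hξ).1
    have h1 : (1 : ℝ) - Real.sin (ψ ξ) ^ 2 = Real.cos (ψ ξ) ^ 2 := by
      nlinarith [Real.sin_sq_add_cos_sq (ψ ξ)]
    rw [h1, Real.sqrt_sq hc.le]
  have key : ∀ ξ ∈ I, HasDerivAt F 0 ξ := by
    intro ξ hξ
    obtain ⟨hmem, hs, hu⟩ := h ξ hξ
    have hc : 0 < Real.cos (ψ ξ) := Real.cos_pos_of_mem_Ioo hmem
    have h1 : (1 : ℝ) - Real.sin (ψ ξ) ^ 2 = Real.cos (ψ ξ) ^ 2 := by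
      nlinarith [Real.sin_sq_add_cos_sq (ψ ξ)]
    have h1' : (1 : ℝ) - Real.sin (ψ ξ) ^ 2 ≠ 0 := by rw [h1]; positivity
    have hsq : HasDerivAt (fun t => 1 - Real.sin (ψ t) ^ 2)
        (-(2 * Real.sin (ψ ξ) ^ 1 * (B * U ξ))) ξ := (hs.pow 2).const_sub 1
    have hsqrt := hsq.sqrt h1'
    have hU2 : HasDerivAt (fun t => B / 2 * (U t) ^ 2)
        (B / 2 * (2 * U ξ ^ 1 * Real.tan (ψ ξ))) ξ := (hu.pow 2).const_mul (B / 2)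
    have := hsqrt.add hU2
    refine this.congr_deriv ?_
    rw [sqrt_eq ξ hξ, Real.tan_eq_sin_div_cos]
    field_simp
    ring
  have hconv : Convex ℝ I := convex_iff_ordConnected.mpr hI
  have hconst : F ξ₁ = F ξ₀ := by
    have := hconv.norm_image_sub_le_of_norm_hasDerivWithin_le
      (fun x hx => (key x hx).hasDerivWithinAt)
      (fun x hx => by simp : ∀ x ∈ I, ‖(0:ℝ)‖ ≤ 0) hξ₀ hξ₁
    have h0 : ‖F ξ₁ - F ξ₀‖ ≤ 0 := by simpa using this
    have := norm_nonneg (F ξ₁ - F ξ₀)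
    have : ‖F ξ₁ - F ξ₀‖ = 0 := le_antisymm h0 this
    have := norm_eq_zero.mp this
    linarith [sub_eq_zero.mp this]
  have e0 : F ξ₀ = Real.cos (ψ ξ₀) := by simp [hF, sqrt_eq ξ₀ hξ₀, hU₀]
  have e1 : F ξ₁ = Real.cos (ψ ξ₁) + B / 2 * (U ξ₁) ^ 2 := by
    simp [hF, sqrt_eq ξ₁ hξ₁]
  rw [e0, e1] at hconst
  have hη : (U ξ₁) ^ 2 ≥ 0 := sq_nonneg _
  constructor
  · nlinarith
  · constructor
    · intro heq
      have : (U ξ₁) ^ 2 = 0 := by nlinarith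
      exact pow_eq_zero_iff two_ne_zero |>.mp this
    · intro h0; rw [h0] at hconst; nlinarith
end

section
/- Let B > 0, let 0 ≤ γ₂ < π/2 and set ψ₂ = π/2 − γ₂. Let (U, ψ) be a solution of the capillary ODE system with parameter B on [0, 1] such that U(0) = 0, U(ξ) > 0 for 0 < ξ ≤ 1, 0 < ψ(0), and ψ(1) = ψ₂. Then for every ξ with 0 < ξ < 1 one has U(ξ)² = (2/B)(cos ψ₀ − cos ψ(ξ)) where ψ₀ = ψ(0), and 0 < U(ξ) < √((2/B)(cos ψ₀ − sin γ₂)). (Equations (12) and (13) of the paper, for the symmetric solution between the midpoint and the plate Π₂.) -/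
open Real Set

/-- Equations (12)–(13) for the symmetric solution between the midpoint (ξ = 0, where the
profile crosses the axis) and the plate Π₂ (ξ = 1, met in inclination ψ₂ = π/2 − γ₂). -/
theorem capillary_symmetric_height_bound
    (B : ℝ) (hB : 0 < B) (γ₂ : ℝ) (hγ₂ : 0 ≤ γ₂) (hγ₂' : γ₂ < π / 2)
    (U ψ : ℝ → ℝ) (h : IsCapillarySol B (Set.Icc 0 1) U ψ)
    (hU0 : U 0 = 0) (hUpos : ∀ ξ : ℝ, 0 < ξ → ξ ≤ 1 → 0 < U ξ)
    (hψ0 : 0 < ψ 0) (hψ1 : ψ 1 = π / 2 - γ₂) :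
    ∀ ξ : ℝ, 0 < ξ → ξ < 1 →
      U ξ ^ 2 = 2 / B * (Real.cos (ψ 0) - Real.cos (ψ ξ)) ∧
      0 < U ξ ∧
      U ξ < Real.sqrt (2 / B * (Real.cos (ψ 0) - Real.sin γ₂)) := by
  have hcospos : ∀ t ∈ Icc (0:ℝ) 1, 0 < Real.cos (ψ t) := fun t ht =>
    Real.cos_pos_of_mem_Ioo (h t ht).1
  have hsq : ∀ t : ℝ, 1 - Real.sin (ψ t) ^ 2 = Real.cos (ψ t) ^ 2 := by
    intro t
    have := Real.sin_sq_add_cos_sq (ψ t); linarith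
  have hsqrt : ∀ t ∈ Icc (0:ℝ) 1, Real.sqrt (1 - Real.sin (ψ t) ^ 2) = Real.cos (ψ t) := by
    intro t ht
    rw [hsq t, Real.sqrt_sq (hcospos t ht).le]
  set F : ℝ → ℝ := fun t => Real.sqrt (1 - Real.sin (ψ t) ^ 2) + B / 2 * U t ^ 2 with hF
  have hFderiv : ∀ t ∈ Icc (0:ℝ) 1, HasDerivAt F 0 t := by
    intro t ht
    obtain ⟨hmem, hs, hU⟩ := h t ht
    have hc := hcospos t ht
    have hne : 1 - Real.sin (ψ t) ^ 2 ≠ 0 := by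
      rw [hsq t]; positivity
    have h2 : HasDerivAt (fun y => 1 - Real.sin (ψ y) ^ 2)
        (-(2 * Real.sin (ψ t) * (B * U t))) t := by
      have h2' := (hasDerivAt_const t (1:ℝ)).sub (hs.pow 2)
      refine h2'.congr_deriv (Eq.symm ?_)
      ring
    have h3 := h2.sqrt hne
    have h4 : HasDerivAt (fun y => B / 2 * U y ^ 2)
        (B / 2 * (2 * U t ^ 1 * Real.tan (ψ t))) t := (hU.pow 2).const_mul (B / 2)
    have h5 := h3.add h4
    refine h5.congr_deriv (Eq.symm ?_)
    rw [hsqrt t ht, Real.tan_eq_sin_div_cos]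
    field_simp
    ring
  have hcont : ContinuousOn F (Icc 0 1) := fun t ht =>
    (hFderiv t ht).continuousAt.continuousWithinAt
  have hconst : ∀ t ∈ Icc (0:ℝ) 1, F t = F 0 :=
    constant_of_has_deriv_right_zero hcont
      (fun x hx => (hFderiv x (Ico_subset_Icc_self hx)).hasDerivWithinAt)
  -- strict monotonicity of sin ∘ ψ
  have hmono : StrictMonoOn (fun t => Real.sin (ψ t)) (Icc 0 1) := by
    apply strictMonoOn_of_deriv_pos (convex_Icc 0 1)
    · intro t ht
      exact ((h t ht).2.1.continuousAt.continuousWithinAt)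
    · intro t ht
      rw [interior_Icc] at ht
      rw [(h t (Ioo_subset_Icc_self ht)).2.1.deriv]
      exact mul_pos hB (hUpos t ht.1 ht.2.le)
  intro ξ hξ0 hξ1
  have hξI : ξ ∈ Icc (0:ℝ) 1 := ⟨hξ0.le, hξ1.le⟩
  have h0I : (0:ℝ) ∈ Icc (0:ℝ) 1 := ⟨le_refl 0, zero_le_one⟩
  have h1I : (1:ℝ) ∈ Icc (0:ℝ) 1 := ⟨zero_le_one, le_refl 1⟩
  have hFξ := hconst ξ hξI
  rw [hF] at hFξ
  simp only at hFξ
  rw [hsqrt ξ hξI, hsqrt 0 h0I, hU0] at hFξ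
  have heq12 : U ξ ^ 2 = 2 / B * (Real.cos (ψ 0) - Real.cos (ψ ξ)) := by
    field_simp at hFξ ⊢
    linarith
  have hUξ : 0 < U ξ := hUpos ξ hξ0 hξ1.le
  refine ⟨heq12, hUξ, ?_⟩
  -- cos (ψ ξ) > sin γ₂
  have hsin0 : 0 < Real.sin (ψ 0) := by
    have hψ0lt : ψ 0 < π := lt_trans (h 0 h0I).1.2 (by linarith [Real.pi_pos])
    exact Real.sin_pos_of_pos_of_lt_pi hψ0 hψ0lt
  have hsinξ : 0 < Real.sin (ψ ξ) :=
    lt_trans hsin0 (hmono h0I hξI hξ0)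
  have hsinξ1 : Real.sin (ψ ξ) < Real.cos γ₂ := by
    have hx := hmono hξI h1I hξ1
    simp only at hx
    rwa [hψ1, Real.sin_pi_div_two_sub] at hx
  have hcosgt : Real.sin γ₂ < Real.cos (ψ ξ) := by
    have h1 : Real.sin (ψ ξ) ^ 2 < Real.cos γ₂ ^ 2 :=
      pow_lt_pow_left₀ hsinξ1 hsinξ.le two_ne_zero
    have h2 : Real.sin γ₂ ^ 2 < Real.cos (ψ ξ) ^ 2 := by
      have := Real.sin_sq_add_cos_sq γ₂
      have := hsq ξ
      nlinarith
    have hsγ : 0 ≤ Real.sin γ₂ := Real.sin_nonneg_of_nonneg_of_le_pi hγ₂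
      (by linarith [Real.pi_pos])
    nlinarith [hcospos ξ hξI]
  rw [show U ξ = Real.sqrt (U ξ ^ 2) by rw [Real.sqrt_sq hUξ.le]]
  apply Real.sqrt_lt_sqrt (by positivity)
  rw [heq12]
  have h2B : 0 < 2 / B := by positivity
  nlinarith
end

section
/- For all real numbers ψ₀, ψ₂ with 0 < ψ₀ < ψ₂ < π/2 one has the strict chain of inequalities ∫_{ψ₀}^{ψ₂} cos ψ/√(cos ψ₀ − cos ψ) dψ > ∫_{ψ₀}^{ψ₂} cos ψ/√(1 − cos ψ) dψ = ∫_{ψ₀}^{ψ₂} cot ψ·√(1 + cos ψ) dψ > ∫_{ψ₀}^{ψ₂} cot ψ dψ = log(sin ψ₂ / sin ψ₀). (Inequality chain (14) of the paper.) -/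
open Real intervalIntegral MeasureTheory Set

/-- Inequality chain (14) of the paper:
`∫ cos ψ/√(cos ψ₀ − cos ψ) > ∫ cos ψ/√(1 − cos ψ) = ∫ cot ψ √(1 + cos ψ) > ∫ cot ψ
 = log (sin ψ₂ / sin ψ₀)` over `[ψ₀, ψ₂] ⊂ (0, π/2)`. -/
theorem inequality_chain_14 (ψ₀ ψ₂ : ℝ) (h₀ : 0 < ψ₀) (h₀₂ : ψ₀ < ψ₂) (h₂ : ψ₂ < π / 2) :
    (∫ ψ in ψ₀..ψ₂, Real.cos ψ / Real.sqrt (Real.cos ψ₀ - Real.cos ψ)) >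
      (∫ ψ in ψ₀..ψ₂, Real.cos ψ / Real.sqrt (1 - Real.cos ψ)) ∧
    (∫ ψ in ψ₀..ψ₂, Real.cos ψ / Real.sqrt (1 - Real.cos ψ)) =
      (∫ ψ in ψ₀..ψ₂, (Real.cos ψ / Real.sin ψ) * Real.sqrt (1 + Real.cos ψ)) ∧
    (∫ ψ in ψ₀..ψ₂, (Real.cos ψ / Real.sin ψ) * Real.sqrt (1 + Real.cos ψ)) >
      (∫ ψ in ψ₀..ψ₂, Real.cos ψ / Real.sin ψ) ∧
    (∫ ψ in ψ₀..ψ₂, Real.cos ψ / Real.sin ψ) = Real.log (Real.sin ψ₂ / Real.sin ψ₀) := by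
  have hπ : (0:ℝ) < π := Real.pi_pos
  have hle : ψ₀ ≤ ψ₂ := h₀₂.le
  -- basic facts for points of [ψ₀, ψ₂]
  have hfacts : ∀ x ∈ Set.Icc ψ₀ ψ₂,
      0 < Real.sin x ∧ 0 < Real.cos x ∧ Real.cos x < 1 := by
    intro x hx
    have hx0 : 0 < x := lt_of_lt_of_le h₀ hx.1
    have hx2 : x < π / 2 := lt_of_le_of_lt hx.2 h₂
    refine ⟨Real.sin_pos_of_pos_of_lt_pi hx0 (by linarith),
      Real.cos_pos_of_mem_Ioo ⟨by linarith, hx2⟩, ?_⟩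
    have := Real.strictAntiOn_cos ⟨le_refl 0, hπ.le⟩ ⟨hx0.le, by linarith⟩ hx0
    simpa using this
  have hsψ₀ : 0 < Real.sin ψ₀ := (hfacts ψ₀ ⟨le_refl _, hle⟩).1
  have hsψ₂ : 0 < Real.sin ψ₂ := (hfacts ψ₂ ⟨hle, le_refl _⟩).1
  have hcψ₀lt : Real.cos ψ₀ < 1 := (hfacts ψ₀ ⟨le_refl _, hle⟩).2.2
  -- concavity bound : sin ψ₀ * (x - ψ₀) ≤ cos ψ₀ - cos x on [ψ₀, ψ₂]
  have hkey : ∀ x ∈ Set.Icc ψ₀ ψ₂,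
      Real.sin ψ₀ * (x - ψ₀) ≤ Real.cos ψ₀ - Real.cos x := by
    set F : ℝ → ℝ := fun x => Real.cos ψ₀ - Real.cos x - Real.sin ψ₀ * (x - ψ₀) with hF
    have hder : ∀ x : ℝ, HasDerivAt F (Real.sin x - Real.sin ψ₀) x := by
      intro x
      have h1 : HasDerivAt (fun x => Real.cos ψ₀ - Real.cos x) (0 - (-Real.sin x)) x :=
        (hasDerivAt_const x _).sub (Real.hasDerivAt_cos x)
      have h2 : HasDerivAt (fun x => Real.sin ψ₀ * (x - ψ₀)) (Real.sin ψ₀ * 1) x :=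
        ((hasDerivAt_id x).sub_const ψ₀).const_mul _
      exact (h1.sub h2).congr_deriv (by ring)
    have hmono : MonotoneOn F (Set.Icc ψ₀ ψ₂) := by
      apply monotoneOn_of_deriv_nonneg (convex_Icc _ _)
      · exact fun x _ => (hder x).continuousAt.continuousWithinAt
      · intro x _; exact (hder x).differentiableAt.differentiableWithinAt
      · intro x hx
        rw [interior_Icc] at hx
        rw [(hder x).deriv]
        have : Real.sin ψ₀ ≤ Real.sin x :=
          (Real.strictMonoOn_sin ⟨by linarith, by linarith⟩
            ⟨by linarith [hx.1], by linarith [hx.2]⟩ hx.1).le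
        linarith
    intro x hx
    have h0 : F ψ₀ = 0 := by simp [hF]
    have := hmono ⟨le_refl _, hle⟩ hx hx.1
    rw [h0] at this
    simp only [hF] at this
    linarith
  -- integrability of the singular integrand
  have hf₁ : IntervalIntegrable
      (fun ψ => Real.cos ψ / Real.sqrt (Real.cos ψ₀ - Real.cos ψ)) volume ψ₀ ψ₂ := by
    have hg : IntervalIntegrable
        (fun x => (Real.sqrt (Real.sin ψ₀))⁻¹ * (x - ψ₀) ^ (-(1/2) : ℝ)) volume ψ₀ ψ₂ := by
      have h := (intervalIntegrable_rpow' (a := 0) (b := ψ₂ - ψ₀)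
        (r := (-(1/2) : ℝ)) (by norm_num)).comp_sub_right ψ₀
      simpa using h.const_mul (Real.sqrt (Real.sin ψ₀))⁻¹
    apply hg.mono_fun
    · exact (Real.measurable_cos.div
        ((measurable_const.sub Real.measurable_cos).sqrt)).aestronglyMeasurable
    · rw [Filter.EventuallyLE, ae_restrict_iff' measurableSet_uIoc]
      refine Filter.Eventually.of_forall fun x hx => ?_
      rw [Set.uIoc_of_le hle] at hx
      have hxIcc : x ∈ Set.Icc ψ₀ ψ₂ := ⟨hx.1.le, hx.2⟩
      obtain ⟨hsx, hcx, hcx1⟩ := hfacts x hxIcc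
      have hxψ₀ : 0 < x - ψ₀ := by linarith [hx.1]
      have hb : 0 < Real.sin ψ₀ * (x - ψ₀) := by positivity
      have hd : 0 < Real.cos ψ₀ - Real.cos x := lt_of_lt_of_le hb (hkey x hxIcc)
      have hsqb : 0 < Real.sqrt (Real.sin ψ₀ * (x - ψ₀)) := Real.sqrt_pos.mpr hb
      have hsqd : 0 < Real.sqrt (Real.cos ψ₀ - Real.cos x) := Real.sqrt_pos.mpr hd
      have heq : (Real.sqrt (Real.sin ψ₀))⁻¹ * (x - ψ₀) ^ (-(1/2) : ℝ)
          = 1 / Real.sqrt (Real.sin ψ₀ * (x - ψ₀)) := by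
        rw [Real.sqrt_mul hsψ₀.le, Real.rpow_neg hxψ₀.le, ← Real.sqrt_eq_rpow,
          one_div, mul_inv]
      rw [Real.norm_eq_abs, Real.norm_eq_abs,
        abs_of_nonneg (by positivity), abs_of_nonneg (by positivity), heq]
      gcongr
      · exact hkey x hxIcc
  -- integrability of the other three integrands (continuous on [ψ₀, ψ₂])
  have hf₂ : IntervalIntegrable
      (fun ψ => Real.cos ψ / Real.sqrt (1 - Real.cos ψ)) volume ψ₀ ψ₂ := by
    apply ContinuousOn.intervalIntegrable
    rw [Set.uIcc_of_le hle]
    apply ContinuousOn.div Real.continuous_cos.continuousOn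
      ((continuous_const.sub Real.continuous_cos).sqrt.continuousOn)
    intro x hx
    have := (hfacts x hx).2.2
    exact ne_of_gt (Real.sqrt_pos.mpr (by show (0:ℝ) < 1 - Real.cos x; linarith))
  have hcot : IntervalIntegrable (fun ψ => Real.cos ψ / Real.sin ψ) volume ψ₀ ψ₂ := by
    apply ContinuousOn.intervalIntegrable
    rw [Set.uIcc_of_le hle]
    exact ContinuousOn.div Real.continuous_cos.continuousOn Real.continuous_sin.continuousOn
      (fun x hx => ne_of_gt (hfacts x hx).1)
  have hg₁ : IntervalIntegrable
      (fun ψ => (Real.cos ψ / Real.sin ψ) * Real.sqrt (1 + Real.cos ψ)) volume ψ₀ ψ₂ := by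
    apply ContinuousOn.intervalIntegrable
    rw [Set.uIcc_of_le hle]
    exact (ContinuousOn.div Real.continuous_cos.continuousOn Real.continuous_sin.continuousOn
      (fun x hx => ne_of_gt (hfacts x hx).1)).mul
      ((continuous_const.add Real.continuous_cos).sqrt.continuousOn)
  -- Part 1
  have part1 : (∫ ψ in ψ₀..ψ₂, Real.cos ψ / Real.sqrt (1 - Real.cos ψ)) <
      (∫ ψ in ψ₀..ψ₂, Real.cos ψ / Real.sqrt (Real.cos ψ₀ - Real.cos ψ)) := by
    have hdiff := hf₁.sub hf₂
    have hpos : 0 < ∫ ψ in ψ₀..ψ₂,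
        (Real.cos ψ / Real.sqrt (Real.cos ψ₀ - Real.cos ψ) -
          Real.cos ψ / Real.sqrt (1 - Real.cos ψ)) := by
      apply intervalIntegral_pos_of_pos_on hdiff _ h₀₂
      intro x hx
      have hxIcc : x ∈ Set.Icc ψ₀ ψ₂ := ⟨hx.1.le, hx.2.le⟩
      obtain ⟨hsx, hcx, hcx1⟩ := hfacts x hxIcc
      have hcltc : Real.cos x < Real.cos ψ₀ :=
        Real.strictAntiOn_cos ⟨h₀.le, by linarith⟩
          ⟨by linarith [hx.1], by linarith [hx.2]⟩ hx.1
      have hd1 : 0 < Real.cos ψ₀ - Real.cos x := by linarith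
      have hlt : Real.sqrt (Real.cos ψ₀ - Real.cos x) < Real.sqrt (1 - Real.cos x) :=
        Real.sqrt_lt_sqrt hd1.le (by linarith)
      have := div_lt_div_of_pos_left hcx (Real.sqrt_pos.mpr hd1) hlt
      linarith
    rw [intervalIntegral.integral_sub hf₁ hf₂] at hpos
    linarith
  -- Part 2 : pointwise equality of integrands
  have part2 : (∫ ψ in ψ₀..ψ₂, Real.cos ψ / Real.sqrt (1 - Real.cos ψ)) =
      (∫ ψ in ψ₀..ψ₂, (Real.cos ψ / Real.sin ψ) * Real.sqrt (1 + Real.cos ψ)) := by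
    apply intervalIntegral.integral_congr
    rw [Set.uIcc_of_le hle]
    intro x hx
    obtain ⟨hsx, hcx, hcx1⟩ := hfacts x hx
    have h1m : (0:ℝ) < 1 - Real.cos x := by linarith
    have h1p : (0:ℝ) < 1 + Real.cos x := by linarith
    have hsin : Real.sin x = Real.sqrt (1 - Real.cos x) * Real.sqrt (1 + Real.cos x) := by
      rw [← Real.sqrt_mul h1m.le]
      rw [show (1 - Real.cos x) * (1 + Real.cos x) = Real.sin x * Real.sin x by
        nlinarith [Real.sin_sq_add_cos_sq x]]
      exact (Real.sqrt_mul_self hsx.le).symm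
    have hsq1 : Real.sqrt (1 - Real.cos x) ≠ 0 := ne_of_gt (Real.sqrt_pos.mpr h1m)
    have hsq2 : Real.sqrt (1 + Real.cos x) ≠ 0 := ne_of_gt (Real.sqrt_pos.mpr h1p)
    show Real.cos x / Real.sqrt (1 - Real.cos x)
        = (Real.cos x / Real.sin x) * Real.sqrt (1 + Real.cos x)
    rw [hsin]
    field_simp
  -- Part 3
  have part3 : (∫ ψ in ψ₀..ψ₂, Real.cos ψ / Real.sin ψ) <
      (∫ ψ in ψ₀..ψ₂, (Real.cos ψ / Real.sin ψ) * Real.sqrt (1 + Real.cos ψ)) := by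
    have hdiff := hg₁.sub hcot
    have hpos : 0 < ∫ ψ in ψ₀..ψ₂,
        ((Real.cos ψ / Real.sin ψ) * Real.sqrt (1 + Real.cos ψ) -
          Real.cos ψ / Real.sin ψ) := by
      apply intervalIntegral_pos_of_pos_on hdiff _ h₀₂
      intro x hx
      obtain ⟨hsx, hcx, hcx1⟩ := hfacts x ⟨hx.1.le, hx.2.le⟩
      have hcotpos : 0 < Real.cos x / Real.sin x := div_pos hcx hsx
      have hsqgt : 1 < Real.sqrt (1 + Real.cos x) := by
        nlinarith [Real.sq_sqrt (show (0:ℝ) ≤ 1 + Real.cos x by linarith),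
          Real.sqrt_nonneg (1 + Real.cos x)]
      nlinarith
    rw [intervalIntegral.integral_sub hg₁ hcot] at hpos
    linarith
  -- Part 4
  have part4 : (∫ ψ in ψ₀..ψ₂, Real.cos ψ / Real.sin ψ) =
      Real.log (Real.sin ψ₂ / Real.sin ψ₀) := by
    have h := intervalIntegral.integral_eq_sub_of_hasDerivAt
      (f := fun x => Real.log (Real.sin x))
      (f' := fun x => Real.cos x / Real.sin x) ?_ hcot
    · rw [h, Real.log_div (ne_of_gt hsψ₂) (ne_of_gt hsψ₀)]
    · intro x hx
      rw [Set.uIcc_of_le hle] at hx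
      have hsx : Real.sin x ≠ 0 := ne_of_gt (hfacts x hx).1
      simpa [Real.cos] using (Real.hasDerivAt_sin x).log hsx
  exact ⟨part1, part2, part3, part4⟩
end

section
/- Let 0 < ψ₀ < ψ₂ < π/2 and let B > 0 satisfy √(2B) = ∫_{ψ₀}^{ψ₂} cos ψ/√(cos ψ₀ − cos ψ) dψ. Then sin ψ₀ > sin ψ₂ · exp(−√(2B)). Consequently, for the symmetric solution, the crossing inclination ψ₀ tends to ψ₂ as the separation parameter B tends to 0, so that asymptotically the meniscus becomes a linear segment at inclination ψ₂. (Conclusion of Case 1 of the meniscus-height estimates in the paper.) -/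
open Real

/-- Case 1 of the meniscus-height estimates: if the crossing inclination `ψ₀` and the plate
inclination `ψ₂` of the symmetric solution are related to the separation parameter `B` by
`√(2B) = ∫_{ψ₀}^{ψ₂} cos ψ/√(cos ψ₀ − cos ψ) dψ`, then `sin ψ₀ > sin ψ₂ · exp(−√(2B))`;
hence `ψ₀ → ψ₂` as `B → 0`, and asymptotically the meniscus is a linear segment at
inclination `ψ₂`. -/
theorem symmetric_crossing_angle_estimate
    (B ψ₀ ψ₂ : ℝ) (hB : 0 < B) (h₀ : 0 < ψ₀) (h₀₂ : ψ₀ < ψ₂) (h₂ : ψ₂ < π / 2)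
    (hrel : Real.sqrt (2 * B) =
      ∫ ψ in ψ₀..ψ₂, Real.cos ψ / Real.sqrt (Real.cos ψ₀ - Real.cos ψ)) :
    Real.sin ψ₀ > Real.sin ψ₂ * Real.exp (-Real.sqrt (2 * B)) := by
  have hπ : (0:ℝ) < π / 2 := by positivity
  -- sin is positive on [ψ₀, ψ₂]
  have hsinpos : ∀ ψ ∈ Set.Icc ψ₀ ψ₂, 0 < Real.sin ψ := by
    intro ψ hψ
    exact Real.sin_pos_of_pos_of_lt_pi (lt_of_lt_of_le h₀ hψ.1)
      (lt_of_le_of_lt hψ.2 (lt_trans h₂ (by linarith [Real.pi_pos])))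
  have hs0 : 0 < Real.sin ψ₀ := hsinpos ψ₀ ⟨le_refl _, le_of_lt h₀₂⟩
  have hs2 : 0 < Real.sin ψ₂ := hsinpos ψ₂ ⟨le_of_lt h₀₂, le_refl _⟩
  -- the RHS integrand must be interval integrable, else the integral is 0 contradicting B > 0
  set f : ℝ → ℝ := fun ψ => Real.cos ψ / Real.sqrt (Real.cos ψ₀ - Real.cos ψ) with hf
  have hsq : 0 < Real.sqrt (2 * B) := Real.sqrt_pos.mpr (by linarith)
  have hfint : IntervalIntegrable f MeasureTheory.volume ψ₀ ψ₂ := by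
    by_contra hnot
    rw [intervalIntegral.integral_undef hnot] at hrel
    exact absurd hrel (ne_of_gt hsq)
  -- cot is continuous hence integrable on [ψ₀, ψ₂]
  have hcotcont : ContinuousOn (fun ψ => Real.cos ψ / Real.sin ψ) (Set.uIcc ψ₀ ψ₂) := by
    apply ContinuousOn.div (Real.continuous_cos.continuousOn) (Real.continuous_sin.continuousOn)
    intro x hx
    rw [Set.uIcc_of_le (le_of_lt h₀₂)] at hx
    exact ne_of_gt (hsinpos x hx)
  have hcotint : IntervalIntegrable (fun ψ => Real.cos ψ / Real.sin ψ)
      MeasureTheory.volume ψ₀ ψ₂ := hcotcont.intervalIntegrable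
  -- FTC : ∫ cot = log (sin ψ₂) - log (sin ψ₀)
  have hftc : ∫ ψ in ψ₀..ψ₂, Real.cos ψ / Real.sin ψ
      = Real.log (Real.sin ψ₂) - Real.log (Real.sin ψ₀) := by
    apply intervalIntegral.integral_eq_sub_of_hasDerivAt
    · intro x hx
      rw [Set.uIcc_of_le (le_of_lt h₀₂)] at hx
      have hsx : Real.sin x ≠ 0 := ne_of_gt (hsinpos x hx)
      have := (Real.hasDerivAt_log hsx).comp x (Real.hasDerivAt_sin x)
      simpa [div_eq_mul_inv, mul_comm, Function.comp_def] using this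
    · exact hcotint
  -- pointwise strict inequality on (ψ₀, ψ₂)
  have hptwise : ∀ x ∈ Set.Ioo ψ₀ ψ₂, 0 < f x - Real.cos x / Real.sin x := by
    intro x hx
    have hx0 : 0 < x := lt_trans h₀ hx.1
    have hx2 : x < π / 2 := lt_trans hx.2 h₂
    have hcosx : 0 < Real.cos x := Real.cos_pos_of_mem_Ioo ⟨by linarith [Real.pi_pos], hx2⟩
    have hsinx : 0 < Real.sin x := hsinpos x ⟨le_of_lt hx.1, le_of_lt hx.2⟩
    have hcosmono : Real.cos x < Real.cos ψ₀ := by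
      apply Real.cos_lt_cos_of_nonneg_of_le_pi (le_of_lt h₀) _ hx.1
      linarith [Real.pi_pos]
    have hdiff : 0 < Real.cos ψ₀ - Real.cos x := by linarith
    -- sin² x > cos ψ₀ - cos x
    have hkey : Real.cos ψ₀ - Real.cos x < Real.sin x ^ 2 := by
      have h1 : Real.sin x ^ 2 = 1 - Real.cos x ^ 2 := by
        have := Real.sin_sq_add_cos_sq x; linarith
      have hc1 : Real.cos ψ₀ < 1 := by
        have := Real.cos_lt_cos_of_nonneg_of_le_pi (le_refl (0:ℝ))
          (by linarith [Real.pi_pos] : ψ₀ ≤ π) h₀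
        simpa using this
      nlinarith [hcosx]
    have hsqrt : Real.sqrt (Real.cos ψ₀ - Real.cos x) < Real.sin x := by
      rw [show Real.sin x = Real.sqrt (Real.sin x ^ 2) by
        rw [Real.sqrt_sq (le_of_lt hsinx)]]
      exact Real.sqrt_lt_sqrt (le_of_lt hdiff) hkey
    have hsqrtpos : 0 < Real.sqrt (Real.cos ψ₀ - Real.cos x) := Real.sqrt_pos.mpr hdiff
    have : Real.cos x / Real.sin x < Real.cos x / Real.sqrt (Real.cos ψ₀ - Real.cos x) :=
      div_lt_div_of_pos_left hcosx hsqrtpos hsqrt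
    simpa [hf] using sub_pos.mpr this
  -- strict integral inequality
  have hlt : Real.log (Real.sin ψ₂) - Real.log (Real.sin ψ₀) < Real.sqrt (2 * B) := by
    have hpos : 0 < ∫ x in ψ₀..ψ₂, (f x - Real.cos x / Real.sin x) :=
      intervalIntegral.intervalIntegral_pos_of_pos_on (hfint.sub hcotint) hptwise h₀₂
    rw [intervalIntegral.integral_sub hfint hcotint] at hpos
    rw [hftc] at hpos
    rw [hrel]
    linarith
  -- conclude
  have : Real.log (Real.sin ψ₂) < Real.sqrt (2 * B) + Real.log (Real.sin ψ₀) := by linarith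
  have hexp := Real.exp_lt_exp.mpr this
  rw [Real.exp_log hs2, Real.exp_add, Real.exp_log hs0] at hexp
  have hepos : 0 < Real.exp (Real.sqrt (2 * B)) := Real.exp_pos _
  rw [gt_iff_lt, Real.exp_neg]
  rw [mul_inv_lt_iff₀' hepos] at *
  linarith [hexp]
end

section
/- Let B > 0, let 0 < γ₂ < π/2 and set ψ₂ = π/2 − γ₂. Let (U, ψ) be a solution of the capillary ODE system with parameter B on [−1, 1] such that ψ(ξ) ∈ [−ψ₂, ψ₂] for every ξ ∈ [−1, 1], and put λ = sin ψ(1) − sin ψ(−1), assumed positive. Then for every ξ ∈ [−1, 1], U(ξ)² ≥ λ²/(4B²) − (2/B)(1 − sin γ₂). In particular this lower bound tends to +∞ as B → 0 with λ, γ₂ fixed. (Estimates (15)–(18) of the paper, Case γ₁ + γ₂ < π.) -/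
open Real Set

/-- Estimates (15)–(18), case γ₁ + γ₂ < π: with λ = sin ψ(1) − sin ψ(−1) > 0, every height
satisfies `U ξ ^ 2 ≥ λ²/(4B²) − (2/B)(1 − sin γ₂)`, a bound tending to +∞ as B → 0. -/
theorem capillary_height_lower_bound
    (B : ℝ) (hB : 0 < B) (γ₂ : ℝ) (hγ₂ : 0 < γ₂) (hγ₂' : γ₂ < π / 2)
    (U ψ : ℝ → ℝ) (h : IsCapillarySol B (Set.Icc (-1) 1) U ψ)
    (hψrange : ∀ ξ ∈ Set.Icc (-1 : ℝ) 1, ψ ξ ∈ Set.Icc (-(π / 2 - γ₂)) (π / 2 - γ₂))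
    (lam : ℝ) (hlam : lam = Real.sin (ψ 1) - Real.sin (ψ (-1))) (hlampos : 0 < lam) :
    ∀ ξ ∈ Set.Icc (-1 : ℝ) 1,
      U ξ ^ 2 ≥ lam ^ 2 / (4 * B ^ 2) - 2 / B * (1 - Real.sin γ₂) := by
  -- basic facts at points of the interval
  have hcos : ∀ ξ ∈ Set.Icc (-1 : ℝ) 1, 0 < Real.cos (ψ ξ) := by
    intro ξ hξ
    exact Real.cos_pos_of_mem_Ioo (h ξ hξ).1
  have hsq : ∀ ξ ∈ Set.Icc (-1 : ℝ) 1,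
      Real.sqrt (1 - Real.sin (ψ ξ) ^ 2) = Real.cos (ψ ξ) := by
    intro ξ hξ
    rw [show 1 - Real.sin (ψ ξ) ^ 2 = Real.cos (ψ ξ) ^ 2 by
      have := Real.sin_sq_add_cos_sq (ψ ξ); linarith]
    exact Real.sqrt_sq (hcos ξ hξ).le
  -- the conserved energy
  set g : ℝ → ℝ := fun t => B / 2 * U t ^ 2 + Real.sqrt (1 - Real.sin (ψ t) ^ 2) with hg
  have hgderiv : ∀ ξ ∈ Set.Icc (-1 : ℝ) 1, HasDerivAt g 0 ξ := by
    intro ξ hξ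
    obtain ⟨hmem, hs, hU⟩ := h ξ hξ
    have hc := hcos ξ hξ
    have hne : 1 - Real.sin (ψ ξ) ^ 2 ≠ 0 := by
      rw [show 1 - Real.sin (ψ ξ) ^ 2 = Real.cos (ψ ξ) ^ 2 by
        have := Real.sin_sq_add_cos_sq (ψ ξ); linarith]
      positivity
    have h1 : HasDerivAt (fun t => B / 2 * U t ^ 2)
        (B / 2 * (2 * U ξ ^ 1 * Real.tan (ψ ξ))) ξ := (hU.pow 2).const_mul _
    have h2 : HasDerivAt (fun t => 1 - Real.sin (ψ t) ^ 2)
        (-(2 * Real.sin (ψ ξ) ^ 1 * (B * U ξ))) ξ := by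
      simpa using (hs.pow 2).const_sub 1
    have h3 : HasDerivAt (fun t => Real.sqrt (1 - Real.sin (ψ t) ^ 2))
        (1 / (2 * Real.sqrt (1 - Real.sin (ψ ξ) ^ 2)) *
          (-(2 * Real.sin (ψ ξ) ^ 1 * (B * U ξ)))) ξ :=
      (Real.hasDerivAt_sqrt hne).comp ξ h2
    have := h1.add h3
    refine this.congr_deriv (Eq.symm ?_)
    rw [hsq ξ hξ, Real.tan_eq_sin_div_cos]
    field_simp
    ring
  have hgcont : ContinuousOn g (Set.Icc (-1 : ℝ) 1) :=
    fun x hx => ((hgderiv x hx).continuousAt).continuousWithinAt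
  have hgconst : ∀ x ∈ Set.Icc (-1 : ℝ) 1, g x = g (-1) :=
    constant_of_has_deriv_right_zero hgcont fun x hx =>
      ((hgderiv x (Set.Ico_subset_Icc_self hx)).hasDerivWithinAt)
  -- mean value theorem: find c with B * U c = lam / 2
  have hscont : ContinuousOn (fun t => Real.sin (ψ t)) (Set.Icc (-1 : ℝ) 1) :=
    fun x hx => ((h x hx).2.1.continuousAt).continuousWithinAt
  obtain ⟨c, hc, hceq⟩ := exists_hasDerivAt_eq_slope (fun t => Real.sin (ψ t))
    (fun t => B * U t) (by norm_num : (-1 : ℝ) < 1) hscont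
    (fun x hx => (h x (Set.Ioo_subset_Icc_self hx)).2.1)
  have hcIcc : c ∈ Set.Icc (-1 : ℝ) 1 := Set.Ioo_subset_Icc_self hc
  have hUc : B * U c = lam / 2 := by
    rw [hceq, hlam]; norm_num
  -- the cosine bounds
  have hcosub : ∀ ξ ∈ Set.Icc (-1 : ℝ) 1, Real.sin γ₂ ≤ Real.cos (ψ ξ) := by
    intro ξ hξ
    have hr := hψrange ξ hξ
    have habs : |ψ ξ| ≤ π / 2 - γ₂ := abs_le.2 ⟨hr.1, hr.2⟩
    have h1 : Real.cos (π / 2 - γ₂) ≤ Real.cos |ψ ξ| :=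
      Real.cos_le_cos_of_nonneg_of_le_pi (abs_nonneg _)
        (by linarith [Real.pi_pos]) habs
    rw [Real.cos_abs, Real.cos_pi_div_two_sub] at h1
    exact h1
  -- put it together
  intro ξ hξ
  have hgeq : g ξ = g c := by rw [hgconst ξ hξ, hgconst c hcIcc]
  have hξ1 : Real.cos (ψ ξ) ≤ 1 := Real.cos_le_one _
  have hξ2 : Real.sin γ₂ ≤ Real.cos (ψ c) := hcosub c hcIcc
  have hgξ : g ξ = B / 2 * U ξ ^ 2 + Real.cos (ψ ξ) := by rw [hg]; simp [hsq ξ hξ]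
  have hgc : g c = B / 2 * U c ^ 2 + Real.cos (ψ c) := by rw [hg]; simp [hsq c hcIcc]
  rw [hgξ, hgc] at hgeq
  have hUc2 : U c ^ 2 = lam ^ 2 / (4 * B ^ 2) := by
    have : U c = lam / (2 * B) := by field_simp at hUc ⊢; linarith
    rw [this]; field_simp; ring
  rw [ge_iff_le, div_sub' (by positivity : (4 : ℝ) * B ^ 2 ≠ 0) ]
  rw [div_le_iff₀ (by positivity)]
  have h4 : 2 / B * (1 - Real.sin γ₂) * (4 * B ^ 2) = 8 * B * (1 - Real.sin γ₂) := by
    field_simp; ring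
  nlinarith [hgeq, hUc2, hB, hξ1, hξ2]
end

section
/- Let B > 0, let 0 < γ₂ < π/2 and set ψ₂ = π/2 − γ₂. Let (U, ψ) be a solution of the capillary ODE system with parameter B on [−1, 1] such that ψ(ξ) ∈ [−ψ₂, ψ₂] for every ξ ∈ [−1, 1] and U(ξ) > 0 for every ξ ∈ [−1, 1]. Let U_M and U_m denote the maximum and minimum of U on [−1, 1]. Then B·(U_M² − U_m²) ≤ 2(1 − sin γ₂), and hence U_M − U_m ≤ 2(1 − sin γ₂)/(B(U_M + U_m)) < 2/(B·U_m). (Estimates (19)–(20) of the paper.) -/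
open Real Set

/-- Estimates (19)–(20): for a positive meniscus with inclinations in [−ψ₂, ψ₂], the maximum
and minimum heights satisfy `B(U_M² − U_m²) ≤ 2(1 − sin γ₂)` and hence
`U_M − U_m ≤ 2(1 − sin γ₂)/(B(U_M + U_m)) < 2/(B·U_m)`. -/
theorem capillary_height_oscillation_bound
    (B : ℝ) (hB : 0 < B) (γ₂ : ℝ) (hγ₂ : 0 < γ₂) (hγ₂' : γ₂ < π / 2)
    (U ψ : ℝ → ℝ) (h : IsCapillarySol B (Set.Icc (-1) 1) U ψ)
    (hψrange : ∀ ξ ∈ Set.Icc (-1 : ℝ) 1, ψ ξ ∈ Set.Icc (-(π / 2 - γ₂)) (π / 2 - γ₂))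
    (hUpos : ∀ ξ ∈ Set.Icc (-1 : ℝ) 1, 0 < U ξ)
    (UM Um : ℝ)
    (hUM : IsGreatest (U '' Set.Icc (-1 : ℝ) 1) UM)
    (hUm : IsLeast (U '' Set.Icc (-1 : ℝ) 1) Um) :
    B * (UM ^ 2 - Um ^ 2) ≤ 2 * (1 - Real.sin γ₂) ∧
    UM - Um ≤ 2 * (1 - Real.sin γ₂) / (B * (UM + Um)) ∧
    2 * (1 - Real.sin γ₂) / (B * (UM + Um)) < 2 / (B * Um) := by
  have hsinγ : 0 < Real.sin γ₂ := Real.sin_pos_of_pos_of_lt_pi hγ₂ (by linarith [Real.pi_pos])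
  have hsinγ1 : Real.sin γ₂ ≤ 1 := Real.sin_le_one _
  set F : ℝ → ℝ := fun t => B * U t ^ 2 / 2 + Real.sqrt (1 - Real.sin (ψ t) ^ 2) with hF
  -- cos ψ ξ > 0 and equals the sqrt
  have hcospos : ∀ ξ ∈ Set.Icc (-1 : ℝ) 1, 0 < Real.cos (ψ ξ) := fun ξ hξ =>
    Real.cos_pos_of_mem_Ioo (by simpa using (h ξ hξ).1)
  have hsqrt_eq : ∀ ξ ∈ Set.Icc (-1 : ℝ) 1,
      Real.sqrt (1 - Real.sin (ψ ξ) ^ 2) = Real.cos (ψ ξ) := by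
    intro ξ hξ
    have : 1 - Real.sin (ψ ξ) ^ 2 = Real.cos (ψ ξ) ^ 2 := by
      have := Real.sin_sq_add_cos_sq (ψ ξ); linarith
    rw [this, Real.sqrt_sq (hcospos ξ hξ).le]
  -- F has derivative 0 on Icc
  have hFderiv : ∀ ξ ∈ Set.Icc (-1 : ℝ) 1, HasDerivAt F 0 ξ := by
    intro ξ hξ
    obtain ⟨hψmem, hs, hU'⟩ := h ξ hξ
    have hcos := hcospos ξ hξ
    have hne : 1 - Real.sin (ψ ξ) ^ 2 ≠ 0 := by
      rw [show 1 - Real.sin (ψ ξ) ^ 2 = Real.cos (ψ ξ) ^ 2 by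
        have := Real.sin_sq_add_cos_sq (ψ ξ); linarith]
      positivity
    have h1 : HasDerivAt (fun t => 1 - Real.sin (ψ t) ^ 2)
        (-(2 * Real.sin (ψ ξ) * (B * U ξ))) ξ := by
      have := ((hs.pow 2).const_sub 1)
      simpa [mul_comm, mul_assoc, mul_left_comm] using this
    have h2 : HasDerivAt (fun t => Real.sqrt (1 - Real.sin (ψ t) ^ 2))
        ((-(2 * Real.sin (ψ ξ) * (B * U ξ))) / (2 * Real.sqrt (1 - Real.sin (ψ ξ) ^ 2))) ξ :=
      h1.sqrt hne
    have h3 : HasDerivAt (fun t => B * U t ^ 2 / 2)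
        (B * (2 * U ξ * Real.tan (ψ ξ)) / 2) ξ := by
      have h3' := ((hU'.pow 2).const_mul B).div_const 2
      convert h3' using 1
      · rfl
      · rfl
      · rfl
      push_cast
      ring
    have := h3.add h2
    have hval : B * (2 * U ξ * Real.tan (ψ ξ)) / 2 +
        (-(2 * Real.sin (ψ ξ) * (B * U ξ))) / (2 * Real.sqrt (1 - Real.sin (ψ ξ) ^ 2)) = 0 := by
      rw [hsqrt_eq ξ hξ, Real.tan_eq_sin_div_cos]
      field_simp
      ring
    rw [hval] at this
    exact this
  -- F is constant on Icc
  have hFconst : ∀ x ∈ Set.Icc (-1 : ℝ) 1, F x = F (-1) := by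
    apply constant_of_has_deriv_right_zero
    · exact fun x hx => (hFderiv x hx).continuousAt.continuousWithinAt
    · exact fun x hx => ((hFderiv x (Set.mem_Icc_of_Ico hx)).hasDerivWithinAt)
  -- extract extremal points
  obtain ⟨ξM, hξM, hUMeq⟩ := hUM.1
  obtain ⟨ξm, hξm, hUmeq⟩ := hUm.1
  -- bounds on sqrt term
  have hsq_le_one : ∀ ξ ∈ Set.Icc (-1 : ℝ) 1, Real.sqrt (1 - Real.sin (ψ ξ) ^ 2) ≤ 1 := by
    intro ξ hξ
    calc Real.sqrt (1 - Real.sin (ψ ξ) ^ 2) ≤ Real.sqrt 1 :=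
          Real.sqrt_le_sqrt (by nlinarith [sq_nonneg (Real.sin (ψ ξ))])
      _ = 1 := Real.sqrt_one
  have hsq_ge : ∀ ξ ∈ Set.Icc (-1 : ℝ) 1,
      Real.sin γ₂ ≤ Real.sqrt (1 - Real.sin (ψ ξ) ^ 2) := by
    intro ξ hξ
    rw [hsqrt_eq ξ hξ]
    have hmem := hψrange ξ hξ
    have h1 : Real.cos (ψ ξ) ≥ Real.cos (π / 2 - γ₂) := by
      rcases le_or_gt 0 (ψ ξ) with hψ0 | hψ0
      · exact Real.cos_le_cos_of_nonneg_of_le_pi hψ0 (by linarith [Real.pi_pos]) hmem.2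
      · rw [← Real.cos_neg (ψ ξ)]
        exact Real.cos_le_cos_of_nonneg_of_le_pi (by linarith) (by linarith [Real.pi_pos])
          (by linarith [hmem.1])
    rwa [Real.cos_pi_div_two_sub] at h1
  -- main inequality
  have hkey : B * (UM ^ 2 - Um ^ 2) ≤ 2 * (1 - Real.sin γ₂) := by
    have hM := hFconst ξM hξM
    have hm := hFconst ξm hξm
    have : F ξM = F ξm := by rw [hM, hm]
    simp only [hF] at this
    have h1 := hsq_le_one ξm hξm
    have h2 := hsq_ge ξM hξM
    rw [hUMeq, hUmeq] at this
    linarith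
  have hUmpos : 0 < Um := by rw [← hUmeq]; exact hUpos ξm hξm
  have hUMpos : 0 < UM := by rw [← hUMeq]; exact hUpos ξM hξM
  have hsum : 0 < B * (UM + Um) := by positivity
  refine ⟨hkey, ?_, ?_⟩
  · rw [le_div_iff₀ hsum]
    nlinarith
  · rw [div_lt_div_iff₀ hsum (by positivity)]
    nlinarith [mul_pos hB hUmpos, mul_pos hB hUMpos, mul_pos (mul_pos hB hUmpos) hsinγ]
end

section
/- Let B > 0, let 0 < γ₂ < π/2 and set ψ₂ = π/2 − γ₂. Let (U, ψ) be a solution of the capillary ODE system with parameter B on [−1, 1] such that ψ(ξ) ∈ [−ψ₂, ψ₂] for every ξ, U(ξ) > 0 for every ξ, and λ = sin ψ(1) − sin ψ(−1) > 0. If additionally B ≤ λ²/32, then the minimum U_m of U on [−1, 1] satisfies B·U_m² ≥ λ²/(8B), and the total height variation satisfies U_M − U_m ≤ 4√2/λ, where U_M is the maximum of U on [−1, 1]. Consequently, in physical variables u = aU the height change across the channel is at most (4√2/λ)·a, i.e. it tends to zero to the same order as the plate separation. (Estimates (20)–(23) of the paper.) -/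
open Real Set

set_option maxHeartbeats 1000000 in
/-- Estimates (20)–(23): if additionally `B ≤ λ²/32`, then `B·U_m² ≥ λ²/(8B)` and
`U_M − U_m ≤ 4√2/λ`; in physical variables u = aU (with B = κa²) the height change across
the channel is at most `(4√2/λ)·a`, i.e. of the same order as the plate separation. -/
theorem capillary_height_change_same_order
    (B : ℝ) (hB : 0 < B) (γ₂ : ℝ) (hγ₂ : 0 < γ₂) (hγ₂' : γ₂ < π / 2)
    (U ψ : ℝ → ℝ) (h : IsCapillarySol B (Set.Icc (-1) 1) U ψ)
    (hψrange : ∀ ξ ∈ Set.Icc (-1 : ℝ) 1, ψ ξ ∈ Set.Icc (-(π / 2 - γ₂)) (π / 2 - γ₂))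
    (hUpos : ∀ ξ ∈ Set.Icc (-1 : ℝ) 1, 0 < U ξ)
    (lam : ℝ) (hlam : lam = Real.sin (ψ 1) - Real.sin (ψ (-1))) (hlampos : 0 < lam)
    (hBsmall : B ≤ lam ^ 2 / 32)
    (UM Um : ℝ)
    (hUM : IsGreatest (U '' Set.Icc (-1 : ℝ) 1) UM)
    (hUm : IsLeast (U '' Set.Icc (-1 : ℝ) 1) Um) :
    B * Um ^ 2 ≥ lam ^ 2 / (8 * B) ∧
    UM - Um ≤ 4 * Real.sqrt 2 / lam ∧
    ∀ a : ℝ, 0 < a → a * UM - a * Um ≤ 4 * Real.sqrt 2 / lam * a := by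
  -- extremal points
  obtain ⟨ξM, hξM, hUξM⟩ := hUM.1
  obtain ⟨ξm, hξm, hUξm⟩ := hUm.1
  have hUMpos : 0 < UM := hUξM ▸ hUpos ξM hξM
  have hUmpos : 0 < Um := hUξm ▸ hUpos ξm hξm
  have hUle : ∀ ξ ∈ Set.Icc (-1 : ℝ) 1, U ξ ≤ UM := fun ξ hξ => hUM.2 ⟨ξ, hξ, rfl⟩
  have hUge : ∀ ξ ∈ Set.Icc (-1 : ℝ) 1, Um ≤ U ξ := fun ξ hξ => hUm.2 ⟨ξ, hξ, rfl⟩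
  have hMm : Um ≤ UM := le_of_le_of_eq (hUge ξM hξM) hUξM
  -- energy function
  set G : ℝ → ℝ := fun t => Real.sqrt (1 - Real.sin (ψ t) ^ 2) + B / 2 * U t ^ 2 with hGdef
  have hG : ∀ ξ ∈ Set.Icc (-1 : ℝ) 1, HasDerivAt G 0 ξ := by
    intro ξ hξ
    obtain ⟨hψmem, hsin, hU'⟩ := h ξ hξ
    have hc : 0 < Real.cos (ψ ξ) := Real.cos_pos_of_mem_Ioo hψmem
    have hcs : 1 - Real.sin (ψ ξ) ^ 2 = Real.cos (ψ ξ) ^ 2 := by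
      nlinarith [Real.sin_sq_add_cos_sq (ψ ξ)]
    have hpos : 0 < 1 - Real.sin (ψ ξ) ^ 2 := by rw [hcs]; positivity
    have hsq : HasDerivAt (fun t => 1 - Real.sin (ψ t) ^ 2)
        (0 - 2 * Real.sin (ψ ξ) ^ 1 * (B * U ξ)) ξ :=
      (hasDerivAt_const ξ (1 : ℝ)).sub (hsin.pow 2)
    have hsqrt : HasDerivAt (fun t => Real.sqrt (1 - Real.sin (ψ t) ^ 2))
        (1 / (2 * Real.sqrt (1 - Real.sin (ψ ξ) ^ 2)) *
          (0 - 2 * Real.sin (ψ ξ) ^ 1 * (B * U ξ))) ξ :=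
      (Real.hasDerivAt_sqrt hpos.ne').comp ξ hsq
    have hU2 : HasDerivAt (fun t => B / 2 * U t ^ 2)
        (B / 2 * (2 * U ξ ^ 1 * Real.tan (ψ ξ))) ξ := (hU'.pow 2).const_mul (B / 2)
    have hadd := hsqrt.add hU2
    have hsqrtc : Real.sqrt (1 - Real.sin (ψ ξ) ^ 2) = Real.cos (ψ ξ) := by
      rw [hcs]; exact Real.sqrt_sq hc.le
    refine hadd.congr_deriv ?_
    rw [hsqrtc, Real.tan_eq_sin_div_cos]
    field_simp
    ring
  have hGconst : ∀ x ∈ Set.Icc (-1 : ℝ) 1, G x = G (-1) := by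
    apply constant_of_has_deriv_right_zero
    · exact fun x hx => (hG x hx).continuousAt.continuousWithinAt
    · exact fun x hx => ((hG x (Ico_subset_Icc_self hx)).hasDerivWithinAt)
  have hGeq : G ξM = G ξm := by rw [hGconst ξM hξM, hGconst ξm hξm]
  -- energy estimate : B*(UM^2 - Um^2) ≤ 2
  have hdiff : B * (UM ^ 2 - Um ^ 2) ≤ 2 := by
    have h1 : Real.sqrt (1 - Real.sin (ψ ξm) ^ 2) ≤ 1 :=
      Real.sqrt_le_one.mpr (by nlinarith [sq_nonneg (Real.sin (ψ ξm))])
    have h2 : 0 ≤ Real.sqrt (1 - Real.sin (ψ ξM) ^ 2) := Real.sqrt_nonneg _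
    have := hGeq
    simp only [hGdef] at this
    rw [hUξM, hUξm] at this
    nlinarith
  -- lam ≤ 2 * B * UM
  have hlamUM : lam ≤ 2 * (B * UM) := by
    have hbound := norm_image_sub_le_of_norm_deriv_le_segment'
      (f := fun t => Real.sin (ψ t)) (f' := fun t => B * U t) (a := (-1 : ℝ)) (b := 1)
      (C := B * UM)
      (fun x hx => ((h x hx).2.1).hasDerivWithinAt)
      (fun x hx => by
        have hx' : x ∈ Set.Icc (-1 : ℝ) 1 := Ico_subset_Icc_self hx
        have h1 : 0 < B * U x := mul_pos hB (hUpos x hx')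
        have h2 : B * U x ≤ B * UM := by
          have := hUle x hx'; nlinarith
        rw [Real.norm_eq_abs, abs_of_pos h1]; exact h2)
      1 (by norm_num)
    rw [← hlam] at hbound
    have : lam ≤ |lam| := le_abs_self _
    rw [← Real.norm_eq_abs] at this
    nlinarith [this.trans hbound]
  -- part 1
  have hpart1 : lam ^ 2 / (8 * B) ≤ B * Um ^ 2 := by
    rw [div_le_iff₀ (by positivity)]
    nlinarith [sq_nonneg (2 * (B * UM) - lam), mul_pos hB hUMpos, mul_pos hB hUmpos]
  have hpart2 : UM - Um ≤ 4 * Real.sqrt 2 / lam := by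
    set s := Real.sqrt 2 with hs
    have hs2 : s ^ 2 = 2 := Real.sq_sqrt (by norm_num)
    have hs0 : 0 < s := Real.sqrt_pos.mpr (by norm_num)
    have hK : 0 < B * Um := mul_pos hB hUmpos
    have h8 : lam ^ 2 ≤ (2 * s * (B * Um)) ^ 2 := by
      have := hpart1
      rw [div_le_iff₀ (by positivity)] at this
      nlinarith [hs2]
    have hKlam : lam ≤ 2 * s * (B * Um) :=
      calc lam = Real.sqrt (lam ^ 2) := (Real.sqrt_sq hlampos.le).symm
        _ ≤ Real.sqrt ((2 * s * (B * Um)) ^ 2) := Real.sqrt_le_sqrt h8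
        _ = 2 * s * (B * Um) := Real.sqrt_sq (by positivity)
    have hd2 : (UM - Um) * (B * Um) ≤ 1 := by
      nlinarith [mul_nonneg (mul_nonneg hB.le (sub_nonneg.2 hMm)) (sub_nonneg.2 hMm)]
    rw [le_div_iff₀ hlampos]
    nlinarith [mul_nonneg (sub_nonneg.2 hMm) (sub_nonneg.2 hKlam),
      mul_nonneg hs0.le (sub_nonneg.2 hd2)]
  refine ⟨hpart1, hpart2, ?_⟩
  intro a ha
  nlinarith [mul_le_mul_of_nonneg_left hpart2 ha.le]
end

section
/- Let B > 0 and let (U, φ) and (V, ω) be two solutions of the capillary ODE system with parameter B on the interval [ξ₁, ξ₂], with φ(ξ₂) = ω(ξ₂) and U(ξ₂) > V(ξ₂). Then U(ξ) > V(ξ) for every ξ ∈ [ξ₁, ξ₂], and the height difference U − V is strictly decreasing on [ξ₁, ξ₂]; in particular 0 < U(ξ) − V(ξ) ≤ U(ξ₁) − V(ξ₁) for every ξ ∈ [ξ₁, ξ₂]. (The key step in the proof of Theorem 1 of the paper: the height difference between neighbouring curves and the symmetric curve decreases on moving from Π₁ to Π₂.) -/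
open Real Set

/-- Key step in Theorem 1: if two solution curves on [ξ₁, ξ₂] have equal inclinations at ξ₂
with `U ξ₂ > V ξ₂`, then `U > V` throughout, and the height difference `U − V` is strictly
decreasing on [ξ₁, ξ₂]; in particular `0 < U ξ − V ξ ≤ U ξ₁ − V ξ₁` on [ξ₁, ξ₂]. -/
theorem capillary_height_difference_decreasing
    (B : ℝ) (hB : 0 < B) (ξ₁ ξ₂ : ℝ) (hξ : ξ₁ < ξ₂)
    (U φ V ω : ℝ → ℝ)
    (hUφ : IsCapillarySol B (Set.Icc ξ₁ ξ₂) U φ)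
    (hVω : IsCapillarySol B (Set.Icc ξ₁ ξ₂) V ω)
    (hincl : φ ξ₂ = ω ξ₂) (htop : U ξ₂ > V ξ₂) :
    (∀ ξ ∈ Set.Icc ξ₁ ξ₂, U ξ > V ξ) ∧
    StrictAntiOn (fun ξ => U ξ - V ξ) (Set.Icc ξ₁ ξ₂) ∧
    ∀ ξ ∈ Set.Icc ξ₁ ξ₂, 0 < U ξ - V ξ ∧ U ξ - V ξ ≤ U ξ₁ - V ξ₁ := by
  set s : ℝ → ℝ := fun t => Real.sin (φ t) - Real.sin (ω t) with hs_def
  set d : ℝ → ℝ := fun t => U t - V t with hd_def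
  have hξ₂m : ξ₂ ∈ Icc ξ₁ ξ₂ := ⟨le_of_lt hξ, le_rfl⟩
  have hI : ∀ ξ ∈ Icc ξ₁ ξ₂,
      HasDerivAt s (B * d ξ) ξ ∧ HasDerivAt d (Real.tan (φ ξ) - Real.tan (ω ξ)) ξ := by
    intro ξ hξm
    obtain ⟨hφm, hφs, hU⟩ := hUφ ξ hξm
    obtain ⟨hωm, hωs, hV⟩ := hVω ξ hξm
    refine ⟨?_, hU.sub hV⟩
    have := hφs.sub hωs
    rw [show B * d ξ = B * U ξ - B * V ξ by simp [hd_def, mul_sub]]; exact this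
  have hsξ₂ : s ξ₂ = 0 := by simp [hs_def, hincl]
  have hdξ₂ : 0 < d ξ₂ := sub_pos.2 htop
  have hscont : ContinuousOn s (Icc ξ₁ ξ₂) :=
    fun ξ hm => ((hI ξ hm).1.continuousAt).continuousWithinAt
  have hdcont : ContinuousOn d (Icc ξ₁ ξ₂) :=
    fun ξ hm => ((hI ξ hm).2.continuousAt).continuousWithinAt
  -- sign of the derivative of d where s < 0
  have htan : ∀ ξ ∈ Icc ξ₁ ξ₂, s ξ < 0 → Real.tan (φ ξ) - Real.tan (ω ξ) < 0 := by
    intro ξ hm hneg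
    obtain ⟨hφm, -, -⟩ := hUφ ξ hm
    obtain ⟨hωm, -, -⟩ := hVω ξ hm
    have hsin : Real.sin (φ ξ) < Real.sin (ω ξ) := by
      have : s ξ = Real.sin (φ ξ) - Real.sin (ω ξ) := rfl
      linarith [hneg]
    have hlt : φ ξ < ω ξ := by
      by_contra h
      push_neg at h
      rcases eq_or_lt_of_le h with h' | h'
      · rw [h'] at hsin; linarith
      · have := Real.strictMonoOn_sin (Ioo_subset_Icc_self hωm) (Ioo_subset_Icc_self hφm) h'
        linarith
    have := Real.strictMonoOn_tan hφm hωm hlt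
    linarith
  -- s is negative just to the left of ξ₂
  have hev : {ξ : ℝ | s ξ < 0} ∈ nhdsWithin ξ₂ (Iio ξ₂) := by
    have hslope : Filter.Tendsto (slope s ξ₂) (nhdsWithin ξ₂ {ξ₂}ᶜ) (nhds (B * d ξ₂)) :=
      hasDerivAt_iff_tendsto_slope.1 (hI ξ₂ hξ₂m).1
    have hpos : 0 < B * d ξ₂ := mul_pos hB hdξ₂
    have h1 : ∀ᶠ ξ in nhdsWithin ξ₂ {ξ₂}ᶜ, 0 < slope s ξ₂ ξ :=
      hslope.eventually (eventually_gt_nhds hpos)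
    have h2 : ∀ᶠ ξ in nhdsWithin ξ₂ (Iio ξ₂), 0 < slope s ξ₂ ξ :=
      h1.filter_mono (nhdsWithin_mono _ fun x hx => ne_of_lt hx)
    filter_upwards [h2, self_mem_nhdsWithin] with ξ hx hmem
    have hlt : ξ - ξ₂ < 0 := sub_neg.2 hmem
    have hsl : slope s ξ₂ ξ = (s ξ - s ξ₂) / (ξ - ξ₂) := by
      rw [slope_def_field]
    rw [hsl] at hx
    have : s ξ - s ξ₂ < 0 := by
      by_contra hc
      push_neg at hc
      have : (s ξ - s ξ₂) / (ξ - ξ₂) ≤ 0 := div_nonpos_iff.2 (Or.inl ⟨hc, le_of_lt hlt⟩)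
      linarith
    simpa [hsξ₂] using this
  obtain ⟨c, hc, hsub⟩ := mem_nhdsLT_iff_exists_Ioo_subset.1 hev
  -- main claim : s < 0 on [ξ₁, ξ₂)
  have hneg : ∀ ξ ∈ Ico ξ₁ ξ₂, s ξ < 0 := by
    by_contra h
    push_neg at h
    obtain ⟨x, hx, hx0⟩ := h
    set c' : ℝ := max c ξ₁ with hc'_def
    have hc'lt : c' < ξ₂ := max_lt hc hξ
    have hnegIoo : ∀ ξ ∈ Ioo c' ξ₂, s ξ < 0 := fun ξ hm =>
      hsub ⟨lt_of_le_of_lt (le_max_left c ξ₁) hm.1, hm.2⟩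
    have hxc' : x ≤ c' := by
      by_contra hxc
      push_neg at hxc
      exact absurd (hnegIoo x ⟨hxc, hx.2⟩) (not_lt.2 hx0)
    set K : Set ℝ := {ξ ∈ Icc ξ₁ c' | 0 ≤ s ξ} with hK_def
    have hKsub : K ⊆ Icc ξ₁ ξ₂ := fun ξ hm =>
      ⟨hm.1.1, le_trans hm.1.2 (le_of_lt hc'lt)⟩
    have hKclosed : IsClosed K := by
      have : ContinuousOn s (Icc ξ₁ c') :=
        hscont.mono (Icc_subset_Icc le_rfl (le_of_lt hc'lt))
      exact
        this.preimage_isClosed_of_isClosed isClosed_Icc isClosed_Ici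
    have hKcpt : IsCompact K :=
      (isCompact_Icc (a := ξ₁) (b := c')).of_isClosed_subset hKclosed fun ξ hm => hm.1
    have hKne : K.Nonempty := ⟨x, ⟨hx.1, hxc'⟩, hx0⟩
    obtain ⟨a, haK, haub⟩ := hKcpt.exists_isGreatest hKne
    have ha2 : a < ξ₂ := lt_of_le_of_lt haK.1.2 hc'lt
    have hamem : a ∈ Icc ξ₁ ξ₂ := ⟨haK.1.1, le_of_lt ha2⟩
    have hnegIooa : ∀ ξ ∈ Ioo a ξ₂, s ξ < 0 := by
      intro ξ hm
      rcases le_or_gt ξ c' with h' | h'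
      · by_contra hcon
        push_neg at hcon
        have : ξ ∈ K := ⟨⟨le_trans haK.1.1 (le_of_lt hm.1), h'⟩, hcon⟩
        exact absurd (haub this) (not_le.2 hm.1)
      · exact hnegIoo ξ ⟨h', hm.2⟩
    have hsubI : Icc a ξ₂ ⊆ Icc ξ₁ ξ₂ := Icc_subset_Icc haK.1.1 le_rfl
    have hdanti : StrictAntiOn d (Icc a ξ₂) := by
      apply strictAntiOn_of_deriv_neg (convex_Icc _ _) (hdcont.mono hsubI)
      intro ξ hm
      rw [interior_Icc] at hm
      have hm' : ξ ∈ Icc ξ₁ ξ₂ := hsubI (Ioo_subset_Icc_self hm)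
      rw [(hI ξ hm').2.deriv]
      exact htan ξ hm' (hnegIooa ξ hm)
    have hdpos : ∀ ξ ∈ Icc a ξ₂, 0 < d ξ := by
      intro ξ hm
      rcases eq_or_lt_of_le hm.2 with h' | h'
      · rw [h']; exact hdξ₂
      · exact lt_trans hdξ₂ (hdanti ⟨hm.1, le_of_lt h'⟩ ⟨le_of_lt ha2, le_rfl⟩ h')
    have hsmono : StrictMonoOn s (Icc a ξ₂) := by
      apply strictMonoOn_of_deriv_pos (convex_Icc _ _) (hscont.mono hsubI)
      intro ξ hm
      rw [interior_Icc] at hm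
      have hm' : ξ ∈ Icc ξ₁ ξ₂ := hsubI (Ioo_subset_Icc_self hm)
      rw [(hI ξ hm').1.deriv]
      exact mul_pos hB (hdpos ξ (Ioo_subset_Icc_self hm))
    have : s a < s ξ₂ := hsmono ⟨le_rfl, le_of_lt ha2⟩ ⟨le_of_lt ha2, le_rfl⟩ ha2
    rw [hsξ₂] at this
    linarith [haK.2]
  -- conclusions
  have hanti : StrictAntiOn d (Icc ξ₁ ξ₂) := by
    apply strictAntiOn_of_deriv_neg (convex_Icc _ _) hdcont
    intro ξ hm
    rw [interior_Icc] at hm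
    have hm' : ξ ∈ Icc ξ₁ ξ₂ := Ioo_subset_Icc_self hm
    rw [(hI ξ hm').2.deriv]
    exact htan ξ hm' (hneg ξ ⟨le_of_lt hm.1, hm.2⟩)
  have hpos' : ∀ ξ ∈ Icc ξ₁ ξ₂, 0 < d ξ := by
    intro ξ hm
    rcases eq_or_lt_of_le hm.2 with h' | h'
    · rw [h']; exact hdξ₂
    · exact lt_trans hdξ₂ (hanti hm hξ₂m h')
  refine ⟨fun ξ hm => sub_pos.1 (hpos' ξ hm), hanti, fun ξ hm => ⟨hpos' ξ hm, ?_⟩⟩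
  rcases eq_or_lt_of_le hm.1 with h' | h'
  · rw [← h']
  · exact le_of_lt (hanti ⟨le_rfl, le_of_lt hξ⟩ hm h')
end

section
/- Fix ψ₂ with 0 < ψ₂ ≤ π/2. Then the function 𝒥(ψ₁; ψ₂) = ∫_{ψ₁}^{ψ₂} cos ψ/√(cos ψ₁ − cos ψ) dψ is strictly decreasing as a function of ψ₁ on the interval (0, ψ₂). (The monotonicity assertion of Appendix 5 of the paper, proved via the substitution s = −cos ψ and differentiation of (48).) -/
open Real MeasureTheory Set

namespace JAux

/-- The integrand after the substitution `ψ = arccos (c + (c₂ - c) u)`. -/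
noncomputable def G (c₂ c u : ℝ) : ℝ :=
  Real.sqrt (c - c₂) * (c + (c₂ - c) * u) /
    (Real.sqrt u * Real.sqrt (1 - (c + (c₂ - c) * u) ^ 2))

lemma w_mem {c₂ c u : ℝ} (hc : c₂ < c) (hu : u ∈ Set.Ioo (0:ℝ) 1) :
    c + (c₂ - c) * u ∈ Set.Ioo c₂ c := by
  constructor <;> nlinarith [hu.1, hu.2]

lemma G_pos {c₂ c u : ℝ} (h0 : 0 ≤ c₂) (hc : c₂ < c) (hc1 : c < 1)
    (hu : u ∈ Set.Ioo (0:ℝ) 1) : 0 < G c₂ c u := by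
  obtain ⟨hw1, hw2⟩ := w_mem hc hu
  have hwpos : 0 < c + (c₂ - c) * u := lt_of_le_of_lt h0 hw1
  have hsq : (c + (c₂ - c) * u) ^ 2 < 1 := by nlinarith
  apply div_pos
  · exact mul_pos (Real.sqrt_pos.2 (by linarith)) hwpos
  · exact mul_pos (Real.sqrt_pos.2 hu.1) (Real.sqrt_pos.2 (by linarith))

lemma G_strict_mono {c₂ c' c u : ℝ} (h0 : 0 ≤ c₂) (h1 : c₂ < c') (h2 : c' < c)
    (h3 : c < 1) (hu : u ∈ Set.Ioo (0:ℝ) 1) : G c₂ c' u < G c₂ c u := by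
  set w' : ℝ := c' + (c₂ - c') * u with hw'def
  set w : ℝ := c + (c₂ - c) * u with hwdef
  obtain ⟨hw'1, hw'2⟩ := w_mem h1 hu
  obtain ⟨hw1, hw2⟩ := w_mem (h1.trans h2) hu
  have hw'pos : 0 < w' := lt_of_le_of_lt h0 hw'1
  have hww' : w' < w := by
    have := hu.2
    simp only [hw'def, hwdef]
    nlinarith
  have hw1' : w < 1 := lt_trans hw2 h3
  have hs'pos : 0 < Real.sqrt (1 - w' ^ 2) := Real.sqrt_pos.2 (by nlinarith)
  have hspos : 0 < Real.sqrt (1 - w ^ 2) := Real.sqrt_pos.2 (by nlinarith)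
  have hupos : 0 < Real.sqrt u := Real.sqrt_pos.2 hu.1
  have hA'pos : 0 < Real.sqrt (c' - c₂) := Real.sqrt_pos.2 (by linarith)
  have hApos : 0 < Real.sqrt (c - c₂) := Real.sqrt_pos.2 (by linarith)
  have hA : Real.sqrt (c' - c₂) < Real.sqrt (c - c₂) :=
    Real.sqrt_lt_sqrt (by linarith) (by linarith)
  -- the key inequality `w' / s' < w / s` in crossed form
  have hkey : w' * Real.sqrt (1 - w ^ 2) < w * Real.sqrt (1 - w' ^ 2) := by
    have e1 : w' * Real.sqrt (1 - w ^ 2) = Real.sqrt (w' ^ 2 * (1 - w ^ 2)) := by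
      rw [Real.sqrt_mul (sq_nonneg _), Real.sqrt_sq hw'pos.le]
    have e2 : w * Real.sqrt (1 - w' ^ 2) = Real.sqrt (w ^ 2 * (1 - w' ^ 2)) := by
      rw [Real.sqrt_mul (sq_nonneg _), Real.sqrt_sq (hw'pos.trans hww').le]
    rw [e1, e2]
    have hnn : (0:ℝ) ≤ w' ^ 2 * (1 - w ^ 2) :=
      mul_nonneg (sq_nonneg _) (by nlinarith : (0:ℝ) ≤ 1 - w ^ 2)
    apply Real.sqrt_lt_sqrt hnn
    nlinarith
  show Real.sqrt (c' - c₂) * w' / (Real.sqrt u * Real.sqrt (1 - w' ^ 2)) <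
      Real.sqrt (c - c₂) * w / (Real.sqrt u * Real.sqrt (1 - w ^ 2))
  rw [div_lt_div_iff₀ (mul_pos hupos hs'pos) (mul_pos hupos hspos)]
  have step1 : Real.sqrt (c' - c₂) * (w' * Real.sqrt (1 - w ^ 2)) <
      Real.sqrt (c - c₂) * (w * Real.sqrt (1 - w' ^ 2)) := by
    calc Real.sqrt (c' - c₂) * (w' * Real.sqrt (1 - w ^ 2))
        < Real.sqrt (c - c₂) * (w' * Real.sqrt (1 - w ^ 2)) :=
          mul_lt_mul_of_pos_right hA (mul_pos hw'pos hspos)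
      _ < Real.sqrt (c - c₂) * (w * Real.sqrt (1 - w' ^ 2)) :=
          mul_lt_mul_of_pos_left hkey hApos
  calc Real.sqrt (c' - c₂) * w' * (Real.sqrt u * Real.sqrt (1 - w ^ 2))
      = Real.sqrt (c' - c₂) * (w' * Real.sqrt (1 - w ^ 2)) * Real.sqrt u := by ring
    _ < Real.sqrt (c - c₂) * (w * Real.sqrt (1 - w' ^ 2)) * Real.sqrt u :=
        mul_lt_mul_of_pos_right step1 hupos
    _ = Real.sqrt (c - c₂) * w * (Real.sqrt u * Real.sqrt (1 - w' ^ 2)) := by ring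

lemma G_integrable {c₂ c : ℝ} (h0 : 0 ≤ c₂) (hc : c₂ < c) (hc1 : c < 1) :
    IntegrableOn (G c₂ c) (Set.Ioo 0 1) := by
  have hmeas : AEStronglyMeasurable (G c₂ c) (volume.restrict (Set.Ioo 0 1)) := by
    apply Measurable.aestronglyMeasurable
    unfold G
    fun_prop
  have hdom : IntegrableOn (fun u : ℝ =>
      (Real.sqrt (c - c₂) / Real.sqrt (1 - c ^ 2)) * u ^ (-(1:ℝ)/2)) (Set.Ioo 0 1) := by
    have h1 : IntervalIntegrable (fun u : ℝ => u ^ (-(1:ℝ)/2)) volume 0 1 :=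
      intervalIntegral.intervalIntegrable_rpow' (by norm_num)
    have h2 : IntegrableOn (fun u : ℝ => u ^ (-(1:ℝ)/2)) (Set.Ioc 0 1) :=
      (intervalIntegrable_iff_integrableOn_Ioc_of_le (by norm_num)).1 h1
    exact (h2.mono_set Set.Ioo_subset_Ioc_self).const_mul _
  apply hdom.integrable.mono hmeas
  filter_upwards [ae_restrict_mem measurableSet_Ioo] with u hu
  obtain ⟨hw1, hw2⟩ := w_mem hc hu
  have hwpos : 0 < c + (c₂ - c) * u := lt_of_le_of_lt h0 hw1
  have hupos : 0 < Real.sqrt u := Real.sqrt_pos.2 hu.1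
  have hscpos : 0 < Real.sqrt (1 - c ^ 2) := Real.sqrt_pos.2 (by nlinarith)
  have hApos : 0 ≤ Real.sqrt (c - c₂) := Real.sqrt_nonneg _
  have hsle : Real.sqrt (1 - c ^ 2) ≤ Real.sqrt (1 - (c + (c₂ - c) * u) ^ 2) :=
    Real.sqrt_le_sqrt (by nlinarith)
  have hrpow : u ^ (-(1:ℝ)/2) = (Real.sqrt u)⁻¹ := by
    rw [show (-(1:ℝ)/2) = -(1/2) by ring, Real.rpow_neg hu.1.le, ← Real.sqrt_eq_rpow]
  have hG : G c₂ c u ≤ Real.sqrt (c - c₂) / (Real.sqrt (1 - c ^ 2) * Real.sqrt u) := by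
    unfold G
    apply div_le_div₀ hApos
    · nlinarith [Real.sqrt_nonneg (c - c₂)]
    · exact mul_pos hscpos hupos
    · calc Real.sqrt (1 - c ^ 2) * Real.sqrt u ≤
          Real.sqrt (1 - (c + (c₂ - c) * u) ^ 2) * Real.sqrt u :=
            mul_le_mul_of_nonneg_right hsle hupos.le
        _ = Real.sqrt u * Real.sqrt (1 - (c + (c₂ - c) * u) ^ 2) := mul_comm _ _
  have hGpos : 0 < G c₂ c u := G_pos h0 hc hc1 hu
  rw [Real.norm_eq_abs, Real.norm_eq_abs, abs_of_pos hGpos, abs_of_nonneg (mul_nonneg (by positivity) (Real.rpow_nonneg hu.1.le _))]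
  rw [hrpow]
  calc G c₂ c u ≤ Real.sqrt (c - c₂) / (Real.sqrt (1 - c ^ 2) * Real.sqrt u) := hG
    _ = Real.sqrt (c - c₂) / Real.sqrt (1 - c ^ 2) * (Real.sqrt u)⁻¹ := by
        rw [div_mul_eq_div_div]
        rw [div_eq_mul_inv (Real.sqrt (c - c₂) / Real.sqrt (1 - c ^ 2))]

/-- The substitution `ψ = arccos (cos x + (cos ψ₂ - cos x) u)`. -/
lemma subst (ψ₂ x : ℝ) (h₂' : ψ₂ ≤ π / 2) (hx0 : 0 < x) (hx2 : x < ψ₂) :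
    (∫ ψ in x..ψ₂, Real.cos ψ / Real.sqrt (Real.cos x - Real.cos ψ)) =
      ∫ u in Set.Ioo (0:ℝ) 1, G (Real.cos ψ₂) (Real.cos x) u := by
  set c₂ : ℝ := Real.cos ψ₂ with hc₂def
  set c : ℝ := Real.cos x with hcdef
  have hπ : (0:ℝ) < π := Real.pi_pos
  have hx2' : x < π / 2 := lt_of_lt_of_le hx2 h₂'
  have hc₂0 : 0 ≤ c₂ := Real.cos_nonneg_of_mem_Icc ⟨by linarith, h₂'⟩
  have hcc : c₂ < c := by
    apply Real.strictAntiOn_cos ⟨hx0.le, by linarith⟩ ⟨by linarith [hx0.trans hx2], by linarith⟩ hx2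
  have hc1 : c < 1 := by
    have := Real.strictAntiOn_cos (Set.left_mem_Icc.2 hπ.le) ⟨hx0.le, by linarith⟩ hx0
    simpa using this
  set φ : ℝ → ℝ := fun u => Real.arccos (c + (c₂ - c) * u) with hφdef
  set φ' : ℝ → ℝ := fun u => (c - c₂) / Real.sqrt (1 - (c + (c₂ - c) * u) ^ 2) with hφ'def
  have hwmem : ∀ u ∈ Set.Ioo (0:ℝ) 1, c + (c₂ - c) * u ∈ Set.Ioo c₂ c := fun u hu =>
    w_mem hcc hu
  have hderiv : ∀ u ∈ Set.Ioo (0:ℝ) 1, HasDerivWithinAt φ (φ' u) (Set.Ioo 0 1) u := by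
    intro u hu
    obtain ⟨hw1, hw2⟩ := hwmem u hu
    have hne1 : c + (c₂ - c) * u ≠ -1 := by nlinarith
    have hne2 : c + (c₂ - c) * u ≠ 1 := by nlinarith
    have hlin : HasDerivAt (fun u : ℝ => c + (c₂ - c) * u) (c₂ - c) u := by
      simpa using ((hasDerivAt_id u).const_mul (c₂ - c)).const_add c
    have := (Real.hasDerivAt_arccos hne1 hne2).comp u hlin
    have heq : -(1 / Real.sqrt (1 - (c + (c₂ - c) * u) ^ 2)) * (c₂ - c) = φ' u := by
      simp only [hφ'def]
      field_simp
      ring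
    rw [heq] at this
    exact this.hasDerivWithinAt
  have hinj : Set.InjOn φ (Set.Ioo 0 1) := by
    have hmono : StrictMonoOn φ (Set.Ioo 0 1) := by
      intro u hu v hv huv
      obtain ⟨hu1, hu2⟩ := hwmem u hu
      obtain ⟨hv1, hv2⟩ := hwmem v hv
      apply Real.strictAntiOn_arccos ⟨by linarith, by linarith⟩ ⟨by linarith, by linarith⟩
      nlinarith [huv]
    exact hmono.injOn
  have himg : φ '' Set.Ioo 0 1 = Set.Ioo x ψ₂ := by
    ext ψ
    constructor
    · rintro ⟨u, hu, rfl⟩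
      obtain ⟨hw1, hw2⟩ := hwmem u hu
      constructor
      · have : Real.arccos c < Real.arccos (c + (c₂ - c) * u) :=
          Real.strictAntiOn_arccos ⟨by linarith, by linarith⟩ ⟨by linarith, hc1.le⟩ hw2
        rwa [hcdef, Real.arccos_cos hx0.le (by linarith)] at this
      · have : Real.arccos (c + (c₂ - c) * u) < Real.arccos c₂ :=
          Real.strictAntiOn_arccos ⟨by linarith, by linarith⟩ ⟨by linarith, by linarith⟩ hw1
        rwa [hc₂def, Real.arccos_cos (by linarith [hx0.trans hx2]) (by linarith)] at this
    · rintro ⟨hψ1, hψ2⟩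
      have hψpos : 0 < ψ := hx0.trans hψ1
      have hcψmem : Real.cos ψ ∈ Set.Ioo c₂ c := by
        constructor
        · exact Real.strictAntiOn_cos ⟨hψpos.le, by linarith⟩
            ⟨by linarith [hψpos], by linarith⟩ hψ2
        · exact Real.strictAntiOn_cos ⟨hx0.le, by linarith⟩ ⟨hψpos.le, by linarith⟩ hψ1
      refine ⟨(c - Real.cos ψ) / (c - c₂), ⟨?_, ?_⟩, ?_⟩
      · apply div_pos (by linarith [hcψmem.2]) (by linarith)
      · rw [div_lt_one (by linarith)]
        linarith [hcψmem.1]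
      · have hne : c - c₂ ≠ 0 := by linarith
        have hw : c + (c₂ - c) * ((c - Real.cos ψ) / (c - c₂)) = Real.cos ψ := by
          field_simp
          ring
        simp only [hφdef, hw]
        exact Real.arccos_cos hψpos.le (by linarith)
  rw [intervalIntegral.integral_of_le hx2.le, MeasureTheory.integral_Ioc_eq_integral_Ioo,
    ← himg,
    MeasureTheory.integral_image_eq_integral_abs_deriv_smul measurableSet_Ioo hderiv hinj]
  apply MeasureTheory.setIntegral_congr_fun measurableSet_Ioo
  intro u hu
  obtain ⟨hw1, hw2⟩ := hwmem u hu
  have hwpos : 0 < c + (c₂ - c) * u := lt_of_le_of_lt hc₂0 hw1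
  have hspos : 0 < Real.sqrt (1 - (c + (c₂ - c) * u) ^ 2) := Real.sqrt_pos.2 (by nlinarith)
  have hupos : 0 < Real.sqrt u := Real.sqrt_pos.2 hu.1
  have hApos : 0 < Real.sqrt (c - c₂) := Real.sqrt_pos.2 (by linarith)
  have hcosφ : Real.cos (φ u) = c + (c₂ - c) * u :=
    Real.cos_arccos (by linarith) (by linarith)
  have hφ'pos : 0 < φ' u := div_pos (by linarith) hspos
  have hcw : c - (c + (c₂ - c) * u) = (c - c₂) * u := by ring
  simp only [smul_eq_mul, abs_of_pos (show 0 < (c - c₂) / Real.sqrt (1 - (c + (c₂ - c) * u) ^ 2) from hφ'pos), hcosφ, hφ'def, G, hcw]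
  rw [Real.sqrt_mul (by linarith : (0:ℝ) ≤ c - c₂) u]
  have hAA : Real.sqrt (c - c₂) * Real.sqrt (c - c₂) = c - c₂ :=
    Real.mul_self_sqrt (by linarith)
  field_simp
  linear_combination (-1 : ℝ) * hAA

end JAux

/-- Appendix 5: for fixed ψ₂ ∈ (0, π/2], the function
`𝒥(ψ₁; ψ₂) = ∫_{ψ₁}^{ψ₂} cos ψ/√(cos ψ₁ - cos ψ) dψ` is strictly decreasing in ψ₁ on (0, ψ₂). -/
theorem J_strictAntiOn (ψ₂ : ℝ) (h₂ : 0 < ψ₂) (h₂' : ψ₂ ≤ π / 2) :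
    StrictAntiOn
      (fun ψ₁ => ∫ ψ in ψ₁..ψ₂, Real.cos ψ / Real.sqrt (Real.cos ψ₁ - Real.cos ψ))
      (Set.Ioo 0 ψ₂) := by
  intro a ha b hb hab
  obtain ⟨ha1, ha2⟩ := ha
  obtain ⟨hb1, hb2⟩ := hb
  have hπ : (0:ℝ) < π := Real.pi_pos
  have hc₂0 : 0 ≤ Real.cos ψ₂ := Real.cos_nonneg_of_mem_Icc ⟨by linarith, h₂'⟩
  have hcb : Real.cos ψ₂ < Real.cos b :=
    Real.strictAntiOn_cos ⟨hb1.le, by linarith⟩ ⟨by linarith [h₂], by linarith⟩ hb2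
  have hcab : Real.cos b < Real.cos a :=
    Real.strictAntiOn_cos ⟨ha1.le, by linarith [ha2, hb2]⟩ ⟨hb1.le, by linarith [hb2]⟩ hab
  have hca1 : Real.cos a < 1 := by
    have := Real.strictAntiOn_cos (Set.left_mem_Icc.2 hπ.le) ⟨ha1.le, by linarith [ha2]⟩ ha1
    simpa using this
  simp only
  rw [JAux.subst ψ₂ a h₂' ha1 ha2, JAux.subst ψ₂ b h₂' hb1 hb2]
  have hIa : MeasureTheory.IntegrableOn (JAux.G (Real.cos ψ₂) (Real.cos a)) (Set.Ioo 0 1) :=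
    JAux.G_integrable hc₂0 (hcb.trans hcab) hca1
  have hIb : MeasureTheory.IntegrableOn (JAux.G (Real.cos ψ₂) (Real.cos b)) (Set.Ioo 0 1) :=
    JAux.G_integrable hc₂0 hcb (hcab.trans hca1)
  have key : 0 < ∫ u in Set.Ioo (0:ℝ) 1,
      (JAux.G (Real.cos ψ₂) (Real.cos a) u - JAux.G (Real.cos ψ₂) (Real.cos b) u) := by
    rw [MeasureTheory.setIntegral_pos_iff_support_of_nonneg_ae]
    · apply lt_of_lt_of_le _ (measure_mono (s := Set.Ioo (0:ℝ) 1) _)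
      · simp
      · intro u hu
        refine ⟨?_, hu⟩
        have := JAux.G_strict_mono hc₂0 hcb hcab hca1 hu
        simp only [Function.mem_support]
        intro h
        rw [sub_eq_zero] at h
        exact absurd h (ne_of_gt this)
    · filter_upwards [MeasureTheory.ae_restrict_mem measurableSet_Ioo] with u hu
      have := JAux.G_strict_mono hc₂0 hcb hcab hca1 hu
      simp only [Pi.zero_apply]
      linarith
    · exact hIa.sub hIb
  have hsub : (∫ u in Set.Ioo (0:ℝ) 1,
      (JAux.G (Real.cos ψ₂) (Real.cos a) u - JAux.G (Real.cos ψ₂) (Real.cos b) u)) =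
      (∫ u in Set.Ioo (0:ℝ) 1, JAux.G (Real.cos ψ₂) (Real.cos a) u) -
      (∫ u in Set.Ioo (0:ℝ) 1, JAux.G (Real.cos ψ₂) (Real.cos b) u) :=
    MeasureTheory.integral_sub hIa hIb
  linarith [key, hsub.symm.le, hsub.le]
end

section
/- For all real numbers s₁, s₂ with −1 < s₁ < s₂ < 0, the function J(s₁) = −∫_{s₁}^{s₂} s/(√(s − s₁)·√(1 − s²)) ds is differentiable in s₁ with derivative ∂J/∂s₁ = s₂/(√(1 − s₂²)·√(s₂ − s₁)) − ∫_{s₁}^{s₂} 1/(√(s − s₁)·(1 − s²)^{3/2}) ds, and this derivative is strictly negative. (Formula (49) of Appendix 5 of the paper.) -/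
set_option maxHeartbeats 1000000

open Real MeasureTheory Set intervalIntegral

lemma rpow_three_halves {x : ℝ} (hx : 0 ≤ x) : x ^ ((3:ℝ)/2) = Real.sqrt x ^ 3 := by
  rw [Real.sqrt_eq_rpow, ← Real.rpow_natCast (x ^ ((1:ℝ)/2)) 3, ← Real.rpow_mul hx]
  norm_num

lemma hasDerivAt_div_sqrt {v : ℝ → ℝ} {vd x : ℝ} (hv : HasDerivAt v vd x)
    (h1 : (v x) ^ 2 < 1) :
    HasDerivAt (fun y => v y / Real.sqrt (1 - v y ^ 2))
      (vd / (1 - v x ^ 2) ^ ((3:ℝ)/2)) x := by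
  have hpos : 0 < 1 - v x ^ 2 := by linarith
  set w := Real.sqrt (1 - v x ^ 2) with hw
  have hwpos : 0 < w := Real.sqrt_pos.2 hpos
  have hw2 : w ^ 2 = 1 - v x ^ 2 := Real.sq_sqrt hpos.le
  have hinner : HasDerivAt (fun y => 1 - v y ^ 2) (-(2 * v x ^ 1 * vd)) x :=
    (hv.pow 2).const_sub 1
  have hsqrt : HasDerivAt (fun y => Real.sqrt (1 - v y ^ 2))
      (1 / (2 * w) * -(2 * v x ^ 1 * vd)) x :=
    (Real.hasDerivAt_sqrt (ne_of_gt hpos)).comp x hinner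
  have hdiv := hv.div hsqrt (ne_of_gt hwpos)
  refine hdiv.congr_deriv ?_
  symm
  rw [rpow_three_halves hpos.le, ← hw]
  field_simp
  linear_combination (-vd) * hw2

lemma subst_sqrt (f : ℝ → ℝ) (t b : ℝ) (ht : t < b) :
    (∫ s in t..b, f s / Real.sqrt (s - t)) =
      ∫ u in (0:ℝ)..1, 2 * Real.sqrt (b - t) * f (t + (b - t) * u ^ 2) := by
  have hd : 0 < b - t := sub_pos.2 ht
  set d := b - t with hdd
  have hsd : 0 < Real.sqrt d := Real.sqrt_pos.2 hd
  have himg : (fun u : ℝ => t + d * u ^ 2) '' Set.Ioo 0 1 = Set.Ioo t b := by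
    ext y
    constructor
    · rintro ⟨u, ⟨hu0, hu1⟩, rfl⟩
      have hq : 0 < u ^ 2 := pow_pos hu0 2
      have hq1 : u ^ 2 < 1 := by nlinarith
      refine ⟨?_, ?_⟩
      · show t < t + d * u ^ 2
        nlinarith [mul_pos hd hq]
      · show t + d * u ^ 2 < b
        nlinarith [mul_lt_mul_of_pos_left hq1 hd]
    · rintro ⟨hy1, hy2⟩
      have hyd : 0 < (y - t) / d := div_pos (by linarith) hd
      refine ⟨Real.sqrt ((y - t) / d), ⟨Real.sqrt_pos.2 hyd, ?_⟩, ?_⟩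
      · have hlt : (y - t) / d < 1 := (div_lt_one hd).2 (by linarith)
        calc Real.sqrt ((y - t) / d) < Real.sqrt 1 := Real.sqrt_lt_sqrt hyd.le hlt
          _ = 1 := Real.sqrt_one
      · simp only
        rw [Real.sq_sqrt hyd.le]
        field_simp
        ring
  have hderiv : ∀ u ∈ Set.Ioo (0:ℝ) 1,
      HasDerivWithinAt (fun u : ℝ => t + d * u ^ 2) (2 * d * u) (Set.Ioo 0 1) u := by
    intro u hu
    have h : HasDerivAt (fun u : ℝ => t + d * u ^ 2) (d * (2 * u ^ 1)) u :=
      ((hasDerivAt_pow 2 u).const_mul d).const_add t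
    have := h.hasDerivWithinAt (s := Set.Ioo 0 1)
    exact this.congr_deriv (by ring)
  have hinj : Set.InjOn (fun u : ℝ => t + d * u ^ 2) (Set.Ioo 0 1) := by
    intro u hu v hv h
    simp only at h
    have h2 : u ^ 2 = v ^ 2 := mul_left_cancel₀ (ne_of_gt hd) (by linarith)
    nlinarith [hu.1, hv.1]
  have key := MeasureTheory.integral_image_eq_integral_abs_deriv_smul measurableSet_Ioo
      hderiv hinj (fun s => f s / Real.sqrt (s - t))
  rw [himg] at key
  rw [intervalIntegral.integral_of_le ht.le, MeasureTheory.integral_Ioc_eq_integral_Ioo, key,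
    intervalIntegral.integral_of_le (zero_le_one), MeasureTheory.integral_Ioc_eq_integral_Ioo]
  apply MeasureTheory.setIntegral_congr_fun measurableSet_Ioo
  intro u hu
  simp only [smul_eq_mul]
  have hu0 : 0 < u := hu.1
  have harg : t + d * u ^ 2 - t = d * u ^ 2 := by ring
  rw [harg, Real.sqrt_mul hd.le, Real.sqrt_sq hu0.le,
    abs_of_pos (by positivity : (0:ℝ) < 2 * d * u)]
  have hsd' : Real.sqrt d * Real.sqrt d = d := Real.mul_self_sqrt hd.le
  field_simp
  linear_combination (-f (t + d * u ^ 2)) * hsd'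

/-- Formula (49) of Appendix 5: for −1 < s₁ < s₂ < 0, the function
`J(t) = −∫_{t}^{s₂} s/(√(s − t)√(1 − s²)) ds` is differentiable at s₁ with derivative
`s₂/(√(1 − s₂²)√(s₂ − s₁)) − ∫_{s₁}^{s₂} ds/(√(s − s₁)(1 − s²)^{3/2})`, and this derivative
is strictly negative. -/
theorem J_hasDerivAt_and_neg (s₁ s₂ : ℝ) (h₁ : -1 < s₁) (h₁₂ : s₁ < s₂) (h₂ : s₂ < 0) :
    HasDerivAt
      (fun t => -∫ s in t..s₂, s / (Real.sqrt (s - t) * Real.sqrt (1 - s ^ 2)))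
      (s₂ / (Real.sqrt (1 - s₂ ^ 2) * Real.sqrt (s₂ - s₁)) -
        ∫ s in s₁..s₂, 1 / (Real.sqrt (s - s₁) * (1 - s ^ 2) ^ ((3 : ℝ) / 2))) s₁ ∧
    s₂ / (Real.sqrt (1 - s₂ ^ 2) * Real.sqrt (s₂ - s₁)) -
        (∫ s in s₁..s₂, 1 / (Real.sqrt (s - s₁) * (1 - s ^ 2) ^ ((3 : ℝ) / 2))) < 0 := by
  have hs2 : (0:ℝ) < 1 - s₂ ^ 2 := by nlinarith
  have hd : 0 < s₂ - s₁ := sub_pos.2 h₁₂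
  have hsd : 0 < Real.sqrt (s₂ - s₁) := Real.sqrt_pos.2 hd
  have hsd2 : Real.sqrt (s₂ - s₁) * Real.sqrt (s₂ - s₁) = s₂ - s₁ := Real.mul_self_sqrt hd.le
  -- ## Negativity of the stated value
  have hInonneg : 0 ≤ ∫ s in s₁..s₂, 1 / (Real.sqrt (s - s₁) * (1 - s ^ 2) ^ ((3 : ℝ) / 2)) := by
    apply intervalIntegral.integral_nonneg h₁₂.le
    intro s hs
    have h1s : (0:ℝ) ≤ 1 - s ^ 2 := by nlinarith [hs.1, hs.2]
    have := Real.rpow_nonneg h1s ((3:ℝ)/2)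
    positivity
  have hAneg : s₂ / (Real.sqrt (1 - s₂ ^ 2) * Real.sqrt (s₂ - s₁)) < 0 :=
    div_neg_of_neg_of_pos h₂ (mul_pos (Real.sqrt_pos.2 hs2) hsd)
  have hNeg : s₂ / (Real.sqrt (1 - s₂ ^ 2) * Real.sqrt (s₂ - s₁)) -
      (∫ s in s₁..s₂, 1 / (Real.sqrt (s - s₁) * (1 - s ^ 2) ^ ((3 : ℝ) / 2))) < 0 := by
    linarith
  refine ⟨?_, hNeg⟩
  -- ## Notation
  set W : ℝ → ℝ := fun u => 1 / (1 - (s₁ + (s₂ - s₁) * u ^ 2) ^ 2) ^ ((3:ℝ)/2) with hW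
  -- ## Step A : rewrite J near s₁
  have hA : ∀ t ∈ Set.Ioo (-1:ℝ) s₂,
      (-∫ s in t..s₂, s / (Real.sqrt (s - t) * Real.sqrt (1 - s ^ 2)))
        = -(2 * Real.sqrt (s₂ - t) *
            ∫ u in (0:ℝ)..1, (t + (s₂ - t) * u ^ 2) /
              Real.sqrt (1 - (t + (s₂ - t) * u ^ 2) ^ 2)) := by
    intro t ht
    have h1 : (∫ s in t..s₂, s / (Real.sqrt (s - t) * Real.sqrt (1 - s ^ 2)))
        = ∫ s in t..s₂, (fun s => s / Real.sqrt (1 - s ^ 2)) s / Real.sqrt (s - t) := by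
      apply intervalIntegral.integral_congr
      intro s _
      simp only
      rw [div_div, mul_comm]
    rw [h1, subst_sqrt _ _ _ ht.2, intervalIntegral.integral_const_mul]
  -- ## Step B : rewrite the stated derivative integral
  have hB : (∫ s in s₁..s₂, 1 / (Real.sqrt (s - s₁) * (1 - s ^ 2) ^ ((3 : ℝ) / 2)))
      = 2 * Real.sqrt (s₂ - s₁) * ∫ u in (0:ℝ)..1, W u := by
    have h1 : (∫ s in s₁..s₂, 1 / (Real.sqrt (s - s₁) * (1 - s ^ 2) ^ ((3 : ℝ) / 2)))
        = ∫ s in s₁..s₂, (fun s => 1 / (1 - s ^ 2) ^ ((3:ℝ)/2)) s / Real.sqrt (s - s₁) := by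
      apply intervalIntegral.integral_congr
      intro s _
      simp only
      rw [div_div, mul_comm]
    rw [h1, subst_sqrt _ _ _ h₁₂, intervalIntegral.integral_const_mul]
  -- ## Step C : differentiation under the integral sign
  set ε : ℝ := min ((s₁ + 1)/2) ((s₂ - s₁)/2) with hε
  have hεpos : 0 < ε := lt_min (by linarith) (by linarith)
  set a₀ : ℝ := (s₁ - 1)/2 with ha₀def
  have ha₀ : -1 < a₀ := by rw [ha₀def]; linarith
  have ha₀0 : a₀ < 0 := by rw [ha₀def]; linarith
  have hm : 0 < 1 - a₀ ^ 2 := by nlinarith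
  have hball : ∀ x ∈ Metric.ball s₁ ε, ∀ u ∈ Set.Icc (0:ℝ) 1,
      a₀ ≤ x + (s₂ - x) * u ^ 2 ∧ x + (s₂ - x) * u ^ 2 ≤ s₂ ∧
        1 - a₀ ^ 2 ≤ 1 - (x + (s₂ - x) * u ^ 2) ^ 2 := by
    intro x hx u hu
    rw [Metric.mem_ball, Real.dist_eq, abs_lt] at hx
    have hε1 : ε ≤ (s₁ + 1)/2 := min_le_left _ _
    have hε2 : ε ≤ (s₂ - s₁)/2 := min_le_right _ _
    have hxa : a₀ < x := by rw [ha₀def]; linarith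
    have hxb : x < s₂ := by linarith
    have hu2 : (0:ℝ) ≤ u ^ 2 := sq_nonneg u
    have hu2' : u ^ 2 ≤ 1 := by nlinarith [hu.1, hu.2]
    have hva : a₀ ≤ x + (s₂ - x) * u ^ 2 := by
      nlinarith [mul_nonneg (sub_nonneg.2 hxa.le) (sub_nonneg.2 hu2'),
        mul_nonneg (sub_nonneg.2 (le_of_lt (lt_trans hxa hxb))) hu2]
    have hvb : x + (s₂ - x) * u ^ 2 ≤ s₂ := by
      nlinarith [mul_nonneg (sub_nonneg.2 hxb.le) (sub_nonneg.2 hu2')]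
    refine ⟨hva, hvb, ?_⟩
    nlinarith [mul_nonneg (sub_nonneg.2 hva) (show (0:ℝ) ≤ -a₀ - (x + (s₂ - x) * u ^ 2) by
      linarith)]
  have hmain := intervalIntegral.hasDerivAt_integral_of_dominated_loc_of_deriv_le
    (F := fun x u => (x + (s₂ - x) * u ^ 2) / Real.sqrt (1 - (x + (s₂ - x) * u ^ 2) ^ 2))
    (F' := fun x u => (1 - u ^ 2) / (1 - (x + (s₂ - x) * u ^ 2) ^ 2) ^ ((3:ℝ)/2))
    (bound := fun _ => 1 / (1 - a₀ ^ 2) ^ ((3:ℝ)/2))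
    (μ := volume) (a := 0) (b := 1) (x₀ := s₁) (Metric.ball_mem_nhds s₁ hεpos)
    ?meas ?int ?meas' ?bound ?boundint ?diff
  case meas =>
    filter_upwards [Metric.ball_mem_nhds s₁ hεpos] with x hx
    have hc : ContinuousOn
        (fun u => (x + (s₂ - x) * u ^ 2) / Real.sqrt (1 - (x + (s₂ - x) * u ^ 2) ^ 2))
        (Set.Ioc 0 1) := by
      apply ContinuousOn.div (by fun_prop) (by fun_prop)
      intro u hu
      have h := (hball x hx u (Set.Ioc_subset_Icc_self hu)).2.2
      exact ne_of_gt (Real.sqrt_pos.2 (by linarith))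
    rw [show Set.uIoc (0:ℝ) 1 = Set.Ioc 0 1 from Set.uIoc_of_le zero_le_one]
    exact hc.aestronglyMeasurable measurableSet_Ioc
  case int =>
    apply ContinuousOn.intervalIntegrable
    rw [Set.uIcc_of_le zero_le_one]
    apply ContinuousOn.div (by fun_prop) (by fun_prop)
    intro u hu
    have h := (hball s₁ (Metric.mem_ball_self hεpos) u hu).2.2
    exact ne_of_gt (Real.sqrt_pos.2 (by linarith))
  case meas' =>
    have hc : ContinuousOn
        (fun u : ℝ => (1 - u ^ 2) / (1 - (s₁ + (s₂ - s₁) * u ^ 2) ^ 2) ^ ((3:ℝ)/2))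
        (Set.Ioc 0 1) := by
      apply ContinuousOn.div (by fun_prop)
        (ContinuousOn.rpow_const (by fun_prop) (fun u hu => Or.inr (by norm_num)))
      intro u hu
      have h := (hball s₁ (Metric.mem_ball_self hεpos) u (Set.Ioc_subset_Icc_self hu)).2.2
      exact ne_of_gt (Real.rpow_pos_of_pos (by linarith) _)
    rw [show Set.uIoc (0:ℝ) 1 = Set.Ioc 0 1 from Set.uIoc_of_le zero_le_one]
    exact hc.aestronglyMeasurable measurableSet_Ioc
  case bound =>
    filter_upwards with u hu x hx
    rw [show Set.uIoc (0:ℝ) 1 = Set.Ioc 0 1 from Set.uIoc_of_le zero_le_one] at hu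
    obtain ⟨hva, hvb, hv1⟩ := hball x hx u (Set.Ioc_subset_Icc_self hu)
    have hnum0 : (0:ℝ) ≤ 1 - u ^ 2 := by nlinarith [hu.1, hu.2]
    have hnum1 : 1 - u ^ 2 ≤ 1 := by nlinarith [sq_nonneg u]
    have hXpos : 0 < (1 - (x + (s₂ - x) * u ^ 2) ^ 2) ^ ((3:ℝ)/2) :=
      Real.rpow_pos_of_pos (by linarith) _
    rw [Real.norm_eq_abs, abs_of_nonneg (div_nonneg hnum0 hXpos.le)]
    exact div_le_div₀ zero_le_one hnum1 (Real.rpow_pos_of_pos hm _)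
      (Real.rpow_le_rpow hm.le hv1 (by norm_num))
  case boundint => exact intervalIntegrable_const
  case diff =>
    filter_upwards with u hu x hx
    rw [show Set.uIoc (0:ℝ) 1 = Set.Ioc 0 1 from Set.uIoc_of_le zero_le_one] at hu
    obtain ⟨hva, hvb, hv1⟩ := hball x hx u (Set.Ioc_subset_Icc_self hu)
    have hv : HasDerivAt (fun x : ℝ => x + (s₂ - x) * u ^ 2) (1 - u ^ 2) x := by
      have h2 := (hasDerivAt_id x).add
        (((hasDerivAt_const x s₂).sub (hasDerivAt_id x)).mul_const (u ^ 2))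
      exact h2.congr_deriv (by ring)
    exact hasDerivAt_div_sqrt hv (by nlinarith)
  obtain ⟨-, hΨd⟩ := hmain
  -- derivative of t ↦ √(s₂ - t) and the product rule
  have hsub : HasDerivAt (fun t : ℝ => s₂ - t) (-1) s₁ := by
    exact ((hasDerivAt_const s₁ s₂).sub (hasDerivAt_id s₁)).congr_deriv (by norm_num)
  have hsq : HasDerivAt (fun t => Real.sqrt (s₂ - t))
      (1 / (2 * Real.sqrt (s₂ - s₁)) * (-1)) s₁ :=
    (Real.hasDerivAt_sqrt (ne_of_gt hd)).comp s₁ hsub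
  have hnice : HasDerivAt (fun t => -(2 * Real.sqrt (s₂ - t) *
      ∫ u in (0:ℝ)..1, (t + (s₂ - t) * u ^ 2) / Real.sqrt (1 - (t + (s₂ - t) * u ^ 2) ^ 2)))
      (-((2 * (1 / (2 * Real.sqrt (s₂ - s₁)) * (-1))) * (∫ u in (0:ℝ)..1,
          (s₁ + (s₂ - s₁) * u ^ 2) / Real.sqrt (1 - (s₁ + (s₂ - s₁) * u ^ 2) ^ 2)) +
        (2 * Real.sqrt (s₂ - s₁)) * ∫ u in (0:ℝ)..1,
          (1 - u ^ 2) / (1 - (s₁ + (s₂ - s₁) * u ^ 2) ^ 2) ^ ((3:ℝ)/2))) s₁ :=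
    ((hsq.const_mul 2).mul hΨd).neg
  -- square bound at the center
  have hvsq : ∀ u ∈ Set.Icc (0:ℝ) 1, (s₁ + (s₂ - s₁) * u ^ 2) ^ 2 < 1 := by
    intro u hu
    have h := (hball s₁ (Metric.mem_ball_self hεpos) u hu).2.2
    nlinarith
  -- integrability facts
  have hWcont : ContinuousOn W (Set.Icc 0 1) := by
    rw [hW]
    apply ContinuousOn.div continuousOn_const
      (ContinuousOn.rpow_const (by fun_prop) ?_) ?_
    · intro u hu
      exact Or.inl (by nlinarith [hvsq u hu])
    · intro u hu
      exact ne_of_gt (Real.rpow_pos_of_pos (by nlinarith [hvsq u hu]) _)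
  have hWint : IntervalIntegrable W volume 0 1 := by
    apply ContinuousOn.intervalIntegrable
    rwa [Set.uIcc_of_le zero_le_one]
  have hu2Wint : IntervalIntegrable (fun u => u ^ 2 * W u) volume 0 1 := by
    apply ContinuousOn.intervalIntegrable
    rw [Set.uIcc_of_le zero_le_one]
    exact ((continuous_pow 2).continuousOn).mul hWcont
  have hQcont : ContinuousOn (fun u => (s₁ + (s₂ - s₁) * u ^ 2) /
      Real.sqrt (1 - (s₁ + (s₂ - s₁) * u ^ 2) ^ 2)) (Set.Icc 0 1) := by
    apply ContinuousOn.div (by fun_prop) (by fun_prop)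
    intro u hu
    exact ne_of_gt (Real.sqrt_pos.2 (by nlinarith [hvsq u hu]))
  have hQint : IntervalIntegrable (fun u => (s₁ + (s₂ - s₁) * u ^ 2) /
      Real.sqrt (1 - (s₁ + (s₂ - s₁) * u ^ 2) ^ 2)) volume 0 1 := by
    apply ContinuousOn.intervalIntegrable
    rwa [Set.uIcc_of_le zero_le_one]
  -- integration by parts identity
  have hQd : ∀ u ∈ Set.uIcc (0:ℝ) 1, HasDerivAt
      (fun u => u * ((s₁ + (s₂ - s₁) * u ^ 2) /
        Real.sqrt (1 - (s₁ + (s₂ - s₁) * u ^ 2) ^ 2)))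
      ((s₁ + (s₂ - s₁) * u ^ 2) / Real.sqrt (1 - (s₁ + (s₂ - s₁) * u ^ 2) ^ 2)
        + 2 * (s₂ - s₁) * (u ^ 2 * W u)) u := by
    intro u hu
    rw [Set.uIcc_of_le zero_le_one] at hu
    have hv : HasDerivAt (fun u : ℝ => s₁ + (s₂ - s₁) * u ^ 2) (2 * (s₂ - s₁) * u) u := by
      have h : HasDerivAt (fun u : ℝ => s₁ + (s₂ - s₁) * u ^ 2) ((s₂ - s₁) * (2 * u ^ 1)) u :=
        ((hasDerivAt_pow 2 u).const_mul (s₂ - s₁)).const_add s₁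
      exact h.congr_deriv (by ring)
    have hQ := hasDerivAt_div_sqrt hv (hvsq u hu)
    have h2 := (hasDerivAt_id u).mul hQ
    refine h2.congr_deriv ?_
    symm
    simp only [hW, id_eq]
    ring
  have hibp : (∫ u in (0:ℝ)..1, ((s₁ + (s₂ - s₁) * u ^ 2) /
        Real.sqrt (1 - (s₁ + (s₂ - s₁) * u ^ 2) ^ 2)
        + 2 * (s₂ - s₁) * (u ^ 2 * W u)))
      = s₂ / Real.sqrt (1 - s₂ ^ 2) := by
    rw [intervalIntegral.integral_eq_sub_of_hasDerivAt hQd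
      (hQint.add ((hu2Wint.const_mul _)))]
    rw [show s₁ + (s₂ - s₁) * (1:ℝ) ^ 2 = s₂ by ring]
    norm_num
  have hsum : (∫ u in (0:ℝ)..1, (s₁ + (s₂ - s₁) * u ^ 2) /
        Real.sqrt (1 - (s₁ + (s₂ - s₁) * u ^ 2) ^ 2))
      + 2 * (s₂ - s₁) * (∫ u in (0:ℝ)..1, u ^ 2 * W u)
      = s₂ / Real.sqrt (1 - s₂ ^ 2) := by
    rw [← intervalIntegral.integral_const_mul,
      ← intervalIntegral.integral_add hQint (hu2Wint.const_mul _)]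
    exact hibp
  have hsplit : (∫ u in (0:ℝ)..1,
        (1 - u ^ 2) / (1 - (s₁ + (s₂ - s₁) * u ^ 2) ^ 2) ^ ((3:ℝ)/2))
      = (∫ u in (0:ℝ)..1, W u) - ∫ u in (0:ℝ)..1, u ^ 2 * W u := by
    rw [← intervalIntegral.integral_sub hWint hu2Wint]
    apply intervalIntegral.integral_congr
    intro u _
    simp only [hW]
    ring
  -- conclusion
  have hfinal : HasDerivAt (fun t => -(2 * Real.sqrt (s₂ - t) *
      ∫ u in (0:ℝ)..1, (t + (s₂ - t) * u ^ 2) / Real.sqrt (1 - (t + (s₂ - t) * u ^ 2) ^ 2)))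
      (s₂ / (Real.sqrt (1 - s₂ ^ 2) * Real.sqrt (s₂ - s₁)) -
        ∫ s in s₁..s₂, 1 / (Real.sqrt (s - s₁) * (1 - s ^ 2) ^ ((3 : ℝ) / 2))) s₁ := by
    convert hnice using 1
    rw [hB, hsplit]
    have e1 : (∫ u in (0:ℝ)..1, (s₁ + (s₂ - s₁) * u ^ 2) /
          Real.sqrt (1 - (s₁ + (s₂ - s₁) * u ^ 2) ^ 2))
        = s₂ / Real.sqrt (1 - s₂ ^ 2) - 2 * (s₂ - s₁) * ∫ u in (0:ℝ)..1, u ^ 2 * W u := by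
      linarith [hsum]
    rw [e1]
    field_simp
    linear_combination (-(2 * Real.sqrt (1 - s₂ ^ 2) *
      ∫ u in (0:ℝ)..1, u ^ 2 * W u)) * hsd2
  exact hfinal.congr_of_eventuallyEq
    (Filter.eventuallyEq_of_mem (Ioo_mem_nhds h₁ h₁₂) hA)
end

section
/- Fix ψ₂ with 0 < ψ₂ ≤ π/2. For every c > 0 there exists a unique ψ₁ ∈ (0, ψ₂) such that ∫_{ψ₁}^{ψ₂} cos ψ/√(cos ψ₁ − cos ψ) dψ = c; that is, ψ₁ ↦ 𝒥(ψ₁; ψ₂) is a bijection from (0, ψ₂) onto (0, ∞). In particular, for every B > 0 the inclination ψ₁⁰ of the barrier II on Π₁ is determined uniquely by the relation 2√(2B) = 𝒥(ψ₁⁰; ψ₂). (The existence-and-uniqueness assertion of Appendix 5 of the paper.) -/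
open Real MeasureTheory Set Filter Topology
open scoped ENNReal

namespace JBaux

noncomputable def h (x : ℝ) : ℝ := x / Real.sqrt (1 - x ^ 2)

noncomputable def phi (b a v : ℝ) : ℝ := h (b + (a - b) * v) / Real.sqrt (1 - v)

noncomputable def K (b a : ℝ) : ℝ := ∫ v in Set.Ioo (0:ℝ) 1, phi b a v

noncomputable def F (b a : ℝ) : ℝ := Real.sqrt (a - b) * K b a

lemma h_nonneg {x : ℝ} (hx : 0 ≤ x) : 0 ≤ h x := div_nonneg hx (Real.sqrt_nonneg _)

lemma h_pos {x : ℝ} (h0 : 0 < x) (h1 : x < 1) : 0 < h x :=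
  div_pos h0 (Real.sqrt_pos.2 (by nlinarith))

lemma h_mono {x y : ℝ} (h0 : 0 ≤ x) (hxy : x ≤ y) (h1 : y < 1) : h x ≤ h y := by
  have hy1 : 0 < 1 - y ^ 2 := by nlinarith
  have hx1 : 1 - y ^ 2 ≤ 1 - x ^ 2 := by nlinarith
  exact div_le_div₀ (by linarith) hxy (Real.sqrt_pos.2 hy1) (Real.sqrt_le_sqrt hx1)

lemma h_contAt {x : ℝ} (h1 : -1 < x) (h2 : x < 1) : ContinuousAt h x := by
  have hx1 : 0 < 1 - x ^ 2 := by nlinarith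
  apply ContinuousAt.div continuousAt_id
  · exact (Real.continuous_sqrt.comp (by continuity)).continuousAt
  · exact (Real.sqrt_pos.2 hx1).ne'

lemma x_mem {b a v : ℝ} (hb0 : 0 ≤ b) (hab : b < a) (hv : v ∈ Set.Ioo (0:ℝ) 1) :
    0 < b + (a - b) * v ∧ b + (a - b) * v ≤ a := by
  obtain ⟨hv0, hv1⟩ := hv
  constructor <;> nlinarith

lemma integrable_bound (c : ℝ) :
    IntegrableOn (fun v => c / Real.sqrt (1 - v)) (Set.Ioo (0:ℝ) 1) := by
  have h1 : IntervalIntegrable (fun x : ℝ => x ^ (-(1/2) : ℝ)) volume 0 1 :=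
    intervalIntegral.intervalIntegrable_rpow' (by norm_num)
  have h2 : IntervalIntegrable (fun v : ℝ => (1 - v) ^ (-(1/2) : ℝ)) volume 0 1 := by
    have := h1.comp_sub_left 1
    simpa using this.symm
  have h3 : IntervalIntegrable (fun v : ℝ => c * (1 - v) ^ (-(1/2) : ℝ)) volume 0 1 :=
    h2.const_mul c
  have h4 : IntegrableOn (fun v : ℝ => c * (1 - v) ^ (-(1/2) : ℝ)) (Set.Ioo (0:ℝ) 1) := by
    rwa [intervalIntegrable_iff_integrableOn_Ioo_of_le (by norm_num)] at h3
  refine h4.congr_fun (fun v hv => ?_) measurableSet_Ioo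
  have hv2 : (0:ℝ) < 1 - v := by linarith [hv.2]
  beta_reduce
  rw [Real.rpow_neg hv2.le, ← Real.sqrt_eq_rpow, div_eq_mul_inv]


section
variable {b : ℝ}

lemma phi_pos (hb0 : 0 ≤ b) {a v : ℝ} (hab : b < a) (ha1 : a < 1)
    (hv : v ∈ Set.Ioo (0:ℝ) 1) : 0 < phi b a v := by
  obtain ⟨hx0, hxa⟩ := x_mem hb0 hab hv
  exact div_pos (h_pos hx0 (by linarith)) (Real.sqrt_pos.2 (by linarith [hv.2]))

lemma phi_le (hb0 : 0 ≤ b) {a a₀ v : ℝ} (hab : b < a) (ha : a ≤ a₀) (ha1 : a₀ < 1)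
    (hv : v ∈ Set.Ioo (0:ℝ) 1) : phi b a v ≤ h a₀ / Real.sqrt (1 - v) := by
  obtain ⟨hx0, hxa⟩ := x_mem hb0 hab hv
  have : h (b + (a - b) * v) ≤ h a₀ := h_mono hx0.le (by linarith) ha1
  have hs : (0:ℝ) < Real.sqrt (1 - v) := Real.sqrt_pos.2 (by linarith [hv.2])
  exact div_le_div_of_nonneg_right this hs.le

lemma phi_contOn (hb0 : 0 ≤ b) {a : ℝ} (hab : b < a) (ha1 : a < 1) :
    ContinuousOn (fun v => phi b a v) (Set.Ioo (0:ℝ) 1) := by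
  intro v hv
  obtain ⟨hx0, hxa⟩ := x_mem hb0 hab hv
  apply ContinuousAt.continuousWithinAt
  apply ContinuousAt.div
  · exact (h_contAt (by linarith) (by linarith)).comp (by fun_prop)
  · exact (Real.continuous_sqrt.comp (by continuity)).continuousAt
  · exact (Real.sqrt_pos.2 (by linarith [hv.2])).ne'

lemma phi_integrableOn (hb0 : 0 ≤ b) {a : ℝ} (hab : b < a) (ha1 : a < 1) :
    IntegrableOn (fun v => phi b a v) (Set.Ioo (0:ℝ) 1) := by
  apply Integrable.mono' (integrable_bound (h a))
  · exact (phi_contOn hb0 hab ha1).aestronglyMeasurable measurableSet_Ioo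
  · filter_upwards [ae_restrict_mem measurableSet_Ioo] with v hv
    rw [Real.norm_of_nonneg (phi_pos hb0 hab ha1 hv).le]
    exact phi_le hb0 hab le_rfl ha1 hv

lemma K_pos (hb0 : 0 ≤ b) {a : ℝ} (hab : b < a) (ha1 : a < 1) : 0 < K b a := by
  rw [K, setIntegral_pos_iff_support_of_nonneg_ae]
  · have hsub : Set.Ioo (0:ℝ) 1 ⊆ (Function.support fun v => phi b a v) ∩ Set.Ioo 0 1 :=
      fun v hv => ⟨(phi_pos hb0 hab ha1 hv).ne', hv⟩
    calc (0:ℝ≥0∞) < volume (Set.Ioo (0:ℝ) 1) := by simp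
      _ ≤ _ := measure_mono hsub
  · filter_upwards [ae_restrict_mem measurableSet_Ioo] with v hv
    exact (phi_pos hb0 hab ha1 hv).le
  · exact phi_integrableOn hb0 hab ha1

lemma K_mono (hb0 : 0 ≤ b) {a a' : ℝ} (hab : b < a) (haa : a ≤ a') (ha1 : a' < 1) :
    K b a ≤ K b a' := by
  apply setIntegral_mono_on (phi_integrableOn hb0 hab (by linarith))
    (phi_integrableOn hb0 (lt_of_lt_of_le hab haa) ha1) measurableSet_Ioo
  intro v hv
  obtain ⟨hx0, hxa⟩ := x_mem hb0 hab hv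
  have hmono : h (b + (a - b) * v) ≤ h (b + (a' - b) * v) := by
    apply h_mono hx0.le _ (by nlinarith [hv.1, hv.2, (x_mem hb0 (lt_of_lt_of_le hab haa) hv).2])
    nlinarith [hv.1]
  exact div_le_div_of_nonneg_right hmono (Real.sqrt_nonneg _)

lemma F_strictMono (hb0 : 0 ≤ b) {a a' : ℝ} (ha : a ∈ Set.Ioo b 1)
    (ha' : a' ∈ Set.Ioo b 1) (hlt : a < a') : F b a < F b a' := by
  have h1 : Real.sqrt (a - b) < Real.sqrt (a' - b) := by
    apply Real.sqrt_lt_sqrt (by linarith [ha.1]) (by linarith)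
  calc F b a = Real.sqrt (a - b) * K b a := rfl
    _ < Real.sqrt (a' - b) * K b a :=
        mul_lt_mul_of_pos_right h1 (K_pos hb0 ha.1 ha.2)
    _ ≤ Real.sqrt (a' - b) * K b a' :=
        mul_le_mul_of_nonneg_left (K_mono hb0 ha.1 hlt.le ha'.2) (Real.sqrt_nonneg _)
    _ = F b a' := rfl

lemma K_contAt (hb0 : 0 ≤ b) {a₀ : ℝ} (ha : a₀ ∈ Set.Ioo b 1) : ContinuousAt (K b) a₀ := by
  obtain ⟨hab, ha1⟩ := ha
  set a₁ := (a₀ + 1) / 2 with ha₁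
  have ha₀1 : a₀ < a₁ := by rw [ha₁]; linarith
  have ha₁1 : a₁ < 1 := by rw [ha₁]; linarith
  have hnb : Set.Ioo b a₁ ∈ 𝓝 a₀ := Ioo_mem_nhds hab ha₀1
  have : ContinuousAt (fun a => ∫ v in Set.Ioo (0:ℝ) 1, phi b a v) a₀ := by
    apply MeasureTheory.continuousAt_of_dominated (bound := fun v => h a₁ / Real.sqrt (1 - v))
    · filter_upwards [hnb] with a ha
      exact (phi_contOn hb0 ha.1 (lt_trans ha.2 ha₁1)).aestronglyMeasurable measurableSet_Ioo
    · filter_upwards [hnb] with a ha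
      filter_upwards [ae_restrict_mem measurableSet_Ioo] with v hv
      rw [Real.norm_of_nonneg (phi_pos hb0 ha.1 (lt_trans ha.2 ha₁1) hv).le]
      exact phi_le hb0 ha.1 ha.2.le ha₁1 hv
    · exact integrable_bound _
    · filter_upwards [ae_restrict_mem measurableSet_Ioo] with v hv
      obtain ⟨hx0, hxa⟩ := x_mem hb0 hab hv
      apply ContinuousAt.div
      · exact (h_contAt (by linarith) (by linarith)).comp (by fun_prop)
      · exact continuousAt_const
      · exact (Real.sqrt_pos.2 (by linarith [hv.2])).ne'
  exact this

lemma F_contAt (hb0 : 0 ≤ b) {a₀ : ℝ} (ha : a₀ ∈ Set.Ioo b 1) : ContinuousAt (F b) a₀ :=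
  ((Real.continuous_sqrt.comp (by continuity)).continuousAt).mul (K_contAt hb0 ha)

lemma K_le (hb0 : 0 ≤ b) {a a₀ : ℝ} (hab : b < a) (ha : a ≤ a₀) (ha1 : a₀ < 1) :
    K b a ≤ ∫ v in Set.Ioo (0:ℝ) 1, h a₀ / Real.sqrt (1 - v) := by
  apply setIntegral_mono_on (phi_integrableOn hb0 hab (lt_of_le_of_lt ha ha1))
    (integrable_bound _) measurableSet_Ioo
  exact fun v hv => phi_le hb0 hab ha ha1 hv

lemma F_lower (hb0 : 0 ≤ b) {a : ℝ} (ha2 : (1 + b) / 2 ≤ a)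
    (ha3 : 3 / 4 ≤ a) (ha1 : a < 1) :
    Real.sqrt ((1 - b) / 2) * ((1 - b) / 8) * Real.log ((1/2) / (1 - a)) ≤ F b a := by
  have hb1 : b < 1 := by linarith
  set d := a - b with hd
  set ε := 1 - a with hε
  have hab : b < a := by linarith
  have hd0 : 0 < d := by rw [hd]; linarith
  have hd1 : d ≤ 1 := by rw [hd]; linarith
  have hε0 : 0 < ε := by rw [hε]; linarith
  have hε4 : ε ≤ 1 / 4 := by rw [hε]; linarith
  have hsub : Set.Ioo (1/2 : ℝ) (1 - ε) ⊆ Set.Ioo (0:ℝ) 1 := by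
    intro v hv; exact ⟨by linarith [hv.1], by linarith [hv.2]⟩
  have hpoint : ∀ v ∈ Set.Ioo (1/2 : ℝ) (1 - ε), d / 4 * (1 / (1 - v)) ≤ phi b a v := by
    intro v hv
    have hv0 : (0:ℝ) < v := by linarith [hv.1]
    have hv1 : v < 1 := by linarith [hv.2]
    have h1v : (0:ℝ) < 1 - v := by linarith
    have hεv : ε ≤ 1 - v := by linarith [hv.2]
    set x := b + (a - b) * v with hx
    have hx0 : 0 < x := by rw [hx]; nlinarith
    have hxa : x ≤ a := by rw [hx]; nlinarith
    have hx1 : x < 1 := by linarith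
    have key : 1 - x ^ 2 ≤ 4 * (1 - v) := by
      have h1x : 1 - x = ε + d * (1 - v) := by rw [hx, hε, hd]; ring
      nlinarith [hx0]
    have hs1 : Real.sqrt (1 - x ^ 2) ≤ 2 * Real.sqrt (1 - v) := by
      rw [show (2:ℝ) = Real.sqrt 4 by
        rw [show (4:ℝ) = 2^2 by norm_num, Real.sqrt_sq (by norm_num : (0:ℝ) ≤ 2)],
        ← Real.sqrt_mul (by norm_num : (0:ℝ) ≤ 4)]
      exact Real.sqrt_le_sqrt key
    have hsv : 0 < Real.sqrt (1 - v) := Real.sqrt_pos.2 h1v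
    have h2 : phi b a v = x / (Real.sqrt (1 - x ^ 2) * Real.sqrt (1 - v)) := by
      rw [phi, JBaux.h, ← hx, div_div]
    rw [h2]
    have hxd : d / 2 ≤ x := by rw [hx]; nlinarith [hv.1]
    have hden : Real.sqrt (1 - x ^ 2) * Real.sqrt (1 - v) ≤ 2 * (1 - v) := by
      calc Real.sqrt (1 - x ^ 2) * Real.sqrt (1 - v)
          ≤ 2 * Real.sqrt (1 - v) * Real.sqrt (1 - v) :=
            mul_le_mul_of_nonneg_right hs1 hsv.le
        _ = 2 * (1 - v) := by rw [mul_assoc, Real.mul_self_sqrt h1v.le]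
    have hx2 : (0:ℝ) < 1 - x ^ 2 := by nlinarith
    have hrw : d / 4 * (1 / (1 - v)) = (d / 2) / (2 * (1 - v)) := by
      field_simp
      ring
    rw [hrw]
    exact div_le_div₀ hx0.le hxd (mul_pos (Real.sqrt_pos.2 hx2) hsv) hden
  have hIlt : (1:ℝ)/2 < 1 - ε := by linarith
  have hint : (∫ v in Set.Ioo (1/2 : ℝ) (1 - ε), d / 4 * (1 / (1 - v)))
      = d / 4 * Real.log ((1/2) / ε) := by
    rw [← MeasureTheory.integral_Ioc_eq_integral_Ioo,
      ← intervalIntegral.integral_of_le hIlt.le, intervalIntegral.integral_const_mul]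
    congr 1
    have hc := intervalIntegral.integral_comp_sub_left (a := 1/2) (b := 1 - ε)
      (fun u : ℝ => 1 / u) 1
    have he1 : (1:ℝ) - (1 - ε) = ε := by ring
    have he2 : (1:ℝ) - 1/2 = 1/2 := by norm_num
    rw [he1, he2] at hc
    rw [hc]
    apply integral_one_div
    intro hmem
    rcases hmem with ⟨hlo, hhi⟩
    have : (0:ℝ) < min ε (1/2) := by positivity
    simp only [inf_le_iff] at hlo
    rcases hlo with h' | h' <;> linarith
  have hcont : ContinuousOn (fun v : ℝ => d / 4 * (1 / (1 - v))) (Set.Icc (1/2 : ℝ) (1 - ε)) := by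
    apply continuousOn_const.mul
    apply continuousOn_const.div (continuousOn_const.sub continuousOn_id)
    intro v hv
    show (1:ℝ) - v ≠ 0
    have h2v := hv.2
    intro hzero
    linarith
  have hchain : d / 4 * Real.log ((1/2)/ε) ≤ K b a := by
    rw [← hint]
    calc (∫ v in Set.Ioo (1/2:ℝ) (1-ε), d / 4 * (1/(1-v)))
        ≤ ∫ v in Set.Ioo (1/2:ℝ) (1-ε), phi b a v := by
          apply setIntegral_mono_on
            ((hcont.integrableOn_Icc).mono_set Set.Ioo_subset_Icc_self)
            ((phi_integrableOn hb0 hab ha1).mono_set hsub) measurableSet_Ioo hpoint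
      _ ≤ K b a := by
          apply setIntegral_mono_set (phi_integrableOn hb0 hab ha1)
          · filter_upwards [ae_restrict_mem measurableSet_Ioo] with v hv
            exact (phi_pos hb0 hab ha1 hv).le
          · exact HasSubset.Subset.eventuallyLE hsub
  have hlog0 : 0 ≤ Real.log ((1/2)/ε) := by
    apply Real.log_nonneg
    rw [le_div_iff₀ hε0]; linarith
  have hd2 : (1 - b)/2 ≤ d := by rw [hd]; linarith
  have hsd : Real.sqrt ((1-b)/2) ≤ Real.sqrt d := Real.sqrt_le_sqrt hd2
  calc Real.sqrt ((1-b)/2) * ((1-b)/8) * Real.log ((1/2)/ε)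
      = Real.sqrt ((1-b)/2) * (((1-b)/2)/4 * Real.log ((1/2)/ε)) := by ring
    _ ≤ Real.sqrt d * (d/4 * Real.log ((1/2)/ε)) := by
        apply mul_le_mul hsd ?_ ?_ (Real.sqrt_nonneg _)
        · exact mul_le_mul_of_nonneg_right (by linarith) hlog0
        · exact mul_nonneg (by linarith) hlog0
    _ ≤ Real.sqrt d * K b a := mul_le_mul_of_nonneg_left hchain (Real.sqrt_nonneg _)
    _ = F b a := rfl

variable {b : ℝ}

lemma F_mono (hb0 : 0 ≤ b) {a a' : ℝ} (ha : a ∈ Set.Ioo b 1)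
    (ha' : a' ∈ Set.Ioo b 1) (hle : a ≤ a') : F b a ≤ F b a' := by
  rcases eq_or_lt_of_le hle with rfl | hlt
  · exact le_rfl
  · exact (F_strictMono hb0 ha ha' hlt).le

lemma F_exists (hb0 : 0 ≤ b) (hb1 : b < 1) {c : ℝ} (hc : 0 < c) :
    ∃ a ∈ Set.Ioo b 1, F b a = c := by
  -- lower point
  set a₀ : ℝ := (1 + b) / 2 with ha₀def
  have ha₀ : b < a₀ ∧ a₀ < 1 := ⟨by rw [ha₀def]; linarith, by rw [ha₀def]; linarith⟩
  set M : ℝ := ∫ v in Set.Ioo (0:ℝ) 1, h a₀ / Real.sqrt (1 - v) with hMdef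
  have hM0 : 0 ≤ M := by
    apply setIntegral_nonneg measurableSet_Ioo
    intro v hv
    exact div_nonneg (h_nonneg (by rw [ha₀def]; linarith)) (Real.sqrt_nonneg _)
  set δ : ℝ := min ((c / (M + 1)) ^ 2) ((1 - b) / 4) with hδdef
  have hδ0 : 0 < δ := lt_min (by positivity) (by linarith)
  set aL : ℝ := b + δ with haLdef
  have haL : b < aL ∧ aL ≤ a₀ := by
    constructor
    · rw [haLdef]; linarith
    · rw [haLdef, ha₀def]
      have := min_le_right ((c / (M + 1)) ^ 2) ((1 - b) / 4)
      rw [← hδdef] at this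
      linarith
  have haL1 : aL < 1 := lt_of_le_of_lt haL.2 ha₀.2
  have hFlo : F b aL < c := by
    have hK : K b aL ≤ M := K_le hb0 haL.1 haL.2 ha₀.2
    have hs : Real.sqrt (aL - b) ≤ c / (M + 1) := by
      rw [haLdef, add_sub_cancel_left]
      calc Real.sqrt δ ≤ Real.sqrt ((c / (M + 1)) ^ 2) :=
            Real.sqrt_le_sqrt (min_le_left _ _)
        _ = c / (M + 1) := Real.sqrt_sq (by positivity)
    calc F b aL = Real.sqrt (aL - b) * K b aL := rfl
      _ ≤ (c / (M + 1)) * M := by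
          apply mul_le_mul hs hK ?_ (by positivity)
          exact (K_pos hb0 haL.1 haL1).le
      _ < c := by
          rw [div_mul_eq_mul_div, div_lt_iff₀ (by linarith)]
          nlinarith
  -- upper point
  set c₀ : ℝ := Real.sqrt ((1 - b) / 2) * ((1 - b) / 8) with hc₀def
  have hc₀ : 0 < c₀ := mul_pos (Real.sqrt_pos.2 (by linarith)) (by linarith)
  set ε : ℝ := min (1 / 2 * Real.exp (-(c / c₀ + 1))) (min ((1 - b) / 2) (1 / 4)) with hεdef
  have hε0 : 0 < ε := lt_min (by positivity) (lt_min (by linarith) (by norm_num))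
  set aH : ℝ := 1 - ε with haHdef
  have hεb : ε ≤ (1 - b) / 2 := le_trans (min_le_right _ _) (min_le_left _ _)
  have hε4 : ε ≤ 1 / 4 := le_trans (min_le_right _ _) (min_le_right _ _)
  have hεe : ε ≤ 1 / 2 * Real.exp (-(c / c₀ + 1)) := min_le_left _ _
  have haH2 : (1 + b) / 2 ≤ aH := by rw [haHdef]; linarith
  have haH3 : 3 / 4 ≤ aH := by rw [haHdef]; linarith
  have haH1 : aH < 1 := by rw [haHdef]; linarith
  have haHb : b < aH := by rw [haHdef]; linarith
  have hFhi : c < F b aH := by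
    have hlog : c / c₀ + 1 ≤ Real.log ((1 / 2) / (1 - aH)) := by
      rw [haHdef, show (1:ℝ) - (1 - ε) = ε by ring]
      rw [Real.le_log_iff_exp_le (by positivity)]
      rw [le_div_iff₀ hε0]
      calc Real.exp (c / c₀ + 1) * ε
          ≤ Real.exp (c / c₀ + 1) * (1 / 2 * Real.exp (-(c / c₀ + 1))) := by
            apply mul_le_mul_of_nonneg_left hεe (Real.exp_nonneg _)
        _ = 1 / 2 := by rw [← mul_assoc, mul_comm (Real.exp _), mul_assoc, ← Real.exp_add, show c / c₀ + 1 + -(c / c₀ + 1) = 0 by ring, Real.exp_zero, mul_one]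
    have := F_lower hb0 haH2 haH3 haH1
    calc c < c₀ * (c / c₀ + 1) := by
          rw [mul_add, mul_one, mul_div_cancel₀ _ hc₀.ne']
          linarith
      _ ≤ c₀ * Real.log ((1 / 2) / (1 - aH)) := by
          apply mul_le_mul_of_nonneg_left hlog hc₀.le
      _ ≤ F b aH := by rw [hc₀def]; exact this
  -- aL < aH
  have hLH : aL < aH := by
    by_contra hcon
    push_neg at hcon
    have : F b aH ≤ F b aL := F_mono hb0 ⟨haHb, haH1⟩ ⟨haL.1, haL1⟩ hcon
    linarith
  -- IVT
  have hsub : Set.Icc aL aH ⊆ Set.Ioo b 1 := fun x hx =>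
    ⟨lt_of_lt_of_le haL.1 hx.1, lt_of_le_of_lt hx.2 haH1⟩
  have hcont : ContinuousOn (F b) (Set.Icc aL aH) := fun x hx =>
    (F_contAt hb0 (hsub hx)).continuousWithinAt
  have hIVT := intermediate_value_Ioo hLH.le hcont
  obtain ⟨x, hx, hfx⟩ := hIVT ⟨hFlo, hFhi⟩
  exact ⟨x, ⟨lt_trans haL.1 hx.1, lt_trans hx.2 haH1⟩, hfx⟩

lemma F_pos (hb0 : 0 ≤ b) {a : ℝ} (ha : a ∈ Set.Ioo b 1) : 0 < F b a :=
  mul_pos (Real.sqrt_pos.2 (by linarith [ha.1])) (K_pos hb0 ha.1 ha.2)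

lemma J_eq {ψ₁ ψ₂ : ℝ} (h₂' : ψ₂ ≤ π / 2) (hψ : ψ₁ ∈ Set.Ioo 0 ψ₂) :
    (∫ ψ in ψ₁..ψ₂, Real.cos ψ / Real.sqrt (Real.cos ψ₁ - Real.cos ψ))
      = F (Real.cos ψ₂) (Real.cos ψ₁) := by
  obtain ⟨hψ0, hψ12⟩ := hψ
  have hπ : (0:ℝ) < π := Real.pi_pos
  have hψ2π : ψ₂ ≤ π := le_trans h₂' (by linarith)
  set b := Real.cos ψ₂ with hbdef
  set a := Real.cos ψ₁ with hadef
  have hb0 : 0 ≤ b := Real.cos_nonneg_of_mem_Icc ⟨by linarith, h₂'⟩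
  have hba : b < a := Real.cos_lt_cos_of_nonneg_of_le_pi hψ0.le hψ2π hψ12
  have ha1 : a < 1 := by
    have := Real.cos_lt_cos_of_nonneg_of_le_pi le_rfl (by linarith) hψ0
    simpa using this
  set d := a - b with hddef
  have hd0 : 0 < d := by rw [hddef]; linarith
  set f : ℝ → ℝ := fun v => Real.arccos (b + d * v) with hfdef
  set g : ℝ → ℝ := fun ψ => Real.cos ψ / Real.sqrt (a - Real.cos ψ) with hgdef
  set f' : ℝ → ℝ := fun v => -(d / Real.sqrt (1 - (b + d * v) ^ 2)) with hf'def
  have hxbnd : ∀ v ∈ Set.Ioo (0:ℝ) 1, b < b + d * v ∧ b + d * v < a := by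
    intro v hv
    constructor <;> nlinarith [hv.1, hv.2]
  have hderiv : ∀ v ∈ Set.Ioo (0:ℝ) 1,
      HasDerivWithinAt f (f' v) (Set.Ioo (0:ℝ) 1) v := by
    intro v hv
    obtain ⟨hx1, hx2⟩ := hxbnd v hv
    have haff : HasDerivAt (fun v : ℝ => b + d * v) d v := by
      simpa using ((hasDerivAt_id v).const_mul d).const_add b
    have harc : HasDerivAt Real.arccos
        (-(1 / Real.sqrt (1 - (b + d * v) ^ 2))) (b + d * v) :=
      Real.hasDerivAt_arccos (by intro hc; rw [hc] at hx1; linarith)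
        (by intro hc; rw [hc] at hx2; linarith)
    have := harc.comp v haff
    apply HasDerivAt.hasDerivWithinAt
    rw [show f' v = -(1 / Real.sqrt (1 - (b + d * v) ^ 2)) * d by simp only [hf'def]; ring]
    exact this
  have hinj : Set.InjOn f (Set.Ioo (0:ℝ) 1) := by
    intro v₁ hv₁ v₂ hv₂ heq
    obtain ⟨h11, h12⟩ := hxbnd v₁ hv₁
    obtain ⟨h21, h22⟩ := hxbnd v₂ hv₂
    have := Real.arccos_injOn ⟨by linarith, by linarith⟩ ⟨by linarith, by linarith⟩ heq
    have hdv : d * v₁ = d * v₂ := by linarith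
    exact mul_left_cancel₀ hd0.ne' hdv
  have himg : f '' Set.Ioo 0 1 = Set.Ioo ψ₁ ψ₂ := by
    ext ψ
    constructor
    · rintro ⟨v, hv, rfl⟩
      obtain ⟨hx1, hx2⟩ := hxbnd v hv
      constructor
      · have h1 : Real.arccos a < Real.arccos (b + d * v) :=
          strictAntiOn_arccos ⟨by linarith, by linarith⟩ ⟨by linarith, ha1.le⟩ hx2
        rwa [hadef, Real.arccos_cos hψ0.le (by linarith)] at h1
      · have h1 : Real.arccos (b + d * v) < Real.arccos b :=
          strictAntiOn_arccos ⟨by linarith, by linarith⟩ ⟨by linarith, by linarith⟩ hx1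
        rwa [hbdef, Real.arccos_cos (by linarith) hψ2π] at h1
    · rintro ⟨h1, h2⟩
      have hψpos : 0 < ψ := lt_trans hψ0 h1
      have hψpi : ψ ≤ π := le_trans h2.le hψ2π
      have hc1 : Real.cos ψ < a := Real.cos_lt_cos_of_nonneg_of_le_pi hψ0.le hψpi h1
      have hc2 : b < Real.cos ψ := Real.cos_lt_cos_of_nonneg_of_le_pi hψpos.le hψ2π h2
      refine ⟨(Real.cos ψ - b) / d, ⟨div_pos (by linarith) hd0,
        (div_lt_one hd0).2 (by linarith)⟩, ?_⟩
      show Real.arccos (b + d * ((Real.cos ψ - b) / d)) = ψ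
      rw [show b + d * ((Real.cos ψ - b) / d) = Real.cos ψ by field_simp; ring]
      exact Real.arccos_cos hψpos.le hψpi
  have key := MeasureTheory.integral_image_eq_integral_abs_deriv_smul
    measurableSet_Ioo hderiv hinj g
  rw [himg] at key
  have hLHS : (∫ ψ in ψ₁..ψ₂, Real.cos ψ / Real.sqrt (a - Real.cos ψ))
      = ∫ ψ in Set.Ioo ψ₁ ψ₂, g ψ := by
    rw [intervalIntegral.integral_of_le hψ12.le, MeasureTheory.integral_Ioc_eq_integral_Ioo]
  have hRHS : (∫ v in Set.Ioo (0:ℝ) 1, |f' v| • g (f v))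
      = ∫ v in Set.Ioo (0:ℝ) 1, Real.sqrt d * phi b a v := by
    apply MeasureTheory.setIntegral_congr_fun measurableSet_Ioo
    intro v hv
    obtain ⟨hx1, hx2⟩ := hxbnd v hv
    have hv1 : v < 1 := hv.2
    have h1v : (0:ℝ) < 1 - v := by linarith
    have hx2' : (0:ℝ) < 1 - (b + d * v) ^ 2 := by nlinarith
    have hs1 : (0:ℝ) < Real.sqrt (1 - (b + d * v) ^ 2) := Real.sqrt_pos.2 hx2'
    have hsv : (0:ℝ) < Real.sqrt (1 - v) := Real.sqrt_pos.2 h1v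
    have hsd : Real.sqrt d * Real.sqrt d = d := Real.mul_self_sqrt hd0.le
    have hsd0 : (0:ℝ) < Real.sqrt d := Real.sqrt_pos.2 hd0
    have habs : |f' v| = d / Real.sqrt (1 - (b + d * v) ^ 2) := by
      rw [hf'def, abs_neg, abs_of_nonneg (div_nonneg hd0.le (Real.sqrt_nonneg _))]
    have hgf : g (f v) = (b + d * v) / Real.sqrt (d * (1 - v)) := by
      rw [hgdef, hfdef]
      simp only []
      rw [Real.cos_arccos (by linarith) (by linarith)]
      congr 2
      rw [hddef]; ring
    show |f' v| • g (f v) = Real.sqrt d * phi b a v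
    rw [smul_eq_mul, habs, hgf, phi, JBaux.h, Real.sqrt_mul hd0.le, ← hddef, div_div,
      div_mul_div_comm]
    have halg : d * (b + d * v) /
        (Real.sqrt (1 - (b + d * v) ^ 2) * (Real.sqrt d * Real.sqrt (1 - v)))
        = (d / Real.sqrt d) *
          ((b + d * v) / (Real.sqrt (1 - (b + d * v) ^ 2) * Real.sqrt (1 - v))) := by
      rw [div_mul_div_comm]
      rw [div_eq_div_iff (by positivity) (by positivity)]
      ring
    rw [halg, Real.div_sqrt]
  rw [hadef] at hLHS
  rw [hLHS, key, hRHS, MeasureTheory.integral_const_mul]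
  rfl

end
end JBaux

/-- Appendix 5, existence and uniqueness: for fixed ψ₂ ∈ (0, π/2], the map
`ψ₁ ↦ 𝒥(ψ₁; ψ₂) = ∫_{ψ₁}^{ψ₂} cos ψ/√(cos ψ₁ − cos ψ) dψ` is a bijection from (0, ψ₂)
onto (0, ∞); in particular, for every B > 0 the inclination ψ₁⁰ of the barrier II on Π₁ is
determined uniquely by `2√(2B) = 𝒥(ψ₁⁰; ψ₂)`. -/
theorem J_bijective (ψ₂ : ℝ) (h₂ : 0 < ψ₂) (h₂' : ψ₂ ≤ π / 2) :
    (∀ c : ℝ, 0 < c → ∃! ψ₁ : ℝ, ψ₁ ∈ Set.Ioo 0 ψ₂ ∧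
        (∫ ψ in ψ₁..ψ₂, Real.cos ψ / Real.sqrt (Real.cos ψ₁ - Real.cos ψ)) = c) ∧
    Set.BijOn
      (fun ψ₁ => ∫ ψ in ψ₁..ψ₂, Real.cos ψ / Real.sqrt (Real.cos ψ₁ - Real.cos ψ))
      (Set.Ioo 0 ψ₂) (Set.Ioi 0) ∧
    ∀ B : ℝ, 0 < B → ∃! ψ₁ : ℝ, ψ₁ ∈ Set.Ioo 0 ψ₂ ∧
      2 * Real.sqrt (2 * B) =
        ∫ ψ in ψ₁..ψ₂, Real.cos ψ / Real.sqrt (Real.cos ψ₁ - Real.cos ψ) := by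
  have hπ : (0:ℝ) < π := Real.pi_pos
  set b := Real.cos ψ₂ with hbdef
  have hb0 : 0 ≤ b := Real.cos_nonneg_of_mem_Icc ⟨by linarith, h₂'⟩
  have hb1 : b < 1 := by
    have := Real.cos_lt_cos_of_nonneg_of_le_pi le_rfl (by linarith) h₂
    simpa [hbdef] using this
  have hcosmem : ∀ ψ ∈ Set.Ioo 0 ψ₂, Real.cos ψ ∈ Set.Ioo b 1 := by
    intro ψ hψ
    constructor
    · exact Real.cos_lt_cos_of_nonneg_of_le_pi hψ.1.le (by linarith) hψ.2
    · have := Real.cos_lt_cos_of_nonneg_of_le_pi le_rfl (by linarith [hψ.2]) hψ.1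
      simpa using this
  have hanti : StrictAntiOn
      (fun ψ₁ => ∫ ψ in ψ₁..ψ₂, Real.cos ψ / Real.sqrt (Real.cos ψ₁ - Real.cos ψ))
      (Set.Ioo 0 ψ₂) := by
    intro x hx y hy hxy
    dsimp only
    rw [JBaux.J_eq h₂' hx, JBaux.J_eq h₂' hy]
    exact JBaux.F_strictMono hb0 (hcosmem y hy) (hcosmem x hx)
      (Real.cos_lt_cos_of_nonneg_of_le_pi hx.1.le (by linarith [hy.2]) hxy)
  have hexist : ∀ c : ℝ, 0 < c → ∃ ψ₁ ∈ Set.Ioo 0 ψ₂,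
      (∫ ψ in ψ₁..ψ₂, Real.cos ψ / Real.sqrt (Real.cos ψ₁ - Real.cos ψ)) = c := by
    intro c hc
    obtain ⟨a, ha, hfa⟩ := JBaux.F_exists hb0 hb1 hc
    have hψmem : Real.arccos a ∈ Set.Ioo 0 ψ₂ := by
      constructor
      · exact Real.arccos_pos.2 ha.2
      · have h1 : Real.arccos a < Real.arccos b :=
          Real.strictAntiOn_arccos ⟨by linarith, hb1.le⟩ ⟨by linarith [ha.1], ha.2.le⟩ ha.1
        rwa [hbdef, Real.arccos_cos (by linarith) (by linarith)] at h1
    refine ⟨Real.arccos a, hψmem, ?_⟩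
    rw [JBaux.J_eq h₂' hψmem, Real.cos_arccos (by linarith [ha.1]) ha.2.le]
    exact hfa
  have hEU : ∀ c : ℝ, 0 < c → ∃! ψ₁ : ℝ, ψ₁ ∈ Set.Ioo 0 ψ₂ ∧
      (∫ ψ in ψ₁..ψ₂, Real.cos ψ / Real.sqrt (Real.cos ψ₁ - Real.cos ψ)) = c := by
    intro c hc
    obtain ⟨ψ₁, hmem, heq⟩ := hexist c hc
    refine ⟨ψ₁, ⟨hmem, heq⟩, ?_⟩
    rintro y ⟨hy, hyeq⟩
    exact hanti.injOn hy hmem (by rw [hyeq, heq])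
  refine ⟨hEU, ⟨?_, hanti.injOn, ?_⟩, ?_⟩
  · intro ψ hψ
    dsimp only
    rw [Set.mem_Ioi, JBaux.J_eq h₂' hψ]
    exact JBaux.F_pos hb0 (hcosmem ψ hψ)
  · intro c hc
    obtain ⟨ψ₁, hmem, heq⟩ := hexist c hc
    exact ⟨ψ₁, hmem, heq⟩
  · intro B hB
    have hc : 0 < 2 * Real.sqrt (2 * B) :=
      mul_pos two_pos (Real.sqrt_pos.2 (by linarith))
    obtain ⟨ψ₁, h1, h2⟩ := hEU _ hc
    refine ⟨ψ₁, ⟨h1.1, h1.2.symm⟩, ?_⟩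
    rintro y ⟨hy, hyeq⟩
    exact h2 y ⟨hy, hyeq.symm⟩
end

section
/- Let B > 0, let 0 < γ₂ < π/2, and let (U, ψ) be a solution of the capillary ODE system with parameter B on [−1, 1] such that U(1) > 0 and cos ψ(ξ) ≥ cos ψ(1) for every ξ ∈ [−1, 1]. Set λ = sin ψ(1) − sin ψ(−1) and assume λ > 0. Then U(ξ)² ≤ U(1)² for all ξ, and λ² ≤ 4B²·U(1)². Consequently, if λ²/(4B) ≥ 2(1 − sin γ₂), then the meniscus height on Π₂ satisfies U(1) ≥ √((2/B)(1 − sin γ₂)), which is the height of the zero-force barrier I on Π₂. (Estimates (24), (26), (27) of the paper: for all sufficiently small separations the meniscus lies above the barrier I and the configuration is attracting.) -/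
open Real Set

/-- Estimates (24), (26), (27): if the maximum of cos ψ is attained at ξ = 1 (on Π₂) with
U(1) > 0, then U² ≤ U(1)² throughout and λ² ≤ 4B²U(1)²; consequently if λ²/(4B) ≥ 2(1 − sin γ₂)
the meniscus height on Π₂ is at least that of the zero-force barrier I,
namely √((2/B)(1 − sin γ₂)). -/
theorem capillary_above_barrier_I
    (B : ℝ) (hB : 0 < B) (γ₂ : ℝ) (hγ₂ : 0 < γ₂) (hγ₂' : γ₂ < π / 2)
    (U ψ : ℝ → ℝ) (h : IsCapillarySol B (Set.Icc (-1) 1) U ψ)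
    (hU1 : 0 < U 1)
    (hcos : ∀ ξ ∈ Set.Icc (-1 : ℝ) 1, Real.cos (ψ ξ) ≥ Real.cos (ψ 1))
    (lam : ℝ) (hlam : lam = Real.sin (ψ 1) - Real.sin (ψ (-1))) (hlampos : 0 < lam) :
    (∀ ξ ∈ Set.Icc (-1 : ℝ) 1, U ξ ^ 2 ≤ U 1 ^ 2) ∧
    lam ^ 2 ≤ 4 * B ^ 2 * U 1 ^ 2 ∧
    (lam ^ 2 / (4 * B) ≥ 2 * (1 - Real.sin γ₂) →
      U 1 ≥ Real.sqrt (2 / B * (1 - Real.sin γ₂))) := by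
  have hmem1 : (1 : ℝ) ∈ Set.Icc (-1 : ℝ) 1 := by constructor <;> norm_num
  have hmemm1 : (-1 : ℝ) ∈ Set.Icc (-1 : ℝ) 1 := by constructor <;> norm_num
  -- cos ψ positive on the interval
  have hcpos : ∀ ξ ∈ Set.Icc (-1 : ℝ) 1, 0 < Real.cos (ψ ξ) := fun ξ hξ =>
    Real.cos_pos_of_mem_Ioo (h ξ hξ).1
  set s : ℝ → ℝ := fun t => Real.sin (ψ t) with hsdef
  have hsq : ∀ ξ ∈ Set.Icc (-1 : ℝ) 1, 1 - s ξ ^ 2 = Real.cos (ψ ξ) ^ 2 := by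
    intro ξ hξ
    have := Real.sin_sq_add_cos_sq (ψ ξ)
    simp only [hsdef]
    linarith
  have hc : ∀ ξ ∈ Set.Icc (-1 : ℝ) 1, Real.sqrt (1 - s ξ ^ 2) = Real.cos (ψ ξ) := by
    intro ξ hξ
    rw [hsq ξ hξ, Real.sqrt_sq (le_of_lt (hcpos ξ hξ))]
  set E : ℝ → ℝ := fun t => Real.sqrt (1 - s t ^ 2) + B / 2 * U t ^ 2 with hEdef
  -- the first integral has zero derivative
  have hE' : ∀ ξ ∈ Set.Icc (-1 : ℝ) 1, HasDerivAt E 0 ξ := by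
    intro ξ hξ
    obtain ⟨hψmem, hds, hdU⟩ := h ξ hξ
    have hcp := hcpos ξ hξ
    have hne : 1 - s ξ ^ 2 ≠ 0 := by
      rw [hsq ξ hξ]; positivity
    have h1 : HasDerivAt (fun t => 1 - s t ^ 2) (-(2 * s ξ * (B * U ξ))) ξ := by
      have h2 : HasDerivAt (fun t => s t ^ 2) (2 * s ξ ^ 1 * (B * U ξ)) ξ := hds.pow 2
      have := (hasDerivAt_const ξ (1 : ℝ)).sub h2
      exact this.congr_deriv (by ring)
    have hsqrt : HasDerivAt (fun t => Real.sqrt (1 - s t ^ 2))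
        (1 / (2 * Real.sqrt (1 - s ξ ^ 2)) * (-(2 * s ξ * (B * U ξ)))) ξ :=
      (Real.hasDerivAt_sqrt hne).comp ξ h1
    have hU2 : HasDerivAt (fun t => B / 2 * U t ^ 2)
        (B / 2 * (2 * U ξ ^ 1 * Real.tan (ψ ξ))) ξ := (hdU.pow 2).const_mul (B / 2)
    have hsum := hsqrt.add hU2
    refine hsum.congr_deriv ?_
    rw [hc ξ hξ, Real.tan_eq_sin_div_cos]
    field_simp
    ring
  -- E is constant
  have hconst : ∀ ξ ∈ Set.Icc (-1 : ℝ) 1, E ξ = E 1 := by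
    intro ξ hξ
    have : ‖E 1 - E ξ‖ ≤ 0 * ‖(1 : ℝ) - ξ‖ := by
      apply Convex.norm_image_sub_le_of_norm_hasDerivWithin_le
        (f' := fun _ => (0 : ℝ)) (fun x hx => (hE' x hx).hasDerivWithinAt)
        (fun x _ => by simp) (convex_Icc _ _) hξ hmem1
    simp only [zero_mul] at this
    have := norm_nonneg (E 1 - E ξ)
    have h0 : ‖E 1 - E ξ‖ = 0 := le_antisymm (by linarith) (norm_nonneg _)
    have := norm_eq_zero.mp h0
    linarith [sub_eq_zero.mp this]
  -- Part 1
  have part1 : ∀ ξ ∈ Set.Icc (-1 : ℝ) 1, U ξ ^ 2 ≤ U 1 ^ 2 := by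
    intro ξ hξ
    have hEeq := hconst ξ hξ
    simp only [hEdef] at hEeq
    rw [hc ξ hξ, hc 1 hmem1] at hEeq
    have := hcos ξ hξ
    nlinarith
  refine ⟨part1, ?_, ?_⟩
  -- Part 2: λ ≤ 2 B U(1)
  · have hbound : ∀ ξ ∈ Set.Icc (-1 : ℝ) 1, ‖B * U ξ‖ ≤ B * U 1 := by
      intro ξ hξ
      have h1 := part1 ξ hξ
      have habs : |U ξ| ≤ U 1 := by
        nlinarith [abs_nonneg (U ξ), sq_abs (U ξ)]
      rw [norm_mul, Real.norm_eq_abs, Real.norm_eq_abs, abs_of_pos hB]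
      exact mul_le_mul_of_nonneg_left habs (le_of_lt hB)
    have hlip : ‖s 1 - s (-1)‖ ≤ (B * U 1) * ‖(1 : ℝ) - (-1)‖ := by
      apply Convex.norm_image_sub_le_of_norm_hasDerivWithin_le
        (f' := fun ξ => B * U ξ) (fun x hx => (h x hx).2.1.hasDerivWithinAt)
        hbound (convex_Icc _ _) hmemm1 hmem1
    have hnorm2 : ‖(1 : ℝ) - (-1)‖ = 2 := by norm_num
    rw [hnorm2] at hlip
    have hlamle : lam ≤ 2 * B * U 1 := by
      have : lam ≤ ‖s 1 - s (-1)‖ := by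
        rw [hlam]; exact le_abs_self _
      linarith
    nlinarith
  -- Part 3
  · intro hge
    have hlam2 : lam ^ 2 ≤ 4 * B ^ 2 * U 1 ^ 2 := by
      have hbound : ∀ ξ ∈ Set.Icc (-1 : ℝ) 1, ‖B * U ξ‖ ≤ B * U 1 := by
        intro ξ hξ
        have h1 := part1 ξ hξ
        have habs : |U ξ| ≤ U 1 := by
          nlinarith [abs_nonneg (U ξ), sq_abs (U ξ)]
        rw [norm_mul, Real.norm_eq_abs, Real.norm_eq_abs, abs_of_pos hB]
        exact mul_le_mul_of_nonneg_left habs (le_of_lt hB)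
      have hlip : ‖s 1 - s (-1)‖ ≤ (B * U 1) * ‖(1 : ℝ) - (-1)‖ := by
        apply Convex.norm_image_sub_le_of_norm_hasDerivWithin_le
          (f' := fun ξ => B * U ξ) (fun x hx => (h x hx).2.1.hasDerivWithinAt)
          hbound (convex_Icc _ _) hmemm1 hmem1
      have hnorm2 : ‖(1 : ℝ) - (-1)‖ = 2 := by norm_num
      rw [hnorm2] at hlip
      have hlamle : lam ≤ 2 * B * U 1 := by
        have : lam ≤ ‖s 1 - s (-1)‖ := by
          rw [hlam]; exact le_abs_self _
        linarith
      nlinarith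
    have hkey : 2 / B * (1 - Real.sin γ₂) ≤ U 1 ^ 2 := by
      have h1 : lam ^ 2 / (4 * B) ≤ B * U 1 ^ 2 := by
        rw [div_le_iff₀ (by positivity)]
        nlinarith
      have h2 : 2 * (1 - Real.sin γ₂) ≤ B * U 1 ^ 2 := le_trans hge h1
      rw [div_mul_eq_mul_div, div_le_iff₀ hB]
      linarith
    calc Real.sqrt (2 / B * (1 - Real.sin γ₂)) ≤ Real.sqrt (U 1 ^ 2) :=
          Real.sqrt_le_sqrt hkey
      _ = U 1 := Real.sqrt_sq (le_of_lt hU1)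
end

section
/- Let B > 0, 0 < γ₂ < π/2, and let (U, ψ) be a solution of the capillary ODE system with parameter B on an interval I. Suppose ξ₀, ξ₂ ∈ I with ψ(ξ₀) = 0, U(ξ₀) = U₀, ψ(ξ₂) = π/2 − γ₂, and U(ξ₂) = U₂. Then B·U₀² = B·U₂² − 2(1 − sin γ₂). In particular the normalized attracting force 𝓕 = B·U₀² between the plates satisfies 𝓕 = B·U₂² − 2(1 − sin γ₂). (Force formula (29a) of the paper, obtained from the first integral B·U² + 2 cos ψ = C.) -/
open Real Set

/-- Force formula (29a): from the first integral `B U² + 2 cos ψ = C`, if ψ(ξ₀) = 0 and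
ψ(ξ₂) = π/2 − γ₂, then `B U₀² = B U₂² − 2(1 − sin γ₂)`; i.e. the normalized attracting force
`𝓕 = B U₀²` satisfies `𝓕 = B U₂² − 2(1 − sin γ₂)`. -/
theorem capillary_force_formula_29a
    (B : ℝ) (hB : 0 < B) (γ₂ : ℝ) (hγ₂ : 0 < γ₂) (hγ₂' : γ₂ < π / 2)
    (I : Set ℝ) (hI : I.OrdConnected)
    (U ψ : ℝ → ℝ) (h : IsCapillarySol B I U ψ)
    (ξ₀ ξ₂ : ℝ) (hξ₀ : ξ₀ ∈ I) (hξ₂ : ξ₂ ∈ I)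
    (hψ₀ : ψ ξ₀ = 0) (hψ₂ : ψ ξ₂ = π / 2 - γ₂)
    (U₀ U₂ : ℝ) (hU₀ : U ξ₀ = U₀) (hU₂ : U ξ₂ = U₂) :
    B * U₀ ^ 2 = B * U₂ ^ 2 - 2 * (1 - Real.sin γ₂) := by
  set g : ℝ → ℝ := fun t => B * U t ^ 2 + 2 * Real.cos (ψ t) with hg
  -- cos ψ > 0 on I
  have hcos : ∀ ξ ∈ I, 0 < Real.cos (ψ ξ) := fun ξ hξ =>
    Real.cos_pos_of_mem_Ioo (by simpa using (h ξ hξ).1)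
  -- on I, cos (ψ t) = sqrt (1 - sin (ψ t) ^ 2)
  have hcong : ∀ t ∈ I, Real.sqrt (1 - Real.sin (ψ t) ^ 2) = Real.cos (ψ t) := by
    intro t ht
    rw [show (1 : ℝ) - Real.sin (ψ t) ^ 2 = Real.cos (ψ t) ^ 2 by
      have := Real.sin_sq_add_cos_sq (ψ t); linarith]
    exact Real.sqrt_sq (hcos t ht).le
  -- g has derivative 0 within I at each point of I
  have hderiv : ∀ ξ ∈ I, HasDerivWithinAt g 0 I ξ := by
    intro ξ hξ
    obtain ⟨hψmem, hsin, hU⟩ := h ξ hξ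
    have hc := hcos ξ hξ
    have hcne : Real.cos (ψ ξ) ≠ 0 := ne_of_gt hc
    -- derivative of fun t => 1 - sin (ψ t)^2
    have h1 : HasDerivWithinAt (fun t => 1 - Real.sin (ψ t) ^ 2)
        (-(2 * Real.sin (ψ ξ) * (B * U ξ))) I ξ := by
      have : HasDerivWithinAt (fun t => 1 - Real.sin (ψ t) ^ 2)
          (-(((2 : ℕ) : ℝ) * Real.sin (ψ ξ) ^ (2 - 1) * (B * U ξ))) I ξ :=
        ((hsin.hasDerivWithinAt (s := I)).pow 2).const_sub 1
      convert this using 1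
      ring
    have hpos : (0 : ℝ) < 1 - Real.sin (ψ ξ) ^ 2 := by
      have := Real.sin_sq_add_cos_sq (ψ ξ)
      nlinarith
    have h2 : HasDerivWithinAt (fun t => Real.sqrt (1 - Real.sin (ψ t) ^ 2))
        (1 / (2 * Real.sqrt (1 - Real.sin (ψ ξ) ^ 2)) * (-(2 * Real.sin (ψ ξ) * (B * U ξ)))) I ξ :=
      (Real.hasDerivAt_sqrt (ne_of_gt hpos)).comp_hasDerivWithinAt ξ h1
    -- replace sqrt(1-sin²) by cos ψ
    have h3 : HasDerivWithinAt (fun t => Real.cos (ψ t))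
        (1 / (2 * Real.sqrt (1 - Real.sin (ψ ξ) ^ 2)) * (-(2 * Real.sin (ψ ξ) * (B * U ξ)))) I ξ :=
      h2.congr (fun t ht => (hcong t ht).symm) (hcong ξ hξ).symm
    have h4 : HasDerivWithinAt g
        (B * (2 * U ξ * Real.tan (ψ ξ)) +
          2 * (1 / (2 * Real.sqrt (1 - Real.sin (ψ ξ) ^ 2)) * (-(2 * Real.sin (ψ ξ) * (B * U ξ)))))
        I ξ := by
      have hU2 : HasDerivWithinAt (fun t => B * U t ^ 2) (B * (2 * U ξ * Real.tan (ψ ξ))) I ξ := by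
        have : HasDerivWithinAt (fun t => B * U t ^ 2)
            (B * (((2 : ℕ) : ℝ) * U ξ ^ (2 - 1) * Real.tan (ψ ξ))) I ξ :=
          ((hU.hasDerivWithinAt (s := I)).pow 2).const_mul B
        convert this using 1
        ring
      exact hU2.add (h3.const_mul 2)
    convert h4 using 1
    rw [hcong ξ hξ, Real.tan_eq_sin_div_cos]
    field_simp
    ring
  -- I is convex
  have hconv : Convex ℝ I := hI.convex
  -- g is constant on I
  have hconst : g ξ₂ = g ξ₀ := by
    have := hconv.norm_image_sub_le_of_norm_hasDerivWithin_le
      (f' := fun _ => (0 : ℝ)) (C := 0) hderiv (fun x _ => by simp) hξ₀ hξ₂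
    simp only [zero_mul] at this
    have := norm_sub_eq_zero_iff.mp (le_antisymm this (norm_nonneg _))
    exact this
  -- unfold and conclude
  have h2' : Real.cos (ψ ξ₂) = Real.sin γ₂ := by
    rw [hψ₂, Real.cos_pi_div_two_sub]
  have h0' : Real.cos (ψ ξ₀) = 1 := by rw [hψ₀, Real.cos_zero]
  simp only [hg, hU₀, hU₂, h2', h0'] at hconst
  linarith
end

section
/- Fix γ₂ with 0 ≤ γ₂ < π/2. For every L > 0 there exists a unique C > 1 such that ∫_{−π/2}^{π/2 − γ₂} cos ψ/√(C − cos ψ) dψ = L; that is, the map C ↦ ∫_{−π/2}^{π/2 − γ₂} cos ψ/√(C − cos ψ) dψ is a strictly decreasing bijection from (1, ∞) onto (0, ∞). In particular, for every B > 0 the relation 2 = (1/√(2B))·∫_{−π/2}^{π/2 − γ₂} cos ψ/√(C − cos ψ) dψ determines C uniquely, so the barrier solution 𝒯 (datum γ₁ = 0 on Π₁, γ₂ on Π₂) is uniquely determined by B. (The uniqueness assertion following equation (A5) in the Addenda.) -/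
open Real intervalIntegral MeasureTheory

section auxbarrier

lemma barrier_cont {C : ℝ} (hC : 1 < C) :
    Continuous (fun ψ : ℝ => Real.cos ψ / Real.sqrt (C - Real.cos ψ)) := by
  apply Continuous.div Real.continuous_cos
  · exact (continuous_const.sub Real.continuous_cos).sqrt
  · intro ψ
    have h1 : 0 < C - Real.cos ψ := by
      have := Real.cos_le_one ψ; linarith
    positivity

lemma barrier_intble {C : ℝ} (hC : 1 < C) (a b : ℝ) :
    IntervalIntegrable (fun ψ : ℝ => Real.cos ψ / Real.sqrt (C - Real.cos ψ)) volume a b :=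
  (barrier_cont hC).intervalIntegrable a b

/-- continuity of `F` on `Ici c` for `c > 1`. -/
lemma barrier_contOn {c : ℝ} (hc : 1 < c) (a b : ℝ) :
    ContinuousOn (fun C : ℝ => ∫ ψ in a..b, Real.cos ψ / Real.sqrt (C - Real.cos ψ))
      (Set.Ici c) := by
  have hG : Continuous (fun C : ℝ => ∫ ψ in a..b,
      Real.cos ψ / Real.sqrt (max C c - Real.cos ψ)) := by
    apply intervalIntegral.continuous_parametric_intervalIntegral_of_continuous'
    apply Continuous.div
    · exact Real.continuous_cos.comp continuous_snd
    · exact ((continuous_fst.max continuous_const).sub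
        (Real.continuous_cos.comp continuous_snd)).sqrt
    · rintro ⟨C, ψ⟩
      have h1 : 0 < max C c - Real.cos ψ := by
        have := Real.cos_le_one ψ
        have : c ≤ max C c := le_max_right _ _
        have := Real.cos_le_one ψ
        have hm : c ≤ max C c := le_max_right _ _
        nlinarith [Real.cos_le_one ψ]
      simp only [Function.uncurry]
      positivity
  apply hG.continuousOn.congr
  intro C hC
  simp only [Set.mem_Ici] at hC
  simp [max_eq_left hC]

end auxbarrier

set_option maxHeartbeats 1000000 in
/-- The uniqueness assertion following (A5) in the Addenda: for fixed γ₂ ∈ [0, π/2), the map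
`C ↦ ∫_{−π/2}^{π/2 − γ₂} cos ψ/√(C − cos ψ) dψ` is a strictly decreasing bijection from
(1, ∞) onto (0, ∞); in particular for every B > 0 the relation
`2 = (1/√(2B)) ∫_{−π/2}^{π/2 − γ₂} cos ψ/√(C − cos ψ) dψ` determines C uniquely, so the
barrier 𝒯 is uniquely determined by B. -/
theorem barrierT_unique (γ₂ : ℝ) (hγ₂ : 0 ≤ γ₂) (hγ₂' : γ₂ < π / 2) :
    (∀ L : ℝ, 0 < L → ∃! C : ℝ, C ∈ Set.Ioi (1 : ℝ) ∧
        (∫ ψ in (-(π / 2))..(π / 2 - γ₂),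
          Real.cos ψ / Real.sqrt (C - Real.cos ψ)) = L) ∧
    StrictAntiOn
      (fun C => ∫ ψ in (-(π / 2))..(π / 2 - γ₂),
        Real.cos ψ / Real.sqrt (C - Real.cos ψ)) (Set.Ioi 1) ∧
    Set.BijOn
      (fun C => ∫ ψ in (-(π / 2))..(π / 2 - γ₂),
        Real.cos ψ / Real.sqrt (C - Real.cos ψ)) (Set.Ioi 1) (Set.Ioi 0) ∧
    ∀ B : ℝ, 0 < B → ∃! C : ℝ, C ∈ Set.Ioi (1 : ℝ) ∧
      2 = 1 / Real.sqrt (2 * B) *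
        ∫ ψ in (-(π / 2))..(π / 2 - γ₂), Real.cos ψ / Real.sqrt (C - Real.cos ψ) := by
  have hπ : (0:ℝ) < π / 2 := by positivity
  set a : ℝ := -(π / 2) with ha
  set b : ℝ := π / 2 - γ₂ with hb
  have hb0 : 0 < b := by simp only [hb]; linarith
  have hab : a < b := by simp only [ha, hb]; linarith
  have hbπ : b ≤ π / 2 := by simp only [hb]; linarith
  set F : ℝ → ℝ := fun C => ∫ ψ in a..b, Real.cos ψ / Real.sqrt (C - Real.cos ψ) with hF
  clear_value F
  have hFe : ∀ C : ℝ, F C = ∫ ψ in a..b, Real.cos ψ / Real.sqrt (C - Real.cos ψ) :=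
    fun C => by rw [hF]
  have hcos : ∀ ψ ∈ Set.Ioo a b, 0 < Real.cos ψ := fun ψ hψ =>
    Real.cos_pos_of_mem_Ioo ⟨hψ.1, lt_of_lt_of_le hψ.2 hbπ⟩
  -- strict antitone
  have hanti : StrictAntiOn F (Set.Ioi 1) := by
    intro C₁ hC₁ C₂ hC₂ h12
    simp only [Set.mem_Ioi] at hC₁ hC₂
    have key : 0 < F C₁ - F C₂ := by
      rw [hF]
      rw [← intervalIntegral.integral_sub (barrier_intble hC₁ a b) (barrier_intble hC₂ a b)]
      apply intervalIntegral.intervalIntegral_pos_of_pos_on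
      · exact ((barrier_cont hC₁).sub (barrier_cont hC₂)).intervalIntegrable a b
      · intro ψ hψ
        have hc := hcos ψ hψ
        have h1 : 0 < C₁ - Real.cos ψ := by have := Real.cos_le_one ψ; linarith
        have h2 : Real.sqrt (C₁ - Real.cos ψ) < Real.sqrt (C₂ - Real.cos ψ) := by
          apply Real.sqrt_lt_sqrt h1.le; linarith
        have h3 : 0 < Real.sqrt (C₁ - Real.cos ψ) := Real.sqrt_pos.mpr h1
        have := div_lt_div_of_pos_left hc h3 h2
        linarith
      · exact hab
    linarith
  -- positivity
  have hpos : ∀ C : ℝ, 1 < C → 0 < F C := by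
    intro C hC
    simp only [hF]
    apply intervalIntegral.intervalIntegral_pos_of_pos_on (barrier_intble hC a b) _ hab
    intro ψ hψ
    have hc := hcos ψ hψ
    have h1 : 0 < C - Real.cos ψ := by have := Real.cos_le_one ψ; linarith
    positivity
  -- upper bound
  have hupper : ∀ C : ℝ, 1 < C → F C ≤ (b - a) / Real.sqrt (C - 1) := by
    intro C hC
    have h1 : 0 < C - 1 := by linarith
    have h2 : (0:ℝ) < Real.sqrt (C - 1) := Real.sqrt_pos.mpr h1
    have : F C ≤ ∫ _ in a..b, 1 / Real.sqrt (C - 1) := by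
      simp only [hF]
      apply intervalIntegral.integral_mono_on hab.le (barrier_intble hC a b)
        (intervalIntegrable_const)
      intro ψ hψ
      have h3 : 0 < C - Real.cos ψ := by have := Real.cos_le_one ψ; linarith
      apply div_le_div₀ zero_le_one (Real.cos_le_one ψ) (Real.sqrt_pos.mpr h1)
      exact Real.sqrt_le_sqrt (by linarith [Real.cos_le_one ψ])
    calc F C ≤ ∫ _ in a..b, 1 / Real.sqrt (C - 1) := this
      _ = (b - a) * (1 / Real.sqrt (C - 1)) := by
          rw [intervalIntegral.integral_const, smul_eq_mul]
      _ = (b - a) / Real.sqrt (C - 1) := by ring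
  -- lower bound / blow-up: m = b/2
  set m : ℝ := b / 2 with hm
  have hm0 : 0 < m := by positivity
  have hmπ : m < π / 2 := by simp only [hm]; linarith
  have hcm : 0 < Real.cos m := Real.cos_pos_of_mem_Ioo ⟨by linarith, hmπ⟩
  have hma : a ≤ 0 := by simp only [ha]; linarith
  have hmb : m ≤ b := by simp only [hm]; linarith
  clear_value a b m
  have hlower : ∀ s : ℝ, 0 < s →
      Real.cos m * (Real.log (s + m) - Real.log s) ≤ F (1 + s ^ 2) := by
    intro s hs
    have hC : 1 < 1 + s ^ 2 := by nlinarith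
    -- pointwise bound on [0, m]
    have hptwise : ∀ ψ ∈ Set.Icc (0:ℝ) m,
        Real.cos m * (s + ψ)⁻¹ ≤ Real.cos ψ / Real.sqrt (1 + s ^ 2 - Real.cos ψ) := by
      intro ψ hψ
      have hψ0 := hψ.1
      have hψm := hψ.2
      have hcψ : Real.cos m ≤ Real.cos ψ :=
        Real.cos_le_cos_of_nonneg_of_le_pi hψ0 (by linarith [Real.pi_pos]) hψm
      have hd : 0 < 1 + s ^ 2 - Real.cos ψ := by
        have := Real.cos_le_one ψ; nlinarith
      have hsq : Real.sqrt (1 + s ^ 2 - Real.cos ψ) ≤ s + ψ := by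
        rw [show s + ψ = Real.sqrt ((s + ψ) ^ 2) by
          rw [Real.sqrt_sq (by linarith)]]
        apply Real.sqrt_le_sqrt
        have h1cos : 1 - Real.cos ψ ≤ ψ ^ 2 / 2 := by
          have := Real.one_sub_sq_div_two_le_cos (x := ψ); linarith
        nlinarith
      rw [← one_div, mul_one_div]
      exact div_le_div₀ ((hcm.trans_le hcψ).le) hcψ (Real.sqrt_pos.mpr hd) hsq
    have hstep1 : (∫ ψ in (0:ℝ)..m, Real.cos m * (s + ψ)⁻¹)
        ≤ ∫ ψ in (0:ℝ)..m, Real.cos ψ / Real.sqrt (1 + s ^ 2 - Real.cos ψ) := by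
      apply intervalIntegral.integral_mono_on hm0.le _ (barrier_intble hC 0 m) hptwise
      apply ContinuousOn.intervalIntegrable
      apply ContinuousOn.mul continuousOn_const
      apply ContinuousOn.inv₀ (by fun_prop)
      intro ψ hψ
      rw [Set.uIcc_of_le hm0.le] at hψ
      have := hψ.1
      positivity
    have hstep2 : (∫ ψ in (0:ℝ)..m, Real.cos ψ / Real.sqrt (1 + s ^ 2 - Real.cos ψ))
        ≤ F (1 + s ^ 2) := by
      simp only [hF]
      apply intervalIntegral.integral_mono_interval (c := a) (d := b) hma hm0.le hmb
      · rw [Filter.EventuallyLE, ae_restrict_iff' measurableSet_Ioc]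
        filter_upwards with ψ hψ
        have hψ1 : -(π/2) < ψ := lt_of_le_of_lt (by simp [ha]) hψ.1
        have hψ2 : ψ ≤ π/2 := hψ.2.trans hbπ
        have hcψ : 0 ≤ Real.cos ψ := Real.cos_nonneg_of_mem_Icc ⟨hψ1.le, hψ2⟩
        have h3 : 0 ≤ 1 + s ^ 2 - Real.cos ψ := by have := Real.cos_le_one ψ; nlinarith
        simp only [Pi.zero_apply]
        positivity
      · exact barrier_intble hC a b
    have hstep3 : (∫ ψ in (0:ℝ)..m, Real.cos m * (s + ψ)⁻¹)
        = Real.cos m * (Real.log (s + m) - Real.log s) := by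
      have : (∫ ψ in (0:ℝ)..m, Real.cos m * (s + ψ)⁻¹)
          = Real.cos m * Real.log (s + m) - Real.cos m * Real.log (s + 0) := by
        apply intervalIntegral.integral_eq_sub_of_hasDerivAt
          (f := fun ψ : ℝ => Real.cos m * Real.log (s + ψ))
        · intro ψ hψ
          rw [Set.uIcc_of_le hm0.le] at hψ
          have hsψ : 0 < s + ψ := by linarith [hψ.1]
          have h1 : HasDerivAt (fun x : ℝ => s + x) 1 ψ := by
            simpa using (hasDerivAt_id ψ).const_add s
          have h2 : HasDerivAt (fun x : ℝ => Real.log (s + x)) ((s + ψ)⁻¹ * 1) ψ :=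
            (Real.hasDerivAt_log hsψ.ne').comp ψ h1
          simpa using h2.const_mul (Real.cos m)
        · apply ContinuousOn.intervalIntegrable
          apply ContinuousOn.mul continuousOn_const
          apply ContinuousOn.inv₀ (by fun_prop)
          intro ψ hψ
          rw [Set.uIcc_of_le hm0.le] at hψ
          have := hψ.1
          positivity
      rw [this]; ring_nf
    linarith [hstep1.trans hstep2, hstep3.ge]
  -- existence and uniqueness for each L > 0
  have hmain : ∀ L : ℝ, 0 < L → ∃! C : ℝ, C ∈ Set.Ioi (1:ℝ) ∧ F C = L := by
    intro L hL
    -- big value: C₁ with F C₁ > L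
    obtain ⟨C₁, hC₁, hFC₁⟩ : ∃ C₁ : ℝ, 1 < C₁ ∧ L < F C₁ := by
      obtain ⟨K, hK0, hKval⟩ : ∃ K : ℝ, 0 < K ∧ Real.cos m * K = L + 1 :=
        ⟨(L + 1) / Real.cos m, by positivity, by field_simp⟩
      have hexp : 1 < Real.exp K := by
        rw [← Real.exp_zero]; exact Real.exp_lt_exp.mpr hK0
      obtain ⟨s, hs0, hlog⟩ : ∃ s : ℝ, 0 < s ∧ Real.log (s + m) - Real.log s = K := by
        refine ⟨m / (Real.exp K - 1), div_pos hm0 (by linarith), ?_⟩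
        have hE : Real.exp K - 1 ≠ 0 := by linarith
        have hs0' : (0:ℝ) < m / (Real.exp K - 1) := div_pos hm0 (by linarith)
        rw [← Real.log_div (by positivity) hs0'.ne']
        have hq : (m / (Real.exp K - 1) + m) / (m / (Real.exp K - 1)) = Real.exp K := by
          rw [div_eq_iff hs0'.ne']
          field_simp
          ring
        rw [hq, Real.log_exp]
      have hge := hlower s hs0
      rw [hlog, hKval] at hge
      refine ⟨1 + s ^ 2, by nlinarith, by linarith⟩
    -- small value: C₂ with F C₂ < L
    obtain ⟨C₂, hC₂, hFC₂⟩ : ∃ C₂ : ℝ, 1 < C₂ ∧ F C₂ < L := by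
      have h1 : (0:ℝ) < 2 * (b - a) / L := by
        apply div_pos (by linarith) hL
      refine ⟨1 + (2 * (b - a) / L) ^ 2, by nlinarith, ?_⟩
      have h2 : F (1 + (2 * (b - a) / L) ^ 2) ≤ (b - a) / (2 * (b - a) / L) := by
        have := hupper (1 + (2 * (b - a) / L) ^ 2) (by nlinarith)
        rwa [show (1:ℝ) + (2 * (b - a) / L) ^ 2 - 1 = (2 * (b - a) / L) ^ 2 by ring,
          Real.sqrt_sq h1.le] at this
      have h3 : (b - a) / (2 * (b - a) / L) = L / 2 := by
        rw [div_div_eq_mul_div]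
        rw [div_eq_div_iff (by linarith) (by norm_num)]
        ring
      rw [h3] at h2
      linarith
    -- order C₁ < C₂
    have hC₁₂ : C₁ < C₂ := by
      by_contra h
      push_neg at h
      have := hanti.antitoneOn (Set.mem_Ioi.mpr hC₂) (Set.mem_Ioi.mpr hC₁) h
      linarith
    -- IVT
    have hcont : ContinuousOn F (Set.Icc C₁ C₂) := by
      rw [hF]
      exact (barrier_contOn hC₁ a b).mono (Set.Icc_subset_Ici_self)
    have hIVT := intermediate_value_Icc' hC₁₂.le hcont
    have hLmem : L ∈ Set.Icc (F C₂) (F C₁) := ⟨hFC₂.le, hFC₁.le⟩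
    obtain ⟨C, hCmem, hFC⟩ := hIVT hLmem
    refine ⟨C, ⟨Set.mem_Ioi.mpr (lt_of_lt_of_le hC₁ hCmem.1), hFC⟩, ?_⟩
    intro y hy
    exact hanti.injOn hy.1 (Set.mem_Ioi.mpr (lt_of_lt_of_le hC₁ hCmem.1))
      (hy.2.trans hFC.symm)
  have hmain' : ∀ L : ℝ, 0 < L → ∃! C : ℝ, C ∈ Set.Ioi (1:ℝ) ∧
      (∫ ψ in a..b, Real.cos ψ / Real.sqrt (C - Real.cos ψ)) = L := by
    intro L hL
    obtain ⟨C, ⟨h1, h2⟩, hu⟩ := hmain L hL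
    exact ⟨C, ⟨h1, by rw [← hFe]; exact h2⟩, fun y hy => hu y ⟨hy.1, by rw [hFe]; exact hy.2⟩⟩
  refine ⟨hmain', ?_, ⟨?_, ?_, ?_⟩, ?_⟩
  · exact hanti
  · intro C hC
    exact Set.mem_Ioi.mpr (hpos C (Set.mem_Ioi.mp hC))
  · exact hanti.injOn
  · intro L hL
    obtain ⟨C, ⟨hC1, hC2⟩, _⟩ := hmain L (Set.mem_Ioi.mp hL)
    exact ⟨C, hC1, hC2⟩
  · intro B hB
    have hsB : 0 < Real.sqrt (2 * B) := Real.sqrt_pos.mpr (by linarith)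
    obtain ⟨C, ⟨hC1, hC2⟩, huniq⟩ := hmain (2 * Real.sqrt (2 * B)) (by positivity)
    refine ⟨C, ⟨hC1, ?_⟩, ?_⟩
    · rw [← hFe, hC2, one_div, inv_mul_eq_div, mul_div_assoc, div_self hsB.ne', mul_one]
    · rintro y ⟨hy1, hy2⟩
      apply huniq
      refine ⟨hy1, ?_⟩
      rw [← hFe, one_div, inv_mul_eq_div, eq_div_iff hsB.ne'] at hy2
      linarith
end
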